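/- arXiv:2407.18315 — 5 statements merged into one kernel-verified Lean document; each statement's English description precedes it below -/
import Mathlib

section
/- Let 1 ≤ p < ∞ and let (X,d,μ) satisfy the standing assumptions and be of globally p-controlled geometry. Then there exists a locally Lipschitz function f : X → ℝ such that f has an upper gradient g with ∫_X g^p dμ < ∞ (so f ∈ D^{1,p}(X)), while ∫_X |f − c|^p dμ = ∞ for every constant c ∈ ℝ; in particular D^{1,p}(X) ≠ N^{1,p}(X) + ℝ. -/
open MeasureTheory Metric Set Filter
open scoped ENNReal NNReal Topology

/-- `g` is an upper gradient of `u`: for every `L ≥ 0` and every `1`-Lipschitz curve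
`γ : [0,L] → X`, one has `|u(γ L) - u(γ 0)| ≤ ∫₀^L g(γ t) dt`. -/
def IsUpperGradient {X : Type*} [MetricSpace X] (g : X → ℝ≥0∞) (u : X → ℝ) : Prop :=
  ∀ (L : ℝ) (γ : ℝ → X), 0 ≤ L → LipschitzOnWith 1 γ (Set.Icc 0 L) →
    ENNReal.ofReal |u (γ L) - u (γ 0)| ≤ ∫⁻ t in Set.Icc 0 L, g (γ t)

/-- `(X,d,μ)` is of globally `p`-controlled geometry: the measure is globally doubling and a
global `p`-Poincaré inequality holds for function–upper-gradient pairs. -/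
def GloballyControlledGeometry {X : Type*} [MetricSpace X] [MeasurableSpace X]
    (p : ℝ) (μ : Measure X) : Prop :=
  ∃ Cd C lam : ℝ, 1 ≤ Cd ∧ 0 < C ∧ 0 < lam ∧
    (∀ (x : X) (r : ℝ), 0 < r →
      μ (ball x (2 * r)) ≤ ENNReal.ofReal Cd * μ (ball x r)) ∧
    (∀ (u : X → ℝ) (g : X → ℝ≥0∞), LocallyIntegrable u μ → Measurable g →
      IsUpperGradient g u → ∀ (x : X) (r : ℝ), 0 < r →
      ENNReal.ofReal (⨍ y in ball x r, |u y - ⨍ z in ball x r, u z ∂μ| ∂μ) ≤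
        ENNReal.ofReal (C * r) *
          ((∫⁻ y in ball x (lam * r), g y ^ p ∂μ) / μ (ball x (lam * r))) ^ (1 / p))

lemma lip1_image_volume_le {φ : ℝ → ℝ} (hφ : LipschitzWith 1 φ) (A : Set ℝ) :
    volume (φ '' A) ≤ volume A := by
  have h1 : (μH[1] : Measure ℝ) = volume := MeasureTheory.hausdorffMeasure_real
  calc volume (φ '' A) = μH[1] (φ '' A) := by rw [h1]
    _ ≤ (1 : ℝ≥0) ^ (1:ℝ) * μH[1] A := hφ.hausdorffMeasure_image_le (by norm_num) A
    _ = volume A := by rw [h1]; simp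

lemma restrict_le_map_of_lip {φ : ℝ → ℝ} (hφ : LipschitzWith 1 φ) {L : ℝ} (hL : 0 ≤ L) :
    volume.restrict (Icc (min (φ 0) (φ L)) (max (φ 0) (φ L))) ≤
      (volume.restrict (Icc 0 L)).map φ := by
  rw [Measure.le_iff]
  intro E hE
  rw [Measure.map_apply hφ.continuous.measurable hE, Measure.restrict_apply hE,
    Measure.restrict_apply (hφ.continuous.measurable hE)]
  have hsub : E ∩ Icc (min (φ 0) (φ L)) (max (φ 0) (φ L)) ⊆ φ '' (φ ⁻¹' E ∩ Icc 0 L) := by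
    rintro y ⟨hyE, hy⟩
    have hy' : y ∈ uIcc (φ 0) (φ L) := by simpa [uIcc] using hy
    obtain ⟨t, ht, hφt⟩ := intermediate_value_uIcc hφ.continuous.continuousOn hy'
    rw [uIcc_of_le hL] at ht
    exact ⟨t, ⟨by rw [mem_preimage, hφt]; exact hyE, ht⟩, hφt⟩
  calc volume (E ∩ Icc (min (φ 0) (φ L)) (max (φ 0) (φ L)))
      ≤ volume (φ '' (φ ⁻¹' E ∩ Icc 0 L)) := measure_mono hsub
    _ ≤ volume (φ ⁻¹' E ∩ Icc 0 L) := lip1_image_volume_le hφ _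

lemma radial_isUpperGradient {X : Type*} [MetricSpace X] (x₀ : X)
    {S : ℝ → ℝ≥0∞} (hS : Measurable S) {h : ℝ → ℝ} (hmono : Monotone h)
    (hcomp : ∀ a b : ℝ, 0 ≤ a → a ≤ b → ENNReal.ofReal (h b - h a) ≤ ∫⁻ r in Icc a b, S r) :
    IsUpperGradient (fun x => S (dist x₀ x)) (fun x => h (dist x₀ x)) := by
  intro L γ hL hγ
  set γ' : ℝ → X := fun t => (Icc 0 L).restrict γ (projIcc 0 L hL t) with hγ'def
  have hγ'lip : LipschitzWith 1 γ' := by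
    have h1 := lipschitzOnWith_iff_restrict.mp hγ
    have h2 := h1.comp (LipschitzWith.projIcc hL); rw [mul_one] at h2; exact h2
  have hγ'eq : ∀ t ∈ Icc 0 L, γ' t = γ t := by
    intro t ht
    simp only [hγ'def, projIcc_of_mem hL ht, restrict_apply]; rfl
  set φ : ℝ → ℝ := fun t => dist x₀ (γ' t) with hφdef
  have hφ : LipschitzWith 1 φ := by
    have h2 := (LipschitzWith.dist_right x₀).comp hγ'lip; rw [mul_one] at h2; exact h2
  have h0 : φ 0 = dist x₀ (γ 0) := by rw [hφdef]; simp only; rw [hγ'eq 0 ⟨le_refl 0, hL⟩]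
  have hLL : φ L = dist x₀ (γ L) := by rw [hφdef]; simp only; rw [hγ'eq L ⟨hL, le_refl L⟩]
  have ha : 0 ≤ min (φ 0) (φ L) :=
    le_min (by rw [h0]; exact dist_nonneg) (by rw [hLL]; exact dist_nonneg)
  have key : (∫⁻ r in Icc (min (φ 0) (φ L)) (max (φ 0) (φ L)), S r) ≤
      ∫⁻ t in Icc 0 L, S (φ t) := by
    calc (∫⁻ r in Icc (min (φ 0) (φ L)) (max (φ 0) (φ L)), S r)
        ≤ ∫⁻ r, S r ∂((volume.restrict (Icc 0 L)).map φ) :=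
          lintegral_mono' (restrict_le_map_of_lip hφ hL) le_rfl
      _ = ∫⁻ t in Icc 0 L, S (φ t) := lintegral_map hS hφ.continuous.measurable
  have habs : ENNReal.ofReal |h (dist x₀ (γ L)) - h (dist x₀ (γ 0))| ≤
      ∫⁻ r in Icc (min (φ 0) (φ L)) (max (φ 0) (φ L)), S r := by
    rw [← h0, ← hLL]
    rcases le_total (φ 0) (φ L) with hab | hab
    · rw [abs_of_nonneg (by linarith [hmono hab]), min_eq_left hab, max_eq_right hab]
      exact hcomp _ _ (le_trans ha (by rw [min_eq_left hab])) hab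
    · rw [abs_of_nonpos (by linarith [hmono hab]), neg_sub, min_eq_right hab, max_eq_left hab]
      exact hcomp _ _ (le_trans ha (by rw [min_eq_right hab])) hab
  have hfinal : (∫⁻ t in Icc 0 L, S (φ t)) = ∫⁻ t in Icc 0 L, S (dist x₀ (γ t)) := by
    refine setLIntegral_congr_fun measurableSet_Icc ?_
    intro t ht
    rw [hφdef]; simp only; rw [hγ'eq t ht]
  calc ENNReal.ofReal |h (dist x₀ (γ L)) - h (dist x₀ (γ 0))|
      ≤ ∫⁻ r in Icc (min (φ 0) (φ L)) (max (φ 0) (φ L)), S r := habs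
    _ ≤ ∫⁻ t in Icc 0 L, S (φ t) := key
    _ = ∫⁻ t in Icc 0 L, S (dist x₀ (γ t)) := hfinal

/-- if `(X,d,μ)` satisfies the standing assumptions and is of globally
`p`-controlled geometry, then there is a locally Lipschitz `f ∈ D^{1,p}(X)` with
`∫ |f - c|ᵖ dμ = ∞` for every `c ∈ ℝ`; in particular `D^{1,p}(X) ≠ N^{1,p}(X) + ℝ`. -/
theorem statement0 {X : Type*} [MetricSpace X] [MeasurableSpace X] [BorelSpace X]
    [ProperSpace X] [ConnectedSpace X]
    (μ : Measure X) (hXinf : μ Set.univ = ⊤)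
    (hball : ∀ (x : X) (r : ℝ), 0 < r → 0 < μ (ball x r) ∧ μ (ball x r) < ⊤)
    (p : ℝ) (hp : 1 ≤ p)
    (hgeom : GloballyControlledGeometry p μ) :
    ∃ f : X → ℝ, LocallyLipschitz f ∧
      (∃ g : X → ℝ≥0∞, Measurable g ∧ IsUpperGradient g f ∧ (∫⁻ x, g x ^ p ∂μ) < ⊤) ∧
      ∀ c : ℝ, (∫⁻ x, ENNReal.ofReal |f x - c| ^ p ∂μ) = ⊤ := by
  obtain ⟨Cd, C0, lam, hCd1, -, -, hD, -⟩ := hgeom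
  have hppos : 0 < p := lt_of_lt_of_le one_pos hp
  obtain ⟨x₀⟩ := (inferInstance : Nonempty X)
  set R : ℕ → ℝ := fun j => 2 ^ j with hRdef
  have hRpos : ∀ j, (0:ℝ) < R j := fun j => by positivity
  have hR1 : ∀ j, (1:ℝ) ≤ R j := fun j => one_le_pow₀ (by norm_num)
  have hRmono : Monotone R := fun i j hij => pow_le_pow_right₀ (by norm_num) hij
  have hRsucc : ∀ j, R (j + 1) = 2 * R j := fun j => by
    simp only [hRdef]; ring
  set m : ℕ → ℝ≥0∞ := fun j => μ (ball x₀ (R (j+1))) with hmdef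
  have hmpos : ∀ j, 0 < m j := fun j => (hball x₀ _ (hRpos _)).1
  have hmfin : ∀ j, m j < ⊤ := fun j => (hball x₀ _ (hRpos _)).2
  set M : ℕ → ℝ := fun j => (m j).toReal with hMdef
  have hMpos : ∀ j, 0 < M j := fun j => ENNReal.toReal_pos (hmpos j).ne' (hmfin j).ne
  have hMmono : Monotone M := fun i j hij => ENNReal.toReal_mono (hmfin j).ne
    (measure_mono (ball_subset_ball (hRmono (by omega))))
  set q : ℕ → ℝ := fun j => ((j:ℝ)+1) * M j with hqdef
  have hqpos : ∀ j, 0 < q j := fun j => by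
    have := hMpos j; positivity
  have hqmono : Monotone q := fun i j hij => by
    apply mul_le_mul (by exact_mod_cast Nat.add_le_add_right hij 1)
      (hMmono hij) (hMpos i).le (by positivity)
  set T : ℕ → ℝ := fun j => q j ^ (-(1/p)) with hTdef
  have hTpos : ∀ j, 0 < T j := fun j => Real.rpow_pos_of_pos (hqpos j) _
  have hTanti : Antitone T := fun i j hij =>
    Real.rpow_le_rpow_of_nonpos (hqpos i) (hqmono hij) (by
      have h1 : 0 < 1/p := by positivity
      linarith)
  have hTp : ∀ j, T j ^ p = (q j)⁻¹ := by
    intro j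
    rw [hTdef]
    simp only
    rw [← Real.rpow_mul (hqpos j).le]
    rw [show -(1/p) * p = -1 by field_simp]
    exact Real.rpow_neg_one _
  -- the step function S
  set c : ℕ → ℝ≥0∞ := fun k => ENNReal.ofReal ((T k - T (k+1)) / R k) with hcdef
  set S : ℝ → ℝ≥0∞ := fun u => ∑' k : ℕ, (Ico (R k) (R (k+1))).indicator (fun _ => c k) u
    with hSdef
  have hSmeas : Measurable S :=
    Measurable.ennreal_tsum fun k => measurable_const.indicator measurableSet_Ico
  have hdisj : ∀ {u : ℝ} {k l : ℕ}, u ∈ Ico (R k) (R (k+1)) → u ∈ Ico (R l) (R (l+1)) → k = l := by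
    intro u k l hk hl
    by_contra hne
    rcases Nat.lt_or_ge k l with hkl | hkl
    · exact absurd (lt_of_lt_of_le hk.2 (le_trans (hRmono hkl) hl.1)) (lt_irrefl u)
    · have hlk : l < k := lt_of_le_of_ne hkl (Ne.symm hne)
      exact absurd (lt_of_lt_of_le hl.2 (le_trans (hRmono hlk) hk.1)) (lt_irrefl u)
  have hSval : ∀ {u : ℝ} {k : ℕ}, u ∈ Ico (R k) (R (k+1)) → S u = c k := by
    intro u k hu
    rw [hSdef]; simp only
    rw [tsum_eq_single k]
    · exact indicator_of_mem hu _
    · intro l hl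
      exact indicator_of_notMem (fun hul => hl (hdisj hul hu)) _
  have hSzero : ∀ {u : ℝ}, u < 1 → S u = 0 := by
    intro u hu
    rw [hSdef]; simp only
    rw [ENNReal.tsum_eq_zero]
    intro k
    exact indicator_of_notMem (fun hul => absurd (lt_of_le_of_lt (le_trans (hR1 k) hul.1) hu)
      (lt_irrefl 1)) _
  have hblock : ∀ u : ℝ, 1 ≤ u → ∃ k, u ∈ Ico (R k) (R (k+1)) := by
    intro u hu
    obtain ⟨N, hN⟩ := pow_unbounded_of_one_lt u (one_lt_two (α := ℝ))
    classical
    set P : ℕ → Prop := fun k => R k ≤ u with hPdef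
    have hP0 : P 0 := by simpa [hPdef, hRdef] using hu
    have hkspec : P (Nat.findGreatest P N) := Nat.findGreatest_spec (Nat.zero_le N) hP0
    have hkN : Nat.findGreatest P N ≤ N := Nat.findGreatest_le N
    have hltN : Nat.findGreatest P N < N := by
      rcases lt_or_eq_of_le hkN with h | h
      · exact h
      · exfalso
        rw [h] at hkspec
        rw [hPdef] at hkspec
        simp only [hRdef] at hkspec
        linarith
    refine ⟨Nat.findGreatest P N, hkspec, ?_⟩
    by_contra hcon
    push_neg at hcon
    exact Nat.findGreatest_is_greatest (Nat.lt_succ_self _) hltN hcon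
  have hcbound : ∀ k, c k ≤ ENNReal.ofReal (T 0) := by
    intro k
    apply ENNReal.ofReal_le_ofReal
    calc (T k - T (k+1)) / R k ≤ T k / R k := by
          gcongr
          linarith [hTpos (k+1)]
      _ ≤ T k / 1 := by
          gcongr
          exact hR1 k
      _ = T k := div_one _
      _ ≤ T 0 := hTanti (Nat.zero_le k)
  have hSle : ∀ u, S u ≤ ENNReal.ofReal (T 0) := by
    intro u
    rcases lt_or_ge u 1 with hu | hu
    · rw [hSzero hu]; exact zero_le
    · obtain ⟨k, hk⟩ := hblock u hu
      rw [hSval hk]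
      exact hcbound k
  -- the profile function h
  set h : ℝ → ℝ := fun r => (∫⁻ u in Icc 0 r, S u).toReal with hhdef
  have hIbound : ∀ r : ℝ, (∫⁻ u in Icc 0 r, S u) ≤ ENNReal.ofReal (T 0) * volume (Icc 0 r) := by
    intro r
    calc (∫⁻ u in Icc 0 r, S u) ≤ ∫⁻ _ in Icc 0 r, ENNReal.ofReal (T 0) :=
          lintegral_mono fun u => hSle u
      _ = ENNReal.ofReal (T 0) * volume (Icc 0 r) := by
          rw [setLIntegral_const]
  have hIfin : ∀ r : ℝ, (∫⁻ u in Icc 0 r, S u) ≠ ⊤ := by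
    intro r
    apply ne_top_of_le_ne_top _ (hIbound r)
    rw [Real.volume_Icc]
    exact (ENNReal.mul_lt_top ENNReal.ofReal_lt_top ENNReal.ofReal_lt_top).ne
  have hIadd : ∀ a b : ℝ, 0 ≤ a → a ≤ b →
      (∫⁻ u in Icc 0 b, S u) = (∫⁻ u in Icc 0 a, S u) + ∫⁻ u in Ioc a b, S u := by
    intro a b ha hab
    rw [← lintegral_union measurableSet_Ioc
      (disjoint_left.mpr fun x hx hx' => absurd hx.2 (not_le.mpr hx'.1)),
      Icc_union_Ioc_eq_Icc ha hab]
  have hmono_h : Monotone h := fun a b hab =>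
    ENNReal.toReal_mono (hIfin b) (lintegral_mono_set (Icc_subset_Icc le_rfl hab))
  have hdiffh : ∀ a b : ℝ, 0 ≤ a → a ≤ b →
      ENNReal.ofReal (h b - h a) = ∫⁻ u in Ioc a b, S u := by
    intro a b ha hab
    have hfab : (∫⁻ u in Ioc a b, S u) ≠ ⊤ := by
      apply ne_top_of_le_ne_top (hIfin b)
      exact lintegral_mono_set (fun x hx => ⟨le_trans ha hx.1.le, hx.2⟩)
    rw [hhdef]; simp only
    rw [hIadd a b ha hab, ENNReal.toReal_add (hIfin a) hfab, add_sub_cancel_left,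
      ENNReal.ofReal_toReal hfab]
  have hcomp : ∀ a b : ℝ, 0 ≤ a → a ≤ b →
      ENNReal.ofReal (h b - h a) ≤ ∫⁻ r in Icc a b, S r := by
    intro a b ha hab
    rw [hdiffh a b ha hab]
    exact lintegral_mono_set Ioc_subset_Icc_self
  -- value of h at powers of two
  have hhR : ∀ j : ℕ, h (R j) = T 0 - T j := by
    intro j
    have hcalc : (∫⁻ u in Icc 0 (R j), S u) = ENNReal.ofReal (T 0 - T j) := by
      rw [hSdef]; simp only
      rw [lintegral_tsum fun k =>
        (measurable_const.indicator measurableSet_Ico).aemeasurable]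
      have hterm : ∀ k : ℕ, (∫⁻ u in Icc 0 (R j), (Ico (R k) (R (k+1))).indicator
          (fun _ => c k) u) = c k * volume (Ico (R k) (R (k+1)) ∩ Icc 0 (R j)) := by
        intro k
        rw [lintegral_indicator_const measurableSet_Ico,
          Measure.restrict_apply measurableSet_Ico]
      have hvanish : ∀ k : ℕ, k ∉ Finset.range j → (∫⁻ u in Icc 0 (R j),
          (Ico (R k) (R (k+1))).indicator (fun _ => c k) u) = 0 := by
        intro k hk
        rw [hterm k]
        have hsub : Ico (R k) (R (k+1)) ∩ Icc 0 (R j) ⊆ {R j} := by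
          rintro x ⟨hx1, hx2⟩
          have hjk : j ≤ k := by simpa using hk
          have := hRmono hjk
          simp only [mem_singleton_iff]
          linarith [hx1.1, hx2.2]
        have : volume (Ico (R k) (R (k+1)) ∩ Icc 0 (R j)) ≤ volume {R j} := measure_mono hsub
        rw [Real.volume_singleton] at this
        rw [le_zero_iff.mp this, mul_zero]
      rw [tsum_eq_sum hvanish]
      have hterm2 : ∀ k ∈ Finset.range j, (∫⁻ u in Icc 0 (R j),
          (Ico (R k) (R (k+1))).indicator (fun _ => c k) u)
          = ENNReal.ofReal (T k - T (k+1)) := by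
        intro k hk
        rw [hterm k]
        have hkj : k < j := Finset.mem_range.mp hk
        have hsub : Ico (R k) (R (k+1)) ⊆ Icc 0 (R j) := by
          rintro x ⟨hx1, hx2⟩
          exact ⟨le_trans (hRpos k).le hx1, le_trans hx2.le (hRmono hkj)⟩
        rw [inter_eq_self_of_subset_left hsub, Real.volume_Ico]
        have hlen : R (k+1) - R k = R k := by rw [hRsucc k]; ring
        rw [hlen, hcdef]; simp only
        rw [← ENNReal.ofReal_mul (div_nonneg (by linarith [hTanti (Nat.le_succ k)]) (hRpos k).le)]
        rw [div_mul_cancel₀ _ (hRpos k).ne']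
      rw [Finset.sum_congr rfl hterm2]
      rw [← ENNReal.ofReal_sum_of_nonneg (fun k _ => by linarith [hTanti (Nat.le_succ k)])]
      rw [Finset.sum_range_sub' T j]
    rw [hhdef]; simp only
    rw [hcalc, ENNReal.toReal_ofReal (by linarith [hTanti (Nat.zero_le j)])]
  have hhle : ∀ r : ℝ, h r ≤ T 0 := by
    intro r
    obtain ⟨N, hN⟩ := pow_unbounded_of_one_lt r (one_lt_two (α := ℝ))
    have h1 : h r ≤ h (R N) := hmono_h (by rw [hRdef]; exact hN.le)
    rw [hhR N] at h1
    linarith [hTpos N]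
  -- h is Lipschitz
  have hzero : h 0 = 0 := by
    rw [hhdef]; simp only
    rw [Measure.restrict_eq_zero.mpr (by rw [Real.volume_Icc]; simp), lintegral_zero_measure,
      ENNReal.toReal_zero]
  have hneg : ∀ a : ℝ, a < 0 → h a = 0 := by
    intro a ha
    rw [hhdef]; simp only
    rw [Icc_eq_empty (not_le.mpr ha), Measure.restrict_empty, lintegral_zero_measure,
      ENNReal.toReal_zero]
  have hbd : ∀ a b : ℝ, a ≤ b → h b - h a ≤ T 0 * (b - a) := by
    have key : ∀ a b : ℝ, 0 ≤ a → a ≤ b → h b - h a ≤ T 0 * (b - a) := by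
      intro a b ha hab
      have h1 := hdiffh a b ha hab
      have h2 : (∫⁻ u in Ioc a b, S u) ≤ ENNReal.ofReal (T 0) * ENNReal.ofReal (b - a) := by
        calc (∫⁻ u in Ioc a b, S u) ≤ ∫⁻ _ in Ioc a b, ENNReal.ofReal (T 0) :=
              lintegral_mono fun u => hSle u
          _ = ENNReal.ofReal (T 0) * volume (Ioc a b) := setLIntegral_const _ _
          _ = ENNReal.ofReal (T 0) * ENNReal.ofReal (b - a) := by rw [Real.volume_Ioc]
      rw [← h1, ← ENNReal.ofReal_mul (hTpos 0).le] at h2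
      have h3 := (ENNReal.ofReal_le_ofReal_iff (by nlinarith [hTpos 0])).mp h2
      linarith
    intro a b hab
    rcases le_or_gt 0 a with ha | ha
    · exact key a b ha hab
    · rcases le_or_gt 0 b with hb | hb
      · have h1 := key 0 b le_rfl hb
        rw [hzero] at h1
        rw [hneg a ha]
        nlinarith [hTpos 0]
      · rw [hneg a ha, hneg b hb]
        nlinarith [hTpos 0]
  have hlip : LipschitzWith (Real.toNNReal (T 0)) h := by
    apply LipschitzWith.of_dist_le_mul
    intro a b
    rw [Real.dist_eq, Real.dist_eq, Real.coe_toNNReal _ (hTpos 0).le]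
    rcases le_total a b with hab | hab
    · rw [abs_of_nonpos (by linarith [hmono_h hab]), abs_of_nonpos (by linarith)]
      have := hbd a b hab
      linarith
    · rw [abs_of_nonneg (by linarith [hmono_h hab]), abs_of_nonneg (by linarith)]
      have := hbd b a hab
      linarith
  have hfliploc : LocallyLipschitz (fun x : X => h (dist x₀ x)) := by
    have : LipschitzWith (Real.toNNReal (T 0) * 1) ((fun r => h r) ∘ (fun x : X => dist x₀ x)) :=
      hlip.comp (LipschitzWith.dist_right x₀)
    exact this.locallyLipschitz
  -- energy estimate
  have hdistmeas : Measurable (fun x : X => dist x₀ x) :=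
    (continuous_const.dist continuous_id).measurable
  set Ann : ℕ → Set X := fun k => (fun x : X => dist x₀ x) ⁻¹' (Ico (R k) (R (k+1)))
    with hAnndef
  have hAnnmeas : ∀ k, MeasurableSet (Ann k) := fun k => hdistmeas measurableSet_Ico
  have hcp : ∀ k : ℕ, c k ^ p * m k ≤ ENNReal.ofReal ((1/2 : ℝ) ^ k) := by
    intro k
    have h1 : c k ≤ ENNReal.ofReal (T k / R k) := by
      apply ENNReal.ofReal_le_ofReal
      gcongr
      linarith [hTpos (k+1)]
    have h2 : c k ^ p ≤ ENNReal.ofReal ((T k / R k) ^ p) := by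
      rw [← ENNReal.ofReal_rpow_of_nonneg (div_nonneg (hTpos k).le (hRpos k).le) hppos.le]
      exact ENNReal.rpow_le_rpow h1 hppos.le
    have h3 : (T k / R k) ^ p ≤ (q k)⁻¹ / R k := by
      rw [Real.div_rpow (hTpos k).le (hRpos k).le, hTp k]
      gcongr
      calc R k = R k ^ (1:ℝ) := (Real.rpow_one _).symm
        _ ≤ R k ^ p := Real.rpow_le_rpow_of_exponent_le (hR1 k) hp
    have h4 : c k ^ p * m k ≤ ENNReal.ofReal ((q k)⁻¹ / R k) * ENNReal.ofReal (M k) := by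
      rw [show m k = ENNReal.ofReal (M k) from (ENNReal.ofReal_toReal (hmfin k).ne).symm]
      exact mul_le_mul' (le_trans h2 (ENNReal.ofReal_le_ofReal h3)) le_rfl
    refine le_trans h4 ?_
    rw [← ENNReal.ofReal_mul (div_nonneg (inv_nonneg.mpr (hqpos k).le) (hRpos k).le)]
    apply ENNReal.ofReal_le_ofReal
    have hqM : (q k)⁻¹ / R k * M k = ((k:ℝ)+1)⁻¹ / R k := by
      rw [hqdef]; simp only
      rw [mul_inv]
      field_simp
      rw [div_mul_cancel_left₀ (hMpos k).ne']
      ring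
    rw [hqM]
    have hk1 : ((k:ℝ)+1)⁻¹ ≤ 1 := by
      rw [inv_le_one_iff₀]; right; exact le_add_of_nonneg_left (Nat.cast_nonneg k)
    calc ((k:ℝ)+1)⁻¹ / R k ≤ 1 / R k := by gcongr
      _ = (1/2 : ℝ) ^ k := by rw [hRdef]; simp [div_pow]
  have henergy : (∫⁻ x, (S (dist x₀ x)) ^ p ∂μ) < ⊤ := by
    have hptw : ∀ x : X, (S (dist x₀ x)) ^ p ≤
        ∑' k : ℕ, (Ann k).indicator (fun _ => c k ^ p) x := by
      intro x
      rcases lt_or_ge (dist x₀ x) 1 with hd | hd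
      · rw [hSzero hd, ENNReal.zero_rpow_of_pos hppos]
        exact zero_le
      · obtain ⟨k, hk⟩ := hblock _ hd
        rw [hSval hk]
        have hmem : x ∈ Ann k := hk
        have : (Ann k).indicator (fun _ => c k ^ p) x = c k ^ p := indicator_of_mem hmem _
        rw [← this]
        exact ENNReal.le_tsum k
    calc (∫⁻ x, (S (dist x₀ x)) ^ p ∂μ)
        ≤ ∫⁻ x, ∑' k : ℕ, (Ann k).indicator (fun _ => c k ^ p) x ∂μ := lintegral_mono hptw
      _ = ∑' k : ℕ, ∫⁻ x, (Ann k).indicator (fun _ => c k ^ p) x ∂μ :=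
          lintegral_tsum fun k => (measurable_const.indicator (hAnnmeas k)).aemeasurable
      _ = ∑' k : ℕ, c k ^ p * μ (Ann k) := by
          congr 1; funext k; exact lintegral_indicator_const (hAnnmeas k) _
      _ ≤ ∑' k : ℕ, ENNReal.ofReal ((1/2 : ℝ) ^ k) := by
          apply ENNReal.tsum_le_tsum
          intro k
          refine le_trans ?_ (hcp k)
          apply mul_le_mul' le_rfl
          apply measure_mono
          intro x hx
          exact mem_ball.mpr (by rw [dist_comm]; exact hx.2)
      _ = ∑' k : ℕ, ENNReal.ofReal (1/2 : ℝ) ^ k := by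
          congr 1; funext k; rw [← ENNReal.ofReal_pow (by norm_num)]
      _ = (1 - ENNReal.ofReal (1/2)) ⁻¹ := ENNReal.tsum_geometric _
      _ < ⊤ := by
          rw [ENNReal.inv_lt_top, tsub_pos_iff_lt]
          exact ENNReal.ofReal_lt_one.mpr (by norm_num)
  -- the function f and divergence of the lower-order term
  set f : X → ℝ := fun x => h (dist x₀ x) with hfdef
  have hfub2 : ∀ (j : ℕ) (x : X), dist x₀ x ≤ R j → f x ≤ T 0 - T j := by
    intro j x hd
    rw [hfdef]; simp only
    rw [← hhR j]
    exact hmono_h hd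
  have hflb : ∀ (j : ℕ) (x : X), R j ≤ dist x₀ x → T 0 - T j ≤ f x := by
    intro j x hd
    rw [hfdef]; simp only
    rw [← hhR j]
    exact hmono_h hd
  have hdiv : ∀ c' : ℝ, (∫⁻ x, ENNReal.ofReal |f x - c'| ^ p ∂μ) = ⊤ := by
    intro c'
    rcases lt_or_ge c' (T 0) with hc | hc
    · -- case c' < T 0 : f - c' is bounded below outside a large ball
      set δ := (T 0 - c') / 2 with hδdef
      have hδ : 0 < δ := by rw [hδdef]; linarith
      obtain ⟨n, hn⟩ := exists_nat_ge (δ ^ (-p) / M 0)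
      have hTn : T n ≤ δ := by
        have hq1 : δ ^ (-p) ≤ q n := by
          calc δ ^ (-p) = δ ^ (-p) / M 0 * M 0 := (div_mul_cancel₀ _ (hMpos 0).ne').symm
            _ ≤ ((n:ℝ)+1) * M n :=
                mul_le_mul (by linarith) (hMmono (Nat.zero_le n)) (hMpos 0).le (by positivity)
        calc T n = q n ^ (-(1/p)) := rfl
          _ ≤ (δ ^ (-p)) ^ (-(1/p)) :=
              Real.rpow_le_rpow_of_nonpos (Real.rpow_pos_of_pos hδ _) hq1
                (neg_nonpos.mpr (le_of_lt (by positivity)))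
          _ = δ := by
              rw [← Real.rpow_mul hδ.le]
              rw [show -p * -(1/p) = 1 by field_simp]
              exact Real.rpow_one δ
      set E := (ball x₀ (R n))ᶜ with hEdef
      have hEmeas : MeasurableSet E := measurableSet_ball.compl
      have hμE : μ E = ⊤ := by
        by_contra hfin
        have h1 : μ univ ≤ μ (ball x₀ (R n)) + μ E := by
          conv_lhs => rw [← union_compl_self (ball x₀ (R n))]
          exact measure_union_le _ _
        rw [hXinf] at h1
        exact (ENNReal.add_lt_top.mpr ⟨(hball x₀ _ (hRpos n)).2,
          lt_top_iff_ne_top.mpr hfin⟩).ne (top_le_iff.mp h1)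
      have hlow1 : ∀ x ∈ E, ENNReal.ofReal δ ^ p ≤ ENNReal.ofReal |f x - c'| ^ p := by
        intro x hx
        have hd : R n ≤ dist x₀ x := by
          rw [hEdef] at hx
          simp only [mem_compl_iff, mem_ball, not_lt] at hx
          rwa [dist_comm] at hx
        have h1 : δ ≤ f x - c' := by
          have := hflb n x hd
          rw [hδdef]; linarith
        apply ENNReal.rpow_le_rpow _ hppos.le
        exact ENNReal.ofReal_le_ofReal (le_trans h1 (le_abs_self _))
      have hkey : ENNReal.ofReal δ ^ p * μ E ≤ ∫⁻ x, ENNReal.ofReal |f x - c'| ^ p ∂μ := by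
        calc ENNReal.ofReal δ ^ p * μ E = ∫⁻ _ in E, ENNReal.ofReal δ ^ p ∂μ :=
              (setLIntegral_const _ _).symm
          _ ≤ ∫⁻ x in E, ENNReal.ofReal |f x - c'| ^ p ∂μ :=
              setLIntegral_mono' hEmeas hlow1
          _ ≤ ∫⁻ x, ENNReal.ofReal |f x - c'| ^ p ∂μ :=
              setLIntegral_le_lintegral _ _
      rw [hμE, ENNReal.mul_top
        (ENNReal.rpow_pos (ENNReal.ofReal_pos.mpr hδ) ENNReal.ofReal_ne_top).ne'] at hkey
      exact top_le_iff.mp hkey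
    · -- case T 0 ≤ c' : use annuli and doubling
      have hCdpos : (0:ℝ) < Cd := lt_of_lt_of_le one_pos hCd1
      have hub : ∀ K : ℝ, ∃ z : X, K ≤ dist x₀ z := by
        intro K
        by_contra hcon
        push_neg at hcon
        have h1 : μ univ ≤ μ (ball x₀ (max K 1)) := by
          apply measure_mono
          intro z _
          rw [mem_ball, dist_comm]
          exact lt_of_lt_of_le (hcon z) (le_max_left _ _)
        rw [hXinf] at h1
        exact ((hball x₀ _ (lt_of_lt_of_le one_pos (le_max_right _ _))).2.ne)
          (top_le_iff.mp h1)
      have hAnn_lb : ∀ j : ℕ, m j ≤ ENNReal.ofReal Cd ^ 3 * μ (Ann j) := by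
        intro j
        obtain ⟨z, hz⟩ := hub (3/2 * R j)
        have hmemIcc : (3/2 * R j) ∈ Icc (dist x₀ x₀) (dist x₀ z) := by
          constructor
          · rw [dist_self]; positivity
          · exact hz
        obtain ⟨y, hy0⟩ := intermediate_value_univ x₀ z
          (continuous_const.dist continuous_id) hmemIcc
        have hy : dist x₀ y = 3/2 * R j := hy0
        set r := R j / 2 with hrdef
        have hrpos : 0 < r := by positivity
        have hsub1 : ball y r ⊆ Ann j := by
          intro z' hz'
          rw [mem_ball] at hz'
          -- hz' : dist z' y < r
          have ht1 := dist_triangle x₀ y z'   -- dist x₀ z' ≤ dist x₀ y + dist y z'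
          have ht3 := dist_triangle x₀ z' y   -- dist x₀ y ≤ dist x₀ z' + dist z' y
          have hcomm : dist y z' = dist z' y := dist_comm y z'
          rw [hy] at ht1 ht3
          have hr2 : r = R j / 2 := hrdef
          have hR2 : R (j+1) = 2 * R j := hRsucc j
          show dist x₀ z' ∈ Ico (R j) (R (j+1))
          rw [mem_Ico, hR2]
          constructor
          · linarith
          · linarith
        have hsub2 : ball x₀ (R (j+1)) ⊆ ball y (2*(2*(2*r))) := by
          intro z' hz'
          rw [mem_ball] at hz' ⊢
          have ht := dist_triangle z' x₀ y
          rw [hy] at ht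
          rw [hRsucc j] at hz'
          have h8 : 2*(2*(2*r)) = 4 * R j := by rw [hrdef]; ring
          rw [h8]
          linarith
        have hdb : μ (ball y (2*(2*(2*r)))) ≤ ENNReal.ofReal Cd ^ 3 * μ (ball y r) := by
          calc μ (ball y (2*(2*(2*r)))) ≤ ENNReal.ofReal Cd * μ (ball y (2*(2*r))) :=
                hD y _ (by positivity)
            _ ≤ ENNReal.ofReal Cd * (ENNReal.ofReal Cd * μ (ball y (2*r))) :=
                mul_le_mul' le_rfl (hD y _ (by positivity))
            _ ≤ ENNReal.ofReal Cd * (ENNReal.ofReal Cd * (ENNReal.ofReal Cd * μ (ball y r))) :=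
                mul_le_mul' le_rfl (mul_le_mul' le_rfl (hD y _ hrpos))
            _ = ENNReal.ofReal Cd ^ 3 * μ (ball y r) := by ring
        calc m j ≤ μ (ball y (2*(2*(2*r)))) := measure_mono hsub2
          _ ≤ ENNReal.ofReal Cd ^ 3 * μ (ball y r) := hdb
          _ ≤ ENNReal.ofReal Cd ^ 3 * μ (Ann j) := mul_le_mul' le_rfl (measure_mono hsub1)
      have hA_ne0 : (ENNReal.ofReal Cd ^ 3 : ℝ≥0∞) ≠ 0 :=
        pow_ne_zero _ (ENNReal.ofReal_pos.mpr hCdpos).ne'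
      have hA_netop : (ENNReal.ofReal Cd ^ 3 : ℝ≥0∞) ≠ ⊤ :=
        ENNReal.pow_ne_top ENNReal.ofReal_ne_top
      have hAnn_lb' : ∀ j : ℕ, (ENNReal.ofReal Cd ^ 3)⁻¹ * m j ≤ μ (Ann j) := by
        intro j
        calc (ENNReal.ofReal Cd ^ 3)⁻¹ * m j ≤ (ENNReal.ofReal Cd ^ 3)⁻¹ *
              (ENNReal.ofReal Cd ^ 3 * μ (Ann j)) := mul_le_mul' le_rfl (hAnn_lb j)
          _ = μ (Ann j) := by
              rw [← mul_assoc, ENNReal.inv_mul_cancel hA_ne0 hA_netop, one_mul]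
      have hlow2 : ∀ (j : ℕ) (x : X), x ∈ Ann j →
          ENNReal.ofReal ((q (j+1))⁻¹) ≤ ENNReal.ofReal |f x - c'| ^ p := by
        intro j x hx
        have hd : dist x₀ x < R (j+1) := hx.2
        have h1 : f x ≤ T 0 - T (j+1) := hfub2 (j+1) x hd.le
        have h2 : T (j+1) ≤ |f x - c'| := by
          rw [abs_sub_comm]
          refine le_trans ?_ (le_abs_self _)
          linarith
        calc ENNReal.ofReal ((q (j+1))⁻¹) = ENNReal.ofReal (T (j+1) ^ p) := by rw [hTp]
          _ = ENNReal.ofReal (T (j+1)) ^ p :=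
              (ENNReal.ofReal_rpow_of_nonneg (hTpos _).le hppos.le).symm
          _ ≤ ENNReal.ofReal |f x - c'| ^ p :=
              ENNReal.rpow_le_rpow (ENNReal.ofReal_le_ofReal h2) hppos.le
      have hptw2 : ∀ x : X, (∑' j : ℕ, (Ann j).indicator
          (fun _ => ENNReal.ofReal ((q (j+1))⁻¹)) x) ≤ ENNReal.ofReal |f x - c'| ^ p := by
        intro x
        by_cases hex : ∃ j, x ∈ Ann j
        · obtain ⟨j, hj⟩ := hex
          have hz : ∀ l, l ≠ j → (Ann l).indicator
              (fun _ => ENNReal.ofReal ((q (l+1))⁻¹)) x = 0 := by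
            intro l hl
            apply indicator_of_notMem
            intro hxl
            exact hl (hdisj (show dist x₀ x ∈ Ico (R l) (R (l+1)) from hxl)
              (show dist x₀ x ∈ Ico (R j) (R (j+1)) from hj))
          rw [tsum_eq_single j hz]
          rw [indicator_of_mem hj]
          exact hlow2 j x hj
        · push_neg at hex
          rw [ENNReal.tsum_eq_zero.mpr (fun j => indicator_of_notMem (hex j) _)]
          exact zero_le
      have hsum : (∑' j : ℕ, ENNReal.ofReal ((q (j+1))⁻¹) * μ (Ann j)) ≤
          ∫⁻ x, ENNReal.ofReal |f x - c'| ^ p ∂μ := by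
        calc (∑' j : ℕ, ENNReal.ofReal ((q (j+1))⁻¹) * μ (Ann j))
            = ∫⁻ x, ∑' j : ℕ, (Ann j).indicator
                (fun _ => ENNReal.ofReal ((q (j+1))⁻¹)) x ∂μ := by
              rw [lintegral_tsum fun j => (measurable_const.indicator (hAnnmeas j)).aemeasurable]
              congr 1; funext j
              exact (lintegral_indicator_const (hAnnmeas j) _).symm
          _ ≤ ∫⁻ x, ENNReal.ofReal |f x - c'| ^ p ∂μ := lintegral_mono hptw2
      have hMd : ∀ j : ℕ, M (j+1) ≤ Cd * M j := by
        intro j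
        have h1 : μ (ball x₀ (R (j+2))) ≤ ENNReal.ofReal Cd * μ (ball x₀ (R (j+1))) := by
          rw [hRsucc (j+1)]
          exact hD x₀ _ (hRpos (j+1))
        have h2 := ENNReal.toReal_mono
          ((ENNReal.mul_lt_top ENNReal.ofReal_lt_top (hmfin j)).ne) h1
        rw [ENNReal.toReal_mul, ENNReal.toReal_ofReal hCdpos.le] at h2
        exact h2
      have hterm_lb : ∀ j : ℕ, ENNReal.ofReal (((j:ℝ)+2)⁻¹) * ENNReal.ofReal (Cd⁻¹) *
          (ENNReal.ofReal Cd ^ 3)⁻¹ ≤ ENNReal.ofReal ((q (j+1))⁻¹) * μ (Ann j) := by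
        intro j
        have h1 : ENNReal.ofReal ((q (j+1))⁻¹) * ((ENNReal.ofReal Cd ^ 3)⁻¹ * m j) ≤
            ENNReal.ofReal ((q (j+1))⁻¹) * μ (Ann j) := mul_le_mul' le_rfl (hAnn_lb' j)
        refine le_trans ?_ h1
        have hreal : ((j:ℝ)+2)⁻¹ * Cd⁻¹ ≤ (q (j+1))⁻¹ * M j := by
          have hq2 : q (j+1) ≤ ((j:ℝ)+2) * Cd * M j := by
            have h5 := hMd j
            rw [hqdef]; simp only
            push_cast
            nlinarith [hMpos (j+1), hMpos j]
          have h3 : (((j:ℝ)+2) * Cd * M j)⁻¹ ≤ (q (j+1))⁻¹ :=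
            inv_anti₀ (hqpos (j+1)) hq2
          calc ((j:ℝ)+2)⁻¹ * Cd⁻¹ = (((j:ℝ)+2) * Cd * M j)⁻¹ * M j := by
                rw [mul_inv, mul_inv]
                have hMne := (hMpos j).ne'
                have hCdne : Cd ≠ 0 := (lt_of_lt_of_le one_pos hCd1).ne'
                have hjne : ((j:ℝ)+2) ≠ 0 := by positivity
                field_simp
            _ ≤ (q (j+1))⁻¹ * M j := mul_le_mul_of_nonneg_right h3 (hMpos j).le
        calc ENNReal.ofReal (((j:ℝ)+2)⁻¹) * ENNReal.ofReal (Cd⁻¹) * (ENNReal.ofReal Cd ^ 3)⁻¹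
            = (ENNReal.ofReal Cd ^ 3)⁻¹ * ENNReal.ofReal (((j:ℝ)+2)⁻¹ * Cd⁻¹) := by
              rw [ENNReal.ofReal_mul (by positivity)]; ring
          _ ≤ (ENNReal.ofReal Cd ^ 3)⁻¹ * ENNReal.ofReal ((q (j+1))⁻¹ * M j) :=
              mul_le_mul' le_rfl (ENNReal.ofReal_le_ofReal hreal)
          _ = ENNReal.ofReal ((q (j+1))⁻¹) * ((ENNReal.ofReal Cd ^ 3)⁻¹ * m j) := by
              rw [ENNReal.ofReal_mul (inv_nonneg.mpr (hqpos _).le)]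
              rw [show m j = ENNReal.ofReal (M j) from (ENNReal.ofReal_toReal (hmfin j).ne).symm]
              ring
      have hharm : (∑' j : ℕ, ENNReal.ofReal (((j:ℝ)+2)⁻¹)) = ⊤ := by
        by_contra hne
        have hsum1 : Summable (fun j : ℕ => (((j:ℝ)+2)⁻¹).toNNReal) :=
          ENNReal.tsum_coe_ne_top_iff_summable.mp hne
        have hsum2 : Summable (fun j : ℕ => ((j:ℝ)+2)⁻¹) := by
          have h6 := NNReal.summable_coe.mpr hsum1
          refine h6.congr fun j => ?_
          exact Real.coe_toNNReal _ (by positivity)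
        apply Real.not_summable_one_div_natCast
        rw [← summable_nat_add_iff 2]
        refine hsum2.congr fun j => ?_
        push_cast
        rw [one_div]
      have hB_ne0 : (ENNReal.ofReal (Cd⁻¹) * (ENNReal.ofReal Cd ^ 3)⁻¹ : ℝ≥0∞) ≠ 0 :=
        mul_ne_zero (ENNReal.ofReal_pos.mpr (by positivity)).ne'
          (ENNReal.inv_ne_zero.mpr hA_netop)
      have htop : (∑' j : ℕ, ENNReal.ofReal ((q (j+1))⁻¹) * μ (Ann j)) = ⊤ := by
        apply top_le_iff.mp
        have hle := ENNReal.tsum_le_tsum hterm_lb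
        refine le_trans ?_ hle
        have heq : (∑' j : ℕ, ENNReal.ofReal (((j:ℝ)+2)⁻¹) * ENNReal.ofReal (Cd⁻¹) *
            (ENNReal.ofReal Cd ^ 3)⁻¹) = (∑' j : ℕ, ENNReal.ofReal (((j:ℝ)+2)⁻¹)) *
            (ENNReal.ofReal (Cd⁻¹) * (ENNReal.ofReal Cd ^ 3)⁻¹) := by
          rw [← ENNReal.tsum_mul_right]
          congr 1; funext j; ring
        rw [heq, hharm, ENNReal.top_mul hB_ne0]
      exact top_le_iff.mp (htop ▸ hsum)
  exact ⟨f, hfliploc, ⟨fun x => S (dist x₀ x), hSmeas.comp hdistmeas,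
    radial_isUpperGradient x₀ hSmeas hmono_h hcomp, henergy⟩, hdiv⟩
end

section
/- Let 1 ≤ p < ∞ and let (X,d,μ) satisfy the standing assumptions. If X is p-parabolic, then D^{1,p}(X) ≠ N^{1,p}(X) + ℝ, i.e., there exists a measurable f : X → ℝ having an upper gradient g with ∫_X g^p dμ < ∞ such that ∫_X |f − c|^p dμ = ∞ for every c ∈ ℝ. -/
open MeasureTheory Metric Set Filter
open scoped ENNReal NNReal Topology

/-- The relative `p`-capacity of the condenser `(E,F)`: the infimum of `∫ gᵖ dμ` over all
`p`-integrable measurable `u` with `u ≥ 1` on `E`, `u ≤ 0` on `F`, and all upper gradients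
`g` of `u`. -/
noncomputable def relCap {X : Type*} [MetricSpace X] [MeasurableSpace X]
    (p : ℝ) (μ : Measure X) (E F : Set X) : ℝ≥0∞ :=
  ⨅ (u : X → ℝ) (g : X → ℝ≥0∞) (_ : Measurable u)
    (_ : (∫⁻ x, ENNReal.ofReal |u x| ^ p ∂μ) < ⊤)
    (_ : ∀ x ∈ E, 1 ≤ u x) (_ : ∀ x ∈ F, u x ≤ 0)
    (_ : Measurable g) (_ : IsUpperGradient g u), ∫⁻ x, g x ^ p ∂μ

/-- `X` is `p`-parabolic: for every base ball, the relative `p`-capacity to the complement of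
`B(x₀,R)` tends to `0` as `R → ∞`. -/
def IsPParabolic {X : Type*} [MetricSpace X] [MeasurableSpace X]
    (p : ℝ) (μ : Measure X) : Prop :=
  ∀ (x₀ : X) (r : ℝ), 0 < r →
    Tendsto (fun R : ℝ => relCap p μ (ball x₀ r) ((ball x₀ R)ᶜ)) atTop (𝓝 0)

/-- `D^{1,p}(X) ≠ N^{1,p}(X) + ℝ`: there is a measurable function with a `p`-integrable upper
gradient such that `∫ |f - c|ᵖ dμ = ∞` for every constant `c`. -/
def DirichletNeNewtonPlusReal {X : Type*} [MetricSpace X] [MeasurableSpace X]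
    (p : ℝ) (μ : Measure X) : Prop :=
  ∃ f : X → ℝ, Measurable f ∧
    (∃ g : X → ℝ≥0∞, Measurable g ∧ IsUpperGradient g f ∧ (∫⁻ x, g x ^ p ∂μ) < ⊤) ∧
    ∀ c : ℝ, (∫⁻ x, ENNReal.ofReal |f x - c| ^ p ∂μ) = ⊤

/- ### Auxiliary lemmas -/

/-- The clamp map `t ↦ min 1 (max 0 t)` is 1-Lipschitz. -/
lemma clamp_abs_le (a b : ℝ) : |min 1 (max 0 a) - min 1 (max 0 b)| ≤ |a - b| := by
  have hmin : ∀ x y : ℝ, |min 1 x - min 1 y| ≤ |x - y| := by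
    intro x y
    rcases min_cases 1 x with ⟨h1, h1'⟩ | ⟨h1, h1'⟩ <;>
      rcases min_cases 1 y with ⟨h2, h2'⟩ | ⟨h2, h2'⟩ <;>
      rw [h1, h2, abs_sub_le_iff] <;>
      constructor <;>
      linarith [le_abs_self (x - y), neg_abs_le (x - y), abs_nonneg (x - y)]
  have h2 : |max 0 a - max 0 b| ≤ |a - b| := by
    simpa [max_comm] using abs_max_sub_max_le_abs a b 0
  exact (hmin (max 0 a) (max 0 b)).trans h2

/-- Simple recursion helper. -/
noncomputable def natRecAux {α : Type*} (z : α) (s : ℕ → α → α) : ℕ → α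
  | 0 => z
  | n + 1 => s n (natRecAux z s n)

lemma step_exists {X : Type*} [MetricSpace X] [MeasurableSpace X]
    (μ : Measure X) (p : ℝ) (x₀ : X) (hpara : IsPParabolic p μ)
    (r : ℝ) (hr : 0 < r) (ε : ℝ≥0∞) (hε : 0 < ε) :
    ∃ R : ℝ, r + 1 ≤ R ∧ ∃ (u : X → ℝ) (gg : X → ℝ≥0∞),
      Measurable u ∧ (∀ x ∈ ball x₀ r, 1 ≤ u x) ∧ (∀ x, x ∉ ball x₀ R → u x ≤ 0) ∧
      Measurable gg ∧ IsUpperGradient gg u ∧ (∫⁻ x, gg x ^ p ∂μ) < ε := by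
  have h := (hpara x₀ r hr).eventually (gt_mem_nhds hε)
  obtain ⟨R, hR1, hR2⟩ := ((eventually_ge_atTop (r + 1)).and h).exists
  refine ⟨R, hR1, ?_⟩
  simp only [relCap, iInf_lt_iff] at hR2
  obtain ⟨u, g, hu, _, hE, hF, hg, hug, hlt⟩ := hR2
  exact ⟨u, g, hu, hE, fun x hx => hF x hx, hg, hug, hlt⟩

/-- under the standing assumptions, if `X` is `p`-parabolic then
`D^{1,p}(X) ≠ N^{1,p}(X) + ℝ`. -/
theorem statement1 {X : Type*} [MetricSpace X] [MeasurableSpace X] [BorelSpace X]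
    [ProperSpace X] [ConnectedSpace X]
    (μ : Measure X) (hXinf : μ Set.univ = ⊤)
    (hball : ∀ (x : X) (r : ℝ), 0 < r → 0 < μ (ball x r) ∧ μ (ball x r) < ⊤)
    (p : ℝ) (hp : 1 ≤ p)
    (hpara : IsPParabolic p μ) :
    DirichletNeNewtonPlusReal p μ := by
  have hp0 : (0 : ℝ) < p := lt_of_lt_of_le one_pos hp
  have hp0' : p ≠ 0 := ne_of_gt hp0
  obtain ⟨x₀⟩ : Nonempty X := inferInstance
  -- the small positive quantities
  have hεpos : ∀ j : ℕ, (0 : ℝ≥0∞) < ENNReal.ofReal ((2 : ℝ)⁻¹ ^ j) ^ p :=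
    fun j => ENNReal.rpow_pos (ENNReal.ofReal_pos.mpr (by positivity)) ENNReal.ofReal_ne_top
  have key : ∀ (j : ℕ) (r : ℝ), 0 < r → ∃ R : ℝ, r + 1 ≤ R ∧
      ∃ (u : X → ℝ) (gg : X → ℝ≥0∞),
      Measurable u ∧ (∀ x ∈ ball x₀ r, 1 ≤ u x) ∧ (∀ x, x ∉ ball x₀ R → u x ≤ 0) ∧
      Measurable gg ∧ IsUpperGradient gg u ∧
      (∫⁻ x, gg x ^ p ∂μ) < ENNReal.ofReal ((2 : ℝ)⁻¹ ^ j) ^ p :=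
    fun j r hr => step_exists μ p x₀ hpara r hr _ (hεpos j)
  choose Rf hRf key2 using key
  choose uf gf hu hE hF hg hug hlt using key2
  -- recursively chosen radii
  let seq : ℕ → {r : ℝ // 0 < r} := natRecAux ⟨1, one_pos⟩
    (fun j q => ⟨Rf j q.1 q.2,
      lt_of_lt_of_le (by linarith [q.2] : (0:ℝ) < q.1 + 1) (hRf j q.1 q.2)⟩)
  let R : ℕ → ℝ := fun n => (seq n).1
  have hseq_succ : ∀ j, R (j + 1) = Rf j (R j) (seq j).2 := fun j => rfl
  have hstep : ∀ j, R j + 1 ≤ R (j + 1) := fun j => by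
    rw [hseq_succ j]; exact hRf j (R j) (seq j).2
  have hR0 : R 0 = 1 := rfl
  have hRmono : StrictMono R := strictMono_nat_of_lt_succ fun j => by linarith [hstep j]
  have hRge : ∀ j : ℕ, (j : ℝ) + 1 ≤ R j := by
    intro j
    induction j with
    | zero => simp [hR0]
    | succ n ih => push_cast; linarith [hstep n]
  -- the data at each step
  let u : ℕ → X → ℝ := fun j => uf j (R j) (seq j).2
  let g : ℕ → X → ℝ≥0∞ := fun j => gf j (R j) (seq j).2
  have hu' : ∀ j, Measurable (u j) := fun j => hu j (R j) (seq j).2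
  have hE' : ∀ j, ∀ x ∈ ball x₀ (R j), 1 ≤ u j x := fun j => hE j (R j) (seq j).2
  have hF' : ∀ j, ∀ x, x ∉ ball x₀ (R (j + 1)) → u j x ≤ 0 := fun j x hx => by
    have := hF j (R j) (seq j).2 x
    rw [← hseq_succ j] at this
    exact this hx
  have hg' : ∀ j, Measurable (g j) := fun j => hg j (R j) (seq j).2
  have hug' : ∀ j, IsUpperGradient (g j) (u j) := fun j => hug j (R j) (seq j).2
  have hlt' : ∀ j, (∫⁻ x, g j x ^ p ∂μ) < ENNReal.ofReal ((2 : ℝ)⁻¹ ^ j) ^ p :=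
    fun j => hlt j (R j) (seq j).2
  -- the building blocks
  let w : ℕ → X → ℝ := fun j x => 1 - min 1 (max 0 (u j x))
  have hw_nonneg : ∀ j x, 0 ≤ w j x := fun j x => by
    simp only [w, sub_nonneg]; exact min_le_left _ _
  have hw_le_one : ∀ j x, w j x ≤ 1 := fun j x => by
    simp only [w]
    have : (0:ℝ) ≤ min 1 (max 0 (u j x)) := le_min one_pos.le (le_max_left _ _)
    linarith
  have hw_zero : ∀ j x, x ∈ ball x₀ (R j) → w j x = 0 := fun j x hx => by
    have h1 : (1:ℝ) ≤ u j x := hE' j x hx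
    have : min 1 (max 0 (u j x)) = 1 := min_eq_left ((le_max_right _ _).trans' h1 |>.trans (le_refl _))
    simp only [w, this, sub_self]
  have hw_one : ∀ j x, x ∉ ball x₀ (R (j + 1)) → w j x = 1 := fun j x hx => by
    have h1 : u j x ≤ 0 := hF' j x hx
    have hmax : max 0 (u j x) = 0 := max_eq_left h1
    simp only [w, hmax, min_eq_right (zero_le_one' ℝ)]
    norm_num
  have hw_meas : ∀ j, Measurable (w j) := fun j =>
    measurable_const.sub (measurable_const.min (measurable_const.max (hu' j)))
  -- upper gradient transfer to w
  have hw_ug : ∀ j, ∀ a b : X, |w j a - w j b| ≤ |u j a - u j b| := by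
    intro j a b
    have : w j a - w j b = -(min 1 (max 0 (u j a)) - min 1 (max 0 (u j b))) := by
      simp only [w]; ring
    rw [this, abs_neg]
    exact clamp_abs_le _ _
  -- thresholds: at each point only finitely many w j are nonzero
  have hthr : ∀ x : X, ∃ n : ℕ, ∀ j, n ≤ j → w j x = 0 := by
    intro x
    obtain ⟨n, hn⟩ := exists_nat_gt (dist x x₀)
    refine ⟨n, fun j hj => hw_zero j x ?_⟩
    rw [mem_ball]
    have : (n : ℝ) ≤ (j : ℝ) := by exact_mod_cast hj
    calc dist x x₀ < n := hn
      _ ≤ (j : ℝ) + 1 := by linarith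
      _ ≤ R j := hRge j
  let f : X → ℝ := fun x => (∑' j, ENNReal.ofReal (w j x)).toReal
  have hsum_eq : ∀ (x : X) (n : ℕ), (∀ j, n ≤ j → w j x = 0) →
      (∑' j, ENNReal.ofReal (w j x)) = ∑ j ∈ Finset.range n, ENNReal.ofReal (w j x) := by
    intro x n hn
    refine tsum_eq_sum fun j hj => ?_
    have hj' : n ≤ j := le_of_not_gt fun h => hj (Finset.mem_range.mpr h)
    rw [hn j hj']
    simp
  have hf_eq : ∀ (x : X) (n : ℕ), (∀ j, n ≤ j → w j x = 0) →
      f x = ∑ j ∈ Finset.range n, w j x := by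
    intro x n hn
    simp only [f]
    rw [hsum_eq x n hn, ENNReal.toReal_sum (fun j _ => ENNReal.ofReal_ne_top)]
    exact Finset.sum_congr rfl fun j _ => ENNReal.toReal_ofReal (hw_nonneg j x)
  have hf_meas : Measurable f :=
    (ENNReal.measurable_toReal).comp
      (Measurable.ennreal_tsum fun j => ENNReal.measurable_ofReal.comp (hw_meas j))
  -- lower bound on f
  have hf_ge : ∀ (n : ℕ) (x : X), x ∉ ball x₀ (R n) → (n : ℝ) ≤ f x := by
    intro n x hx
    obtain ⟨m, hm⟩ := hthr x
    have hthr' : ∀ j, max n m ≤ j → w j x = 0 := fun j hj => hm j (le_trans (le_max_right _ _) hj)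
    rw [hf_eq x (max n m) hthr']
    have hone : ∀ j ∈ Finset.range n, w j x = 1 := by
      intro j hj
      refine hw_one j x fun hmem => hx ?_
      exact ball_subset_ball (hRmono.monotone (Finset.mem_range.mp hj)) hmem
    calc (n : ℝ) = ∑ j ∈ Finset.range n, w j x := by
          rw [Finset.sum_congr rfl hone]; simp
      _ ≤ ∑ j ∈ Finset.range (max n m), w j x :=
          Finset.sum_le_sum_of_subset_of_nonneg
            (Finset.range_subset_range.mpr (le_max_left _ _)) (fun j _ _ => hw_nonneg j x)
  -- the upper gradient
  let G : X → ℝ≥0∞ := fun x => ∑' j, g j x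
  have hG_meas : Measurable G := Measurable.ennreal_tsum hg'
  have hG_ug : IsUpperGradient G f := by
    intro L γ hL hγ
    obtain ⟨na, hna⟩ := hthr (γ 0)
    obtain ⟨nb, hnb⟩ := hthr (γ L)
    set N := max na nb with hN
    have ha : ∀ j, N ≤ j → w j (γ 0) = 0 := fun j hj => hna j (le_trans (le_max_left _ _) hj)
    have hb : ∀ j, N ≤ j → w j (γ L) = 0 := fun j hj => hnb j (le_trans (le_max_right _ _) hj)
    have hfa := hf_eq (γ 0) N ha
    have hfb := hf_eq (γ L) N hb
    have hγmeas : AEMeasurable γ (volume.restrict (Set.Icc 0 L)) :=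
      (hγ.continuousOn.aemeasurable measurableSet_Icc)
    have step1 : ENNReal.ofReal |f (γ L) - f (γ 0)| ≤
        ∑ j ∈ Finset.range N, ENNReal.ofReal |w j (γ L) - w j (γ 0)| := by
      rw [hfa, hfb, ← Finset.sum_sub_distrib]
      calc ENNReal.ofReal |∑ j ∈ Finset.range N, (w j (γ L) - w j (γ 0))|
          ≤ ENNReal.ofReal (∑ j ∈ Finset.range N, |w j (γ L) - w j (γ 0)|) :=
            ENNReal.ofReal_le_ofReal (Finset.abs_sum_le_sum_abs _ _)
        _ = ∑ j ∈ Finset.range N, ENNReal.ofReal |w j (γ L) - w j (γ 0)| :=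
            ENNReal.ofReal_sum_of_nonneg (fun j _ => abs_nonneg _)
    have step2 : ∀ j, ENNReal.ofReal |w j (γ L) - w j (γ 0)| ≤
        ∫⁻ t in Set.Icc 0 L, g j (γ t) := by
      intro j
      refine le_trans (ENNReal.ofReal_le_ofReal (hw_ug j _ _)) (hug' j L γ hL hγ)
    calc ENNReal.ofReal |f (γ L) - f (γ 0)|
        ≤ ∑ j ∈ Finset.range N, ENNReal.ofReal |w j (γ L) - w j (γ 0)| := step1
      _ ≤ ∑ j ∈ Finset.range N, ∫⁻ t in Set.Icc 0 L, g j (γ t) :=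
          Finset.sum_le_sum fun j _ => step2 j
      _ ≤ ∑' j, ∫⁻ t in Set.Icc 0 L, g j (γ t) := ENNReal.sum_le_tsum _
      _ = ∫⁻ t in Set.Icc 0 L, ∑' j, g j (γ t) :=
          (lintegral_tsum fun j => (hg' j).comp_aemeasurable hγmeas).symm
      _ = ∫⁻ t in Set.Icc 0 L, G (γ t) := rfl
  -- energy bound
  have hgnorm : ∀ j, (∫⁻ x, g j x ^ p ∂μ) ^ (1 / p) ≤ ENNReal.ofReal ((2 : ℝ)⁻¹ ^ j) := by
    intro j
    have h := (hlt' j).le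
    calc (∫⁻ x, g j x ^ p ∂μ) ^ (1 / p)
        ≤ (ENNReal.ofReal ((2 : ℝ)⁻¹ ^ j) ^ p) ^ (1 / p) :=
          ENNReal.rpow_le_rpow h (by positivity)
      _ = ENNReal.ofReal ((2 : ℝ)⁻¹ ^ j) := by
          rw [← ENNReal.rpow_mul, mul_one_div_cancel hp0', ENNReal.rpow_one]
    -- done
  have hGn_meas : ∀ n, Measurable (fun x => ∑ j ∈ Finset.range n, g j x) := fun n =>
    Finset.measurable_sum _ fun j _ => hg' j
  have mink : ∀ n : ℕ, (∫⁻ x, (∑ j ∈ Finset.range n, g j x) ^ p ∂μ) ^ (1 / p) ≤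
      ∑ j ∈ Finset.range n, (∫⁻ x, g j x ^ p ∂μ) ^ (1 / p) := by
    intro n
    induction n with
    | zero =>
        simp only [Finset.range_zero, Finset.sum_empty]
        have h0 : (∫⁻ _x, (0 : ℝ≥0∞) ^ p ∂μ) = 0 := by
          simp [ENNReal.zero_rpow_of_pos hp0]
        rw [h0, ENNReal.zero_rpow_of_pos (by positivity : (0:ℝ) < 1 / p)]
    | succ n ih =>
        simp only [Finset.sum_range_succ]
        calc (∫⁻ x, (∑ j ∈ Finset.range n, g j x + g n x) ^ p ∂μ) ^ (1 / p)
            ≤ (∫⁻ x, (∑ j ∈ Finset.range n, g j x) ^ p ∂μ) ^ (1 / p)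
              + (∫⁻ x, g n x ^ p ∂μ) ^ (1 / p) :=
              ENNReal.lintegral_Lp_add_le (hGn_meas n).aemeasurable (hg' n).aemeasurable hp
          _ ≤ (∑ j ∈ Finset.range n, (∫⁻ x, g j x ^ p ∂μ) ^ (1 / p))
              + (∫⁻ x, g n x ^ p ∂μ) ^ (1 / p) := add_le_add ih le_rfl
  have hGn_bound : ∀ n, (∫⁻ x, (∑ j ∈ Finset.range n, g j x) ^ p ∂μ) ≤
      ENNReal.ofReal 2 ^ p := by
    intro n
    have h1 : (∫⁻ x, (∑ j ∈ Finset.range n, g j x) ^ p ∂μ) ^ (1 / p) ≤ ENNReal.ofReal 2 := by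
      refine (mink n).trans ?_
      calc ∑ j ∈ Finset.range n, (∫⁻ x, g j x ^ p ∂μ) ^ (1 / p)
          ≤ ∑ j ∈ Finset.range n, ENNReal.ofReal ((2 : ℝ)⁻¹ ^ j) :=
            Finset.sum_le_sum fun j _ => hgnorm j
        _ = ENNReal.ofReal (∑ j ∈ Finset.range n, (2 : ℝ)⁻¹ ^ j) :=
            (ENNReal.ofReal_sum_of_nonneg fun j _ => by positivity).symm
        _ ≤ ENNReal.ofReal 2 := by
            refine ENNReal.ofReal_le_ofReal ?_
            simpa [one_div] using sum_geometric_two_le n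
    calc (∫⁻ x, (∑ j ∈ Finset.range n, g j x) ^ p ∂μ)
        = ((∫⁻ x, (∑ j ∈ Finset.range n, g j x) ^ p ∂μ) ^ (1 / p)) ^ p := by
          rw [← ENNReal.rpow_mul, one_div_mul_cancel hp0', ENNReal.rpow_one]
      _ ≤ ENNReal.ofReal 2 ^ p := ENNReal.rpow_le_rpow h1 hp0.le
  have hG_energy : (∫⁻ x, G x ^ p ∂μ) < ⊤ := by
    have hmono : Monotone (fun n : ℕ => fun x => (∑ j ∈ Finset.range n, g j x) ^ p) := by
      intro m n hmn
      intro x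
      exact ENNReal.rpow_le_rpow
        (Finset.sum_le_sum_of_subset (Finset.range_subset_range.mpr hmn)) hp0.le
    have hpt : ∀ x, G x ^ p = ⨆ n : ℕ, (∑ j ∈ Finset.range n, g j x) ^ p := by
      intro x
      have h1 : G x = ⨆ n : ℕ, ∑ j ∈ Finset.range n, g j x := ENNReal.tsum_eq_iSup_nat
      rw [h1]
      exact Monotone.map_iSup_of_continuousAt (f := fun z : ℝ≥0∞ => z ^ p)
        ENNReal.continuous_rpow_const.continuousAt
        (fun a b hab => ENNReal.rpow_le_rpow hab hp0.le)
        (by simp [bot_eq_zero, ENNReal.zero_rpow_of_pos hp0])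
    calc (∫⁻ x, G x ^ p ∂μ)
        = ∫⁻ x, ⨆ n : ℕ, (∑ j ∈ Finset.range n, g j x) ^ p ∂μ := by
          refine lintegral_congr fun x => hpt x
      _ = ⨆ n : ℕ, ∫⁻ x, (∑ j ∈ Finset.range n, g j x) ^ p ∂μ :=
          lintegral_iSup (fun n => (hGn_meas n).pow_const p)
            (fun m n hmn => hmono hmn)
      _ ≤ ENNReal.ofReal 2 ^ p := iSup_le hGn_bound
      _ < ⊤ := ENNReal.rpow_lt_top_of_nonneg hp0.le ENNReal.ofReal_ne_top
  -- the divergence of the integrals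
  refine ⟨f, hf_meas, ⟨G, hG_meas, hG_ug, hG_energy⟩, ?_⟩
  intro c
  obtain ⟨n, hn⟩ := exists_nat_ge (|c| + 1)
  have hRn_pos : (0 : ℝ) < R n := lt_of_lt_of_le (by positivity) (hRge n)
  have hμs : μ ((ball x₀ (R n))ᶜ) = ⊤ := by
    by_contra hne
    have h1 : μ Set.univ ≤ μ (ball x₀ (R n)) + μ ((ball x₀ (R n))ᶜ) := by
      rw [← Set.union_compl_self (ball x₀ (R n))] at *
      exact measure_union_le _ _
    rw [hXinf] at h1
    exact absurd (eq_top_iff.mpr h1) (ENNReal.add_ne_top.mpr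
      ⟨(hball x₀ (R n) hRn_pos).2.ne, hne⟩)
  have hbnd : ∀ x ∈ (ball x₀ (R n))ᶜ, (1 : ℝ≥0∞) ≤ ENNReal.ofReal |f x - c| ^ p := by
    intro x hx
    have h1 : (n : ℝ) ≤ f x := hf_ge n x hx
    have h2 : (1 : ℝ) ≤ |f x - c| := by
      have : |c| + 1 ≤ (n : ℝ) := hn
      have h3 : 1 ≤ f x - c := by
        have := le_abs_self c
        linarith
      calc (1:ℝ) ≤ f x - c := h3
        _ ≤ |f x - c| := le_abs_self _
    have h4 : (1 : ℝ≥0∞) ≤ ENNReal.ofReal |f x - c| := by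
      rw [← ENNReal.ofReal_one]
      exact ENNReal.ofReal_le_ofReal h2
    calc (1 : ℝ≥0∞) = 1 ^ p := (ENNReal.one_rpow p).symm
      _ ≤ ENNReal.ofReal |f x - c| ^ p := ENNReal.rpow_le_rpow h4 hp0.le
  have hms : MeasurableSet ((ball x₀ (R n))ᶜ) := measurableSet_ball.compl
  refine eq_top_iff.mpr ?_
  calc (⊤ : ℝ≥0∞) = μ ((ball x₀ (R n))ᶜ) := hμs.symm
    _ = ∫⁻ _ in (ball x₀ (R n))ᶜ, 1 ∂μ := (setLIntegral_one _).symm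
    _ ≤ ∫⁻ x in (ball x₀ (R n))ᶜ, ENNReal.ofReal |f x - c| ^ p ∂μ :=
        setLIntegral_mono_ae' hms (ae_of_all _ hbnd)
    _ ≤ ∫⁻ x, ENNReal.ofReal |f x - c| ^ p ∂μ := setLIntegral_le_lintegral _ _
end

section
/- Let (X,d,μ) satisfy the standing assumptions, suppose X is a length space, suppose there exist two ends at infinity of X that are not the same, and suppose there exists r > 0 with inf_{x∈X} μ(B(x,r)) > 0. Then for each 1 ≤ p < ∞, D^{1,p}(X) ≠ N^{1,p}(X) + ℝ. -/
open MeasureTheory Metric Set Filter Bornology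
open scoped ENNReal NNReal Topology

/-- `X` is a length space: any two points can be joined, up to `ε`, by a `1`-Lipschitz curve
of length at most `d(x,y) + ε`. -/
def IsLengthSpace (X : Type*) [MetricSpace X] : Prop :=
  ∀ x y : X, ∀ ε : ℝ, 0 < ε → ∃ L : ℝ, 0 ≤ L ∧ L ≤ dist x y + ε ∧
    ∃ γ : ℝ → X, LipschitzOnWith 1 γ (Set.Icc 0 L) ∧ γ 0 = x ∧ γ L = y

/-- `(F_j)` is an end at infinity of `X`: the closures are nested, consecutive complements are
at positive distance, the intersection is empty, and each `F_j` is an unbounded connected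
component of the complement of some compact set. -/
def IsEndAtInfinity {X : Type*} [MetricSpace X] (F : ℕ → Set X) : Prop :=
  (∀ j, closure (F (j + 1)) ⊆ F j) ∧
  (∀ j, ∃ ε : ℝ, 0 < ε ∧ ∀ x ∈ (F j)ᶜ, ∀ y ∈ F (j + 1), ε ≤ dist x y) ∧
  (⋂ j, F j) = ∅ ∧
  (∀ j, ∃ K : Set X, IsCompact K ∧ ¬ Bornology.IsBounded (F j) ∧
    ∃ x ∈ F j, F j = connectedComponentIn Kᶜ x)

/-- Two ends are the same if each is eventually contained in the other. -/
def SameEnd {X : Type*} (E F : ℕ → Set X) : Prop :=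
  ∀ j, (∃ i, E i ⊆ F j) ∧ (∃ k, F k ⊆ E j)


lemma ug_helper_mono {L R : ℝ} (hL : 0 ≤ L) (hR : 0 < R) {h : ℝ → ℝ}
    (hcont : ContinuousOn h (Icc 0 L))
    (hLip : ∀ s ∈ Icc 0 L, ∀ t ∈ Icc 0 L, |h t - h s| ≤ |t - s| / R)
    {T : Set ℝ} (hTc : IsClosed T)
    (hconst : ∀ s t, s ∈ Icc 0 L → t ∈ Icc 0 L → s ≤ t → Ioo s t ∩ T = ∅ → h s = h t)
    {U : Set ℝ} (hU : IsOpen U) (hTU : T ⊆ U) :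
    h L - h 0 ≤ (volume (U ∩ Ioc 0 L)).toReal / R := by
  set ρ : ℝ → ℝ := fun t => (volume (U ∩ Ioc 0 t)).toReal with hρ
  have hfin : ∀ t : ℝ, volume (U ∩ Ioc 0 t) ≠ ⊤ := fun t =>
    ((measure_mono inter_subset_right).trans_lt measure_Ioc_lt_top).ne
  have hmono : ∀ {s t : ℝ}, s ≤ t → ρ s ≤ ρ t := by
    intro s t hst
    exact ENNReal.toReal_mono (hfin t) (measure_mono (inter_subset_inter_right _ (Ioc_subset_Ioc_right hst)))
  have hadd : ∀ s t : ℝ, 0 ≤ s → s ≤ t → ρ t = ρ s + (volume (U ∩ Ioc s t)).toReal := by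
    intro s t h0s hst
    have hdisj : Disjoint (U ∩ Ioc 0 s) (U ∩ Ioc s t) := by
      refine Disjoint.mono inter_subset_right inter_subset_right ?_
      exact Ioc_disjoint_Ioc_of_le le_rfl
    have hunion : U ∩ Ioc 0 t = (U ∩ Ioc 0 s) ∪ (U ∩ Ioc s t) := by
      rw [← inter_union_distrib_left, Ioc_union_Ioc_eq_Ioc h0s hst]
    rw [hρ]
    simp only
    rw [hunion, measure_union hdisj (hU.measurableSet.inter measurableSet_Ioc),
      ENNReal.toReal_add (hfin s) (((measure_mono inter_subset_right).trans_lt measure_Ioc_lt_top).ne)]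
  have hsub : ∀ s t : ℝ, (volume (U ∩ Ioc s t)).toReal ≤ t - s ∨ t ≤ s := by
    intro s t
    rcases le_or_gt t s with h | h
    · exact Or.inr h
    · left
      have : volume (U ∩ Ioc s t) ≤ ENNReal.ofReal (t - s) := by
        refine (measure_mono inter_subset_right).trans ?_
        rw [Real.volume_Ioc]
      calc (volume (U ∩ Ioc s t)).toReal ≤ (ENNReal.ofReal (t - s)).toReal :=
            ENNReal.toReal_mono ENNReal.ofReal_ne_top this
        _ = t - s := ENNReal.toReal_ofReal (by linarith)
  have hρ0 : ρ 0 = 0 := by simp [hρ]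
  have hρcont : ContinuousOn ρ (Icc 0 L) := by
    have : LipschitzOnWith 1 ρ (Icc 0 L) := by
      rw [lipschitzOnWith_iff_dist_le_mul]
      intro x hx y hy
      rw [Real.dist_eq, Real.dist_eq, NNReal.coe_one, one_mul]
      rcases le_total y x with hxy | hxy
      · rw [abs_of_nonneg (by linarith [hmono hxy])]
        have := hadd y x hy.1 hxy
        rcases hsub y x with h | h
        · rw [abs_of_nonneg (by linarith)]; linarith
        · have : x = y := le_antisymm h hxy
          simp [this]
      · rw [abs_of_nonpos (by linarith [hmono hxy]), abs_of_nonpos (by linarith)]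
        have := hadd x y hx.1 hxy
        rcases hsub x y with h | h
        · linarith
        · have : y = x := le_antisymm h hxy
          simp [this]
    exact this.continuousOn
  set P : Set ℝ := Icc 0 L ∩ (fun t => h t - h 0 - ρ t / R) ⁻¹' (Iic 0) with hP
  have hPc : IsClosed P := by
    refine ContinuousOn.preimage_isClosed_of_isClosed ?_ isClosed_Icc isClosed_Iic
    exact (hcont.sub continuousOn_const).sub (hρcont.div continuousOn_const
      (fun x _ => hR.ne'))
  have h0P : (0:ℝ) ∈ P := by
    constructor
    · exact ⟨le_refl 0, hL⟩
    · simp [hρ0]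
  have hPbdd : BddAbove P := BddAbove.mono (inter_subset_left) (bddAbove_Icc)
  set s := sSup P with hs
  have hsP : s ∈ P := hPc.csSup_mem ⟨0, h0P⟩ hPbdd
  have hsIcc : s ∈ Icc 0 L := hsP.1
  have hsle : h s - h 0 ≤ ρ s / R := by
    have := hsP.2
    simp only [mem_preimage, mem_Iic] at this
    linarith
  have hsL : s = L := by
    by_contra hne
    have hsltL : s < L := lt_of_le_of_ne hsIcc.2 hne
    by_cases hsU : s ∈ U
    · obtain ⟨δ, hδ, hball⟩ := Metric.isOpen_iff.1 hU s hsU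
      set t := min L (s + δ/2) with ht
      have hst : s < t := lt_min hsltL (by linarith)
      have htIcc : t ∈ Icc 0 L := ⟨le_trans hsIcc.1 hst.le, min_le_left _ _⟩
      have hIocU : Ioc s t ⊆ U := by
        intro u hu
        apply hball
        rw [Metric.mem_ball, Real.dist_eq, abs_of_pos (by linarith [hu.1])]
        have : t ≤ s + δ/2 := min_le_right _ _
        linarith [hu.2]
      have hρt : ρ t = ρ s + (t - s) := by
        rw [hadd s t hsIcc.1 hst.le]
        congr 1
        rw [inter_eq_right.2 hIocU, Real.volume_Ioc, ENNReal.toReal_ofReal (by linarith)]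
      have htP : t ∈ P := by
        refine ⟨htIcc, ?_⟩
        simp only [mem_preimage, mem_Iic]
        have h1 : |h t - h s| ≤ |t - s| / R := hLip s hsIcc t htIcc
        have habs : |t - s| = t - s := abs_of_pos (by linarith)
        rw [habs] at h1
        have h2 : h t - h s ≤ (t - s)/R := (abs_le.1 h1).2
        have : ρ t / R = ρ s / R + (t - s)/R := by rw [hρt]; ring
        linarith
      linarith [le_csSup hPbdd htP]
    · have hsT : s ∉ T := fun h => hsU (hTU h)
      obtain ⟨δ, hδ, hball⟩ := Metric.isOpen_iff.1 hTc.isOpen_compl s hsT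
      set t := min L (s + δ/2) with ht
      have hst : s < t := lt_min hsltL (by linarith)
      have htIcc : t ∈ Icc 0 L := ⟨le_trans hsIcc.1 hst.le, min_le_left _ _⟩
      have hIoo : Ioo s t ∩ T = ∅ := by
        rw [eq_empty_iff_forall_notMem]
        rintro u ⟨hu, huT⟩
        refine hball ?_ huT
        rw [Metric.mem_ball, Real.dist_eq, abs_of_pos (by linarith [hu.1])]
        have : t ≤ s + δ/2 := min_le_right _ _
        linarith [hu.2]
      have hht : h s = h t := hconst s t hsIcc htIcc hst.le hIoo
      have htP : t ∈ P := by
        refine ⟨htIcc, ?_⟩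
        simp only [mem_preimage, mem_Iic]
        have h2 : ρ s ≤ ρ t := hmono hst.le
        have h3 : ρ s / R ≤ ρ t / R := by gcongr
        linarith
      linarith [le_csSup hPbdd htP]
  rw [← hsL]
  exact le_trans hsle (by rw [hsL])

lemma ug_core {L R : ℝ} (hL : 0 ≤ L) (hR : 0 < R) {h : ℝ → ℝ}
    (hcont : ContinuousOn h (Icc 0 L))
    (hLip : ∀ s ∈ Icc 0 L, ∀ t ∈ Icc 0 L, |h t - h s| ≤ |t - s| / R)
    {T : Set ℝ} (hTc : IsClosed T) (hTsub : T ⊆ Icc 0 L)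
    (hconst : ∀ s t, s ∈ Icc 0 L → t ∈ Icc 0 L → s ≤ t → Ioo s t ∩ T = ∅ → h s = h t) :
    ENNReal.ofReal |h L - h 0| ≤ ENNReal.ofReal (1/R) * volume T := by
  have hfinT : volume T ≠ ⊤ :=
    ((measure_mono hTsub).trans_lt (by exact measure_Icc_lt_top)).ne
  have key : |h L - h 0| ≤ (volume T).toReal / R := by
    refine le_of_forall_pos_le_add ?_
    intro ε hε
    obtain ⟨U, hTU, hUopen, hUlt⟩ := exists_isOpen_lt_of_lt T (volume T + ENNReal.ofReal (ε * R))
      (ENNReal.lt_add_right hfinT (by simp [ENNReal.ofReal_eq_zero]; nlinarith))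
    have hbound : (volume (U ∩ Ioc 0 L)).toReal ≤ (volume T).toReal + ε * R := by
      have h1 : volume (U ∩ Ioc 0 L) ≤ volume T + ENNReal.ofReal (ε * R) :=
        ((measure_mono inter_subset_left).trans hUlt.le)
      calc (volume (U ∩ Ioc 0 L)).toReal
          ≤ (volume T + ENNReal.ofReal (ε * R)).toReal :=
            ENNReal.toReal_mono (by finiteness) h1
        _ = (volume T).toReal + ε * R := by
            rw [ENNReal.toReal_add hfinT ENNReal.ofReal_ne_top,
              ENNReal.toReal_ofReal (by nlinarith)]
    have hpos : h L - h 0 ≤ (volume (U ∩ Ioc 0 L)).toReal / R :=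
      ug_helper_mono hL hR hcont hLip hTc hconst hUopen hTU
    have hneg : -(h L - h 0) ≤ (volume (U ∩ Ioc 0 L)).toReal / R := by
      have := ug_helper_mono hL hR (h := fun t => -(h t)) (hcont.neg)
        (fun s hs t ht => by
          have h1 := hLip s hs t ht
          have e1 : |-h t - -h s| = |h t - h s| := by rw [← abs_neg]; ring_nf
          rw [e1]; exact h1)
        hTc (fun s t hs ht hst hIoo => by simp [hconst s t hs ht hst hIoo]) hUopen hTU
      linarith [this]
    have habs : |h L - h 0| ≤ (volume (U ∩ Ioc 0 L)).toReal / R := abs_le.2 ⟨by linarith, hpos⟩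
    calc |h L - h 0| ≤ (volume (U ∩ Ioc 0 L)).toReal / R := habs
      _ ≤ ((volume T).toReal + ε * R) / R := by gcongr
      _ = (volume T).toReal / R + ε := by field_simp
  calc ENNReal.ofReal |h L - h 0| ≤ ENNReal.ofReal ((volume T).toReal / R) :=
        ENNReal.ofReal_le_ofReal key
    _ = ENNReal.ofReal (1/R * (volume T).toReal) := by rw [one_div]; ring_nf
    _ = ENNReal.ofReal (1/R) * ENNReal.ofReal ((volume T).toReal) :=
        ENNReal.ofReal_mul (by positivity)
    _ = ENNReal.ofReal (1/R) * volume T := by rw [ENNReal.ofReal_toReal hfinT]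
lemma exists_far_point {X : Type*} [MetricSpace X] {S : Set X} (hS : IsPreconnected S)
    {w : X} (hw : w ∈ S) (hunb : ¬ IsBounded S) {t : ℝ} (ht : 0 ≤ t) :
    ∃ y ∈ S, dist w y = t := by
  have hA : IsPreconnected ((fun y => dist w y) '' S) :=
    hS.image _ (continuous_const.dist continuous_id).continuousOn
  have h0 : (0:ℝ) ∈ (fun y => dist w y) '' S := ⟨w, hw, dist_self w⟩
  have hbig : ∃ y ∈ S, t ≤ dist w y := by
    by_contra hcon
    push_neg at hcon
    exact hunb ((isBounded_closedBall (x := w) (r := t)).subset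
      (fun y hy => mem_closedBall'.2 (hcon y hy).le))
  obtain ⟨y, hyS, hyt⟩ := hbig
  have : t ∈ (fun y => dist w y) '' S :=
    hA.Icc_subset h0 ⟨y, hyS, rfl⟩ ⟨ht, hyt⟩
  obtain ⟨z, hzS, hz⟩ := this
  exact ⟨z, hzS, hz⟩

lemma infDist_K_le_infDist_U {X : Type*} [MetricSpace X] (hlen : IsLengthSpace X)
    {K : Set X} {x₁ : X} {U : Set X} (hU : U = connectedComponentIn Kᶜ x₁)
    (hUne : U.Nonempty) {x : X} (hxU : x ∉ U) :
    infDist x K ≤ infDist x U := by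
  have key : ∀ u ∈ U, infDist x K ≤ dist x u := by
    intro u hu
    refine le_of_forall_pos_le_add ?_
    intro ε hε
    obtain ⟨L, hL0, hLle, γ, hγ, hγ0, hγL⟩ := hlen x u ε hε
    by_cases hmeet : ∃ s ∈ Icc (0:ℝ) L, γ s ∈ K
    · obtain ⟨s, hsIcc, hsK⟩ := hmeet
      have h1 : dist x (γ s) ≤ s := by
        have := hγ.dist_le_mul 0 ⟨le_refl 0, hL0⟩ s hsIcc
        rw [hγ0] at this
        simpa [Real.dist_eq, abs_of_nonneg hsIcc.1] using this
      calc infDist x K ≤ dist x (γ s) := infDist_le_dist_of_mem hsK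
        _ ≤ s := h1
        _ ≤ L := hsIcc.2
        _ ≤ dist x u + ε := hLle
    · exfalso
      push_neg at hmeet
      have himg : γ '' Icc 0 L ⊆ Kᶜ := by
        rintro _ ⟨s, hs, rfl⟩; exact hmeet s hs
      have hpre : IsPreconnected (γ '' Icc 0 L) :=
        isPreconnected_Icc.image _ hγ.continuousOn
      have humem : u ∈ γ '' Icc 0 L := ⟨L, ⟨hL0, le_refl L⟩, hγL⟩
      have hsub : γ '' Icc 0 L ⊆ connectedComponentIn Kᶜ u :=
        hpre.subset_connectedComponentIn humem himg
      have heq : connectedComponentIn Kᶜ x₁ = connectedComponentIn Kᶜ u :=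
        connectedComponentIn_eq (hU ▸ hu)
      have : x ∈ U := by
        rw [hU, heq]
        exact hsub ⟨0, ⟨le_refl 0, hL0⟩, hγ0⟩
      exact hxU this
  by_contra hcon
  push_neg at hcon
  obtain ⟨u, huU, hud⟩ := infDist_lt_iff hUne |>.1 hcon
  exact absurd (key u huU) (not_le.2 hud)

lemma main_aux {X : Type*} [MetricSpace X] [MeasurableSpace X] [BorelSpace X]
    [ProperSpace X] [ConnectedSpace X]
    (μ : Measure X)
    (hball : ∀ (x : X) (r : ℝ), 0 < r → 0 < μ (ball x r) ∧ μ (ball x r) < ⊤)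
    (hlen : IsLengthSpace X)
    {K : Set X} (hK : IsCompact K) {x₁ : X} (hx₁ : x₁ ∈ Kᶜ)
    {U : Set X} (hU : U = connectedComponentIn Kᶜ x₁) (hUunb : ¬ IsBounded U)
    {V : Set X} (hVconn : IsConnected V) (hVunb : ¬ IsBounded V)
    (hVU : ∀ z ∈ V, z ∉ U) (hVK : ∀ z ∈ V, z ∉ K)
    {r : ℝ} (hr : 0 < r) {a : ℝ≥0∞} (ha : 0 < a) (hba : ∀ x : X, a ≤ μ (ball x r))
    (p : ℝ) (hp : 1 ≤ p) :
    DirichletNeNewtonPlusReal p μ := by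
  have hUne : U.Nonempty := ⟨x₁, hU ▸ mem_connectedComponentIn hx₁⟩
  have hUconn : IsPreconnected U := by
    rw [hU]; exact (isConnected_connectedComponentIn_iff.2 hx₁).isPreconnected
  obtain ⟨v₀, hv₀⟩ := hVconn.nonempty
  -- K is nonempty
  have hKne : K.Nonempty := by
    by_contra hKe
    rw [not_nonempty_iff_eq_empty] at hKe
    have : U = univ := by
      rw [hU, hKe, compl_empty, connectedComponentIn_univ,
        PreconnectedSpace.connectedComponent_eq_univ]
    exact hVU v₀ hv₀ (this ▸ mem_univ v₀)
  obtain ⟨o, ho⟩ := hKne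
  obtain ⟨M₀, hM₀⟩ := hK.isBounded.subset_closedBall o
  set M := max M₀ 0 with hMdef
  have hM : K ⊆ closedBall o M :=
    hM₀.trans (closedBall_subset_closedBall (le_max_left _ _))
  have hM0 : 0 ≤ M := le_max_right _ _
  set R := 4 * r with hRdef
  have hR : 0 < R := by positivity
  set f : X → ℝ := fun x => max 0 (1 - infDist x U / R) with hfdef
  have hf_cont : Continuous f :=
    continuous_const.max (continuous_const.sub ((continuous_infDist_pt U).div_const R))
  have hf1 : ∀ x ∈ U, f x = 1 := by
    intro x hx; simp [hfdef, infDist_zero_of_mem hx]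
  have hfle1 : ∀ x, f x ≤ 1 := by
    intro x
    have h1 : 0 ≤ infDist x U / R := div_nonneg infDist_nonneg hR.le
    simp only [hfdef]
    apply max_le (by norm_num) (by linarith)
  have hf0 : ∀ x, f x ∈ Icc (0:ℝ) 1 := fun x => ⟨le_max_left _ _, hfle1 x⟩
  have hf0' : ∀ x, R ≤ infDist x U → f x = 0 := by
    intro x hx
    have : 1 - infDist x U / R ≤ 0 := by
      have : 1 ≤ infDist x U / R := (one_le_div hR).2 hx
      linarith
    simp only [hfdef]
    exact max_eq_left this
  have hKlow : ∀ x : X, dist x o - M ≤ infDist x K := by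
    intro x
    by_contra hcon
    push_neg at hcon
    obtain ⟨q, hqK, hq⟩ := (infDist_lt_iff ⟨o, ho⟩).1 hcon
    have h1 : dist q o ≤ M := hM hqK
    have h2 : dist x o ≤ dist x q + dist q o := dist_triangle x q o
    linarith
  have hfar : ∀ x : X, x ∉ U → x ∉ K → dist x o - M ≤ infDist x U := fun x hxU hxK =>
    (hKlow x).trans (infDist_K_le_infDist_U hlen hU hUne hxU)
  set Z := closedBall o (M + R + 1) with hZdef
  have hZclosed : IsClosed Z := isClosed_closedBall
  have hZm : MeasurableSet Z := hZclosed.measurableSet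
  have hZout : ∀ x, x ∉ Z → f x = 0 ∨ f x = 1 := by
    intro x hx
    by_cases hxU : x ∈ U
    · exact Or.inr (hf1 x hxU)
    · refine Or.inl (hf0' x ?_)
      have hxK : x ∉ K := fun h =>
        hx (closedBall_subset_closedBall (by linarith) (hM h))
      have hxo : M + R + 1 < dist x o := by
        by_contra hcon
        push_neg at hcon
        exact hx (mem_closedBall.2 hcon)
      have := hfar x hxU hxK
      linarith
  set g : X → ℝ≥0∞ := Z.indicator (fun _ => ENNReal.ofReal (1/R)) with hgdef
  have hgmeas : Measurable g := measurable_const.indicator hZm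
  have hfLip : ∀ x y : X, |f x - f y| ≤ dist x y / R := by
    intro x y
    have h1 : |f x - f y| ≤ |(1 - infDist x U / R) - (1 - infDist y U / R)| := by
      have := abs_max_sub_max_le_abs (1 - infDist x U / R) (1 - infDist y U / R) 0
      simpa [hfdef, max_comm] using this
    have h2 : |(1 - infDist x U / R) - (1 - infDist y U / R)|
        = |infDist y U - infDist x U| / R := by
      have he : (1 - infDist x U / R) - (1 - infDist y U / R)
          = (infDist y U - infDist x U)/R := by ring
      rw [he, abs_div, abs_of_pos hR]
    have h3 : |infDist y U - infDist x U| ≤ dist y x := by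
      have := (lipschitz_infDist_pt U).dist_le_mul y x
      rw [NNReal.coe_one, one_mul, Real.dist_eq] at this
      exact this
    calc |f x - f y| ≤ |infDist y U - infDist x U| / R := by rw [← h2]; exact h1
      _ ≤ dist y x / R := by gcongr
      _ = dist x y / R := by rw [dist_comm]
  have hUG : IsUpperGradient g f := by
    intro L γ hL hγ
    set T := Icc 0 L ∩ γ ⁻¹' Z with hTdef
    have hTc : IsClosed T :=
      hγ.continuousOn.preimage_isClosed_of_isClosed isClosed_Icc hZclosed
    have hTsub : T ⊆ Icc 0 L := inter_subset_left
    have hcont : ContinuousOn (fun t => f (γ t)) (Icc 0 L) :=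
      hf_cont.comp_continuousOn hγ.continuousOn
    have hLip' : ∀ s ∈ Icc (0:ℝ) L, ∀ t ∈ Icc (0:ℝ) L,
        |f (γ t) - f (γ s)| ≤ |t - s| / R := by
      intro s hs t ht
      refine (hfLip (γ t) (γ s)).trans ?_
      have := hγ.dist_le_mul t ht s hs
      rw [NNReal.coe_one, one_mul, Real.dist_eq] at this
      gcongr
    have hconst : ∀ s t, s ∈ Icc (0:ℝ) L → t ∈ Icc (0:ℝ) L → s ≤ t →
        Ioo s t ∩ T = ∅ → f (γ s) = f (γ t) := by
      intro s t hs ht hst hIoo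
      rcases eq_or_lt_of_le hst with rfl | hlt
      · rfl
      have hsubI : Ioo s t ⊆ Icc 0 L := fun w hw =>
        ⟨hs.1.trans hw.1.le, hw.2.le.trans ht.2⟩
      have hvals : ∀ u ∈ Ioo s t, f (γ u) = 0 ∨ f (γ u) = 1 := by
        intro u hu
        have huIcc : u ∈ Icc (0:ℝ) L := hsubI hu
        have hnz : γ u ∉ Z := by
          intro hz
          have : u ∈ Ioo s t ∩ T := ⟨hu, huIcc, hz⟩
          rw [hIoo] at this
          exact this
        exact hZout _ hnz
      set v := f (γ ((s+t)/2)) with hv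
      have hmid : (s+t)/2 ∈ Ioo s t := ⟨by linarith, by linarith⟩
      have hall : ∀ u ∈ Ioo s t, f (γ u) = v := by
        intro u hu
        by_contra hne
        have hIm : IsPreconnected ((fun w => f (γ w)) '' Ioo s t) :=
          isPreconnected_Ioo.image _ (hcont.mono hsubI)
        have h01 : (1/2 : ℝ) ∈ (fun w => f (γ w)) '' Ioo s t := by
          rcases hvals u hu with h0 | h1
          · rcases hvals _ hmid with hv0 | hv1
            · exact absurd (h0.trans hv0.symm) hne
            · exact hIm.Icc_subset ⟨u, hu, h0⟩ ⟨_, hmid, hv1⟩ ⟨by norm_num, by norm_num⟩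
          · rcases hvals _ hmid with hv0 | hv1
            · exact hIm.Icc_subset ⟨_, hmid, hv0⟩ ⟨u, hu, h1⟩ ⟨by norm_num, by norm_num⟩
            · exact absurd (h1.trans hv1.symm) hne
        obtain ⟨w, hw, hw2⟩ := h01
        have hw2' : f (γ w) = 1/2 := hw2
        rcases hvals w hw with h | h <;> rw [h] at hw2' <;> norm_num at hw2'
      have hends : ∀ e, e ∈ Icc (0:ℝ) L → (𝓝[Ioo s t] e).NeBot → f (γ e) = v := by
        intro e he hnb
        have h1 : Tendsto (fun u => f (γ u)) (𝓝[Ioo s t] e) (𝓝 (f (γ e))) :=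
          (hcont e he).mono hsubI
        have h2 : Tendsto (fun u => f (γ u)) (𝓝[Ioo s t] e) (𝓝 v) := by
          apply Tendsto.congr' _ tendsto_const_nhds
          filter_upwards [self_mem_nhdsWithin] with w hw
          exact (hall w hw).symm
        exact tendsto_nhds_unique h1 h2
      have hnb_s : (𝓝[Ioo s t] s).NeBot := by
        rw [← mem_closure_iff_nhdsWithin_neBot, closure_Ioo hlt.ne]
        exact ⟨le_refl s, hlt.le⟩
      have hnb_t : (𝓝[Ioo s t] t).NeBot := by
        rw [← mem_closure_iff_nhdsWithin_neBot, closure_Ioo hlt.ne]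
        exact ⟨hlt.le, le_refl t⟩
      rw [hends s hs hnb_s, hends t ht hnb_t]
    have hcore := ug_core hL hR hcont hLip' hTc hTsub hconst
    have hint : ∫⁻ t in Icc 0 L, g (γ t) = ENNReal.ofReal (1/R) * volume T := by
      have heq : ∀ t ∈ Icc (0:ℝ) L,
          g (γ t) = T.indicator (fun _ => ENNReal.ofReal (1/R)) t := by
        intro t ht
        by_cases hz : γ t ∈ Z
        · have hmem : t ∈ T := ⟨ht, hz⟩
          rw [hgdef, Set.indicator_of_mem hz, Set.indicator_of_mem hmem]
        · have hmem : t ∉ T := fun hc => hz hc.2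
          rw [hgdef, Set.indicator_of_notMem hz, Set.indicator_of_notMem hmem]
      rw [setLIntegral_congr_fun measurableSet_Icc heq,
        lintegral_indicator hTc.measurableSet, setLIntegral_const,
        Measure.restrict_apply hTc.measurableSet, inter_eq_left.2 hTsub]
    exact hcore.trans_eq hint.symm
  have hgint : (∫⁻ x, g x ^ p ∂μ) < ⊤ := by
    have hgeq : ∀ x, g x ^ p = Z.indicator (fun _ => ENNReal.ofReal (1/R) ^ p) x := by
      intro x
      by_cases hx : x ∈ Z
      · rw [hgdef, Set.indicator_of_mem hx, Set.indicator_of_mem hx]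
      · rw [hgdef, Set.indicator_of_notMem hx, Set.indicator_of_notMem hx,
          ENNReal.zero_rpow_of_pos (by linarith : (0:ℝ) < p)]
    rw [lintegral_congr hgeq, lintegral_indicator hZm, setLIntegral_const]
    have hμZ : μ Z < ⊤ := by
      refine lt_of_le_of_lt (measure_mono ?_) (hball o (M + R + 2) (by positivity)).2
      exact closedBall_subset_ball (by linarith)
    exact ENNReal.mul_lt_top (ENNReal.rpow_lt_top_of_nonneg (by linarith)
      ENNReal.ofReal_ne_top) hμZ
  have hnat1 : ∀ i j : ℕ, i ≠ j → (1:ℝ) ≤ |(i:ℝ) - (j:ℝ)| := by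
    intro i j hij
    have h1 : (1:ℤ) ≤ |(i:ℤ) - (j:ℤ)| :=
      Int.one_le_abs (sub_ne_zero.2 (fun h => hij (by exact_mod_cast h)))
    have h2 : (((|(i:ℤ) - (j:ℤ)|:ℤ)):ℝ) = |(i:ℝ) - (j:ℝ)| := by push_cast; ring_nf
    calc (1:ℝ) = ((1:ℤ):ℝ) := by norm_num
      _ ≤ (((|(i:ℤ) - (j:ℤ)|:ℤ)):ℝ) := by exact_mod_cast h1
      _ = |(i:ℝ) - (j:ℝ)| := h2
  have key : ∀ (w : ℕ → X), (∀ i j, i ≠ j → 2*r ≤ dist (w i) (w j)) → ∀ (c : ℝ),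
      (∀ n, ∀ x ∈ ball (w n) r, 1/4 ≤ |f x - c|) →
      (∫⁻ x, ENNReal.ofReal |f x - c| ^ p ∂μ) = ⊤ := by
    intro w hw c hlow
    set S := ⋃ n, ball (w n) r with hSdef
    have hdisj : Pairwise (Function.onFun Disjoint fun n => ball (w n) r) := fun i j hij =>
      Metric.ball_disjoint_ball (by linarith [hw i j hij])
    have hSmeas : μ S = ⊤ := by
      refine top_le_iff.1 ?_
      calc (⊤:ℝ≥0∞) = ∑' (_:ℕ), a := (ENNReal.tsum_const_eq_top_of_ne_zero ha.ne').symm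
        _ ≤ ∑' n, μ (ball (w n) r) := ENNReal.tsum_le_tsum (fun n => hba (w n))
        _ = μ S := (measure_iUnion hdisj (fun n => measurableSet_ball)).symm
    set C := ENNReal.ofReal (1/4) ^ p with hCdef
    have hC0 : C ≠ 0 := by
      refine (ENNReal.rpow_pos (ENNReal.ofReal_pos.2 (by norm_num)) ENNReal.ofReal_ne_top).ne'
    have hFmeas : Measurable fun x => ENNReal.ofReal |f x - c| ^ p :=
      ((hf_cont.sub continuous_const).abs.measurable.ennreal_ofReal).pow measurable_const
    refine top_le_iff.1 ?_
    calc (⊤:ℝ≥0∞) = C * μ S := by rw [hSmeas, ENNReal.mul_top hC0]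
      _ = ∫⁻ _ in S, C ∂μ := (setLIntegral_const S C).symm
      _ ≤ ∫⁻ x in S, ENNReal.ofReal |f x - c| ^ p ∂μ := by
          refine setLIntegral_mono hFmeas ?_
          intro x hx
          obtain ⟨n, hn⟩ := mem_iUnion.1 hx
          exact ENNReal.rpow_le_rpow (ENNReal.ofReal_le_ofReal (hlow n x hn)) (by linarith)
      _ ≤ ∫⁻ x, ENNReal.ofReal |f x - c| ^ p ∂μ := setLIntegral_le_lintegral _ _
  refine ⟨f, hf_cont.measurable, ⟨g, hgmeas, hUG, hgint⟩, ?_⟩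
  intro c
  by_cases hc : c ≤ 1/2
  · -- use far points in U
    have hy : ∀ n : ℕ, ∃ y ∈ U, dist x₁ y = (2*r+1)*n := by
      intro n
      exact exists_far_point hUconn (hU ▸ mem_connectedComponentIn hx₁) hUunb
        (by positivity)
    choose y hyU hyd using hy
    refine key y ?_ c ?_
    · intro i j hij
      have h1 : |dist x₁ (y i) - dist x₁ (y j)| ≤ dist (y i) (y j) := by
        rw [dist_comm x₁ (y i), dist_comm x₁ (y j)]
        exact abs_dist_sub_le _ _ _
      have h2 : |dist x₁ (y i) - dist x₁ (y j)| = (2*r+1) * |(i:ℝ) - (j:ℝ)| := by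
        rw [hyd, hyd, ← mul_sub, abs_mul, abs_of_pos (by linarith)]
      have h3 := hnat1 i j hij
      nlinarith [abs_nonneg ((i:ℝ) - (j:ℝ))]
    · intro n x hx
      have h1 : infDist x U ≤ dist x (y n) := infDist_le_dist_of_mem (hyU n)
      have h2 : dist x (y n) < r := mem_ball.1 hx
      have h3 : infDist x U / R < 1/4 := by
        rw [div_lt_iff₀ hR]
        calc infDist x U < r := lt_of_le_of_lt h1 h2
          _ = 1/4 * R := by rw [hRdef]; ring
      have h4 : (3:ℝ)/4 ≤ f x := by
        have : (3:ℝ)/4 ≤ 1 - infDist x U / R := by linarith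
        exact this.trans (le_max_right _ _)
      calc (1:ℝ)/4 ≤ f x - c := by linarith
        _ ≤ |f x - c| := le_abs_self _
  · push_neg at hc
    have hz : ∀ n : ℕ, ∃ z ∈ V,
        dist v₀ z = dist v₀ o + M + R + r + 1 + (2*r+1)*n := by
      intro n
      refine exists_far_point hVconn.isPreconnected hv₀ hVunb ?_
      positivity
    choose z hzV hzd using hz
    refine key z ?_ c ?_
    · intro i j hij
      have h1 : |dist v₀ (z i) - dist v₀ (z j)| ≤ dist (z i) (z j) := by
        rw [dist_comm v₀ (z i), dist_comm v₀ (z j)]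
        exact abs_dist_sub_le _ _ _
      have h2 : |dist v₀ (z i) - dist v₀ (z j)| = (2*r+1) * |(i:ℝ) - (j:ℝ)| := by
        rw [hzd, hzd]
        have he : dist v₀ o + M + R + r + 1 + (2*r+1)*(i:ℝ) -
            (dist v₀ o + M + R + r + 1 + (2*r+1)*(j:ℝ)) = (2*r+1) * ((i:ℝ) - (j:ℝ)) := by
          ring
        rw [he, abs_mul, abs_of_pos (by linarith)]
      have h3 := hnat1 i j hij
      nlinarith [abs_nonneg ((i:ℝ) - (j:ℝ))]
    · intro n x hx
      have hzU : z n ∉ U := hVU _ (hzV n)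
      have hzK : z n ∉ K := hVK _ (hzV n)
      have h1 : dist (z n) o - M ≤ infDist (z n) U := hfar _ hzU hzK
      have h2 : dist v₀ (z n) ≤ dist v₀ o + dist o (z n) := dist_triangle _ _ _
      have h2' : dist o (z n) = dist (z n) o := dist_comm _ _
      have h3 : R + r ≤ infDist (z n) U := by
        have hn0 : (0:ℝ) ≤ (2*r+1)*n := by positivity
        rw [hzd] at h2
        linarith
      have h4 : infDist (z n) U ≤ infDist x U + dist (z n) x :=
        infDist_le_infDist_add_dist
      have h5 : dist (z n) x < r := by
        rw [dist_comm]; exact mem_ball.1 hx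
      have h6 : R ≤ infDist x U := by linarith
      have h7 : f x = 0 := hf0' x h6
      rw [h7, zero_sub, abs_neg, abs_of_pos (by linarith)]
      linarith

lemma ends_extract {X : Type*} [MetricSpace X] (F G : ℕ → Set X)
    (hF : IsEndAtInfinity F) (hG : IsEndAtInfinity G) {j₀ : ℕ}
    (hnot : ∀ k, ¬ G k ⊆ F j₀) :
    ∃ (K : Set X) (x₁ : X), IsCompact K ∧ x₁ ∈ Kᶜ ∧
      F j₀ = connectedComponentIn Kᶜ x₁ ∧ ¬ IsBounded (F j₀) ∧
      ∃ k, IsConnected (G k) ∧ ¬ IsBounded (G k) ∧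
        (∀ z ∈ G k, z ∉ F j₀) ∧ (∀ z ∈ G k, z ∉ K) := by
  obtain ⟨K, hK, hFunb, x₁, hx₁F, hFeq⟩ := hF.2.2.2 j₀
  have hx₁c : x₁ ∈ Kᶜ := by
    rw [hFeq] at hx₁F
    exact connectedComponentIn_subset _ _ hx₁F
  have hk : ∃ k, ∀ z ∈ G k, z ∉ K := by
    by_contra hcon
    push_neg at hcon
    set C : ℕ → Set X := fun n => K ∩ closure (G (n+1)) with hC
    have hCne : ∀ n, (C n).Nonempty := by
      intro n
      obtain ⟨z, hz, hzK⟩ := hcon (n+2)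
      exact ⟨z, hzK, subset_closure (hG.1 (n+1) (subset_closure hz))⟩
    have hCnested : ∀ n, C (n+1) ⊆ C n :=
      fun n => inter_subset_inter_right _ ((hG.1 (n+1)).trans subset_closure)
    have hCclosed : ∀ n, IsClosed (C n) := fun n => hK.isClosed.inter isClosed_closure
    have hCcomp : IsCompact (C 0) := hK.inter_right isClosed_closure
    obtain ⟨z, hz⟩ := IsCompact.nonempty_iInter_of_sequence_nonempty_isCompact_isClosed
      C hCnested hCne hCcomp hCclosed
    have hmem : z ∈ ⋂ j, G j :=
      mem_iInter.2 fun j => hG.1 j ((mem_iInter.1 hz) j).2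
    rw [hG.2.2.1] at hmem
    exact hmem
  obtain ⟨k, hkK⟩ := hk
  obtain ⟨K₂, hK₂, hGunb, x₂, hx₂, hGeq⟩ := hG.2.2.2 k
  have hx₂c : x₂ ∈ K₂ᶜ := by
    have := hx₂
    rw [hGeq] at this
    exact connectedComponentIn_subset _ _ this
  have hGconn : IsConnected (G k) := by
    rw [hGeq]
    exact isConnected_connectedComponentIn_iff.2 hx₂c
  have hdisj : ∀ z ∈ G k, z ∉ F j₀ := by
    intro z hz hzF
    refine hnot k ?_
    have hsub : G k ⊆ connectedComponentIn Kᶜ z :=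
      hGconn.isPreconnected.subset_connectedComponentIn hz (fun w hw => hkK w hw)
    have heq2 : connectedComponentIn Kᶜ x₁ = connectedComponentIn Kᶜ z :=
      connectedComponentIn_eq (by rw [← hFeq]; exact hzF)
    rw [hFeq, heq2]
    exact hsub
  exact ⟨K, x₁, hK, hx₁c, hFeq, hFunb, k, hGconn, hGunb, hdisj, hkK⟩

/-- under the standing assumptions, if `X` is a length space with two ends at
infinity that are not the same, and `inf_x μ(B(x,r)) > 0` for some `r > 0`, then for each
`1 ≤ p < ∞` one has `D^{1,p}(X) ≠ N^{1,p}(X) + ℝ`. -/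
theorem statement2 {X : Type*} [MetricSpace X] [MeasurableSpace X] [BorelSpace X]
    [ProperSpace X] [ConnectedSpace X]
    (μ : Measure X) (hXinf : μ Set.univ = ⊤)
    (hball : ∀ (x : X) (r : ℝ), 0 < r → 0 < μ (ball x r) ∧ μ (ball x r) < ⊤)
    (hlen : IsLengthSpace X)
    (F G : ℕ → Set X) (hF : IsEndAtInfinity F) (hG : IsEndAtInfinity G)
    (hFG : ¬ SameEnd F G)
    (hinf : ∃ r : ℝ, 0 < r ∧ ∃ a : ℝ≥0∞, 0 < a ∧ ∀ x : X, a ≤ μ (ball x r))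
    (p : ℝ) (hp : 1 ≤ p) :
    DirichletNeNewtonPlusReal p μ := by
  obtain ⟨r, hr, a, ha, hba⟩ := hinf
  have hFG' : ∃ j, (∀ i, ¬ F i ⊆ G j) ∨ (∀ k, ¬ G k ⊆ F j) := by
    by_contra hcon
    push_neg at hcon
    exact hFG hcon
  obtain ⟨j₀, hcase⟩ := hFG'
  rcases hcase with hcase | hcase
  · obtain ⟨K, x₁, hK, hx₁, heq, hUunb, k, hVconn, hVunb, hVU, hVK⟩ :=
      ends_extract G F hG hF hcase
    exact main_aux μ hball hlen hK hx₁ heq hUunb hVconn hVunb hVU hVK hr ha hba p hp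
  · obtain ⟨K, x₁, hK, hx₁, heq, hUunb, k, hVconn, hVunb, hVU, hVK⟩ :=
      ends_extract F G hF hG hcase
    exact main_aux μ hball hlen hK hx₁ heq hUunb hVconn hVunb hVU hVK hr ha hba p hp
end

section
/- Let (X,d,μ) satisfy the standing assumptions and suppose μ is globally doubling, i.e., there is C_d ≥ 1 with μ(B(x,2r)) ≤ C_d·μ(B(x,r)) for all x ∈ X and r > 0. Suppose there exists a point x₀ ∈ X such that the function r ↦ μ(B(x₀,r)) is continuous on (0,∞). Then for every 1 ≤ p < ∞ there exists a locally Lipschitz function f : X → ℝ such that ∫_X (lip f)^p dμ < ∞ but ∫_X |f − c|^p dμ = ∞ for every c ∈ ℝ. -/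
open MeasureTheory Metric Set Filter
open scoped ENNReal NNReal Topology

/-- The pointwise Lipschitz constant `(lip f)(x) = limsup_{y → x, y ≠ x} |f y - f x| / d(y,x)`,
valued in `[0,∞]`. -/
noncomputable def lipConst {X : Type*} [MetricSpace X] (f : X → ℝ) (x : X) : ℝ≥0∞ :=
  Filter.limsup (fun y => ENNReal.ofReal (|f y - f x| / dist y x)) (nhdsWithin x {x}ᶜ)

/-- Piece `k`: goes linearly from 0 at `2^k` to 1 at `2^(k+1)`. -/
noncomputable def pieceFn (k : ℕ) (r : ℝ) : ℝ := min 1 (max 0 ((r - 2 ^ k) / 2 ^ k))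

/-- The radial profile: `phiFn t r = - ∑ₖ t k * pieceFn k r` (a finite sum at each `r`). -/
noncomputable def phiFn (t : ℕ → ℝ) (r : ℝ) : ℝ := -∑' k, t k * pieceFn k r

lemma pieceFn_nonneg (k : ℕ) (r : ℝ) : 0 ≤ pieceFn k r :=
  le_min zero_le_one (le_max_left _ _)

lemma pieceFn_le_one (k : ℕ) (r : ℝ) : pieceFn k r ≤ 1 := min_le_left _ _

lemma pieceFn_eq_zero {k : ℕ} {r : ℝ} (h : r ≤ 2 ^ k) : pieceFn k r = 0 := by
  have h2 : (0:ℝ) < 2 ^ k := by positivity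
  have : (r - 2 ^ k) / 2 ^ k ≤ 0 := div_nonpos_of_nonpos_of_nonneg (by linarith) (le_of_lt h2)
  simp [pieceFn, max_eq_left this, min_eq_right (zero_le_one)]

lemma pieceFn_eq_one {k : ℕ} {r : ℝ} (h : 2 ^ (k + 1) ≤ r) : pieceFn k r = 1 := by
  have h2 : (0:ℝ) < 2 ^ k := by positivity
  have h1 : (1:ℝ) ≤ (r - 2 ^ k) / 2 ^ k := by
    rw [le_div_iff₀ h2]
    have : (2:ℝ) ^ (k+1) = 2 * 2 ^ k := by ring
    linarith [h.trans_eq' this]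
  have hm : max 0 ((r - 2 ^ k) / 2 ^ k) = (r - 2 ^ k) / 2 ^ k :=
    max_eq_right (le_trans zero_le_one h1)
  simp [pieceFn, hm, min_eq_left h1]

lemma abs_pieceFn_sub (k : ℕ) (r r' : ℝ) :
    |pieceFn k r - pieceFn k r'| ≤ |r - r'| / 2 ^ k := by
  have h2 : (0:ℝ) < 2 ^ k := by positivity
  have h1 : |pieceFn k r - pieceFn k r'| ≤
      |(r - 2 ^ k) / 2 ^ k - (r' - 2 ^ k) / 2 ^ k| := by
    refine (abs_min_sub_min_le_max _ _ _ _).trans ?_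
    simp only [sub_self, abs_zero]
    refine max_le (le_trans (by simp) (abs_nonneg _)) ?_
    refine (abs_max_sub_max_le_max _ _ _ _).trans ?_
    simp [abs_nonneg]
  calc |pieceFn k r - pieceFn k r'| ≤ |(r - 2 ^ k) / 2 ^ k - (r' - 2 ^ k) / 2 ^ k| := h1
    _ = |r - r'| / 2 ^ k := by
        rw [div_sub_div_same, abs_div, abs_of_pos h2]
        ring_nf

lemma pieceFn_term_eq_zero (t : ℕ → ℝ) {N j : ℕ} {r : ℝ} (hr : r ≤ 2 ^ N) (hj : j ∉ Finset.range N) :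
    t j * pieceFn j r = 0 := by
  have : r ≤ 2 ^ j := hr.trans (pow_le_pow_right₀ one_le_two (by simpa using hj))
  rw [pieceFn_eq_zero this, mul_zero]

lemma phiFn_summand_summable (t : ℕ → ℝ) {r : ℝ} {N : ℕ} (hr : r ≤ 2 ^ N) :
    Summable (fun k => t k * pieceFn k r) :=
  summable_of_ne_finset_zero (s := Finset.range N) (fun _ hb => pieceFn_term_eq_zero t hr hb)

/-- finite formula for `phiFn`. -/
lemma phiFn_eq (t : ℕ → ℝ) {r : ℝ} {N : ℕ} (hr : r ≤ 2 ^ N) :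
    phiFn t r = -∑ j ∈ Finset.range N, t j * pieceFn j r := by
  rw [phiFn, tsum_eq_sum (s := Finset.range N) (fun _ hb => pieceFn_term_eq_zero t hr hb)]

lemma exists_pow_ge (r : ℝ) : ∃ N : ℕ, r ≤ 2 ^ N := by
  obtain ⟨N, hN⟩ := pow_unbounded_of_one_lt r (one_lt_two (α := ℝ))
  exact ⟨N, hN.le⟩

lemma phiFn_le (t : ℕ → ℝ) (ht : ∀ k, 0 ≤ t k) {r : ℝ} {m : ℕ} (hm : (2:ℝ) ^ m ≤ r) :
    phiFn t r ≤ -∑ j ∈ Finset.range m, t j := by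
  obtain ⟨N, hN⟩ := exists_pow_ge r
  rw [phiFn, neg_le_neg_iff]
  have h1 : ∑ j ∈ Finset.range m, t j = ∑ j ∈ Finset.range m, t j * pieceFn j r := by
    refine Finset.sum_congr rfl (fun j hj => ?_)
    rw [pieceFn_eq_one (le_trans (pow_le_pow_right₀ one_le_two (Finset.mem_range.1 hj)) hm),
      mul_one]
  rw [h1]
  exact Summable.sum_le_tsum _ (fun i _ => mul_nonneg (ht i) (pieceFn_nonneg i r))
    (phiFn_summand_summable t hN)

lemma phiFn_ge (t : ℕ → ℝ) (ht : ∀ k, 0 ≤ t k) {r : ℝ} {N : ℕ} (hr : r ≤ 2 ^ N) :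
    -∑ j ∈ Finset.range N, t j ≤ phiFn t r := by
  rw [phiFn_eq t hr, neg_le_neg_iff]
  exact Finset.sum_le_sum fun j _ => (mul_le_of_le_one_right (ht j) (pieceFn_le_one j r))

lemma phiFn_nonpos (t : ℕ → ℝ) (ht : ∀ k, 0 ≤ t k) (r : ℝ) : phiFn t r ≤ 0 := by
  obtain ⟨N, hN⟩ := exists_pow_ge r
  rw [phiFn_eq t hN, neg_nonpos]
  exact Finset.sum_nonneg fun j _ => mul_nonneg (ht j) (pieceFn_nonneg j r)

lemma phiFn_ge_neg_tsum (t : ℕ → ℝ) (ht : ∀ k, 0 ≤ t k) (hsum : Summable t) (r : ℝ) :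
    -(∑' k, t k) ≤ phiFn t r := by
  obtain ⟨N, hN⟩ := exists_pow_ge r
  rw [phiFn, neg_le_neg_iff]
  exact Summable.tsum_le_tsum (fun k => mul_le_of_le_one_right (ht k) (pieceFn_le_one k r))
    (phiFn_summand_summable t hN) hsum

lemma phiFn_zero (t : ℕ → ℝ) {r : ℝ} (hr : r ≤ 1) : phiFn t r = 0 := by
  rw [phiFn_eq t (N := 0) (by simpa using hr)]
  simp

/-- Key Lipschitz estimate on an interval `(c, 2^N]`. -/
lemma phiFn_lip (t : ℕ → ℝ) (ht : ∀ k, 0 ≤ t k) (N : ℕ) (c : ℝ) {r r' : ℝ}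
    (hr : c < r) (hr' : c < r') (hrN : r ≤ 2 ^ N) (hr'N : r' ≤ 2 ^ N) :
    |phiFn t r - phiFn t r'| ≤
      (∑ j ∈ Finset.range N, if c < 2 ^ (j + 1) then t j / 2 ^ j else 0) * |r - r'| := by
  rw [phiFn_eq t hrN, phiFn_eq t hr'N, neg_sub_neg, ← Finset.sum_sub_distrib,
    Finset.sum_mul]
  refine (Finset.abs_sum_le_sum_abs _ _).trans (Finset.sum_le_sum fun j _ => ?_)
  by_cases hc : c < 2 ^ (j + 1)
  · rw [if_pos hc, ← mul_sub, abs_mul, abs_of_nonneg (ht j)]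
    have h1 : |pieceFn j r' - pieceFn j r| ≤ |r - r'| / 2 ^ j :=
      (abs_pieceFn_sub j r' r).trans_eq (by rw [abs_sub_comm r' r])
    calc t j * |pieceFn j r' - pieceFn j r| ≤ t j * (|r - r'| / 2 ^ j) :=
          mul_le_mul_of_nonneg_left h1 (ht j)
      _ = t j / 2 ^ j * |r - r'| := by ring
  · rw [if_neg hc, zero_mul]
    push_neg at hc
    rw [pieceFn_eq_one (hc.trans hr.le), pieceFn_eq_one (hc.trans hr'.le)]
    simp

lemma lipConst_le {X : Type*} [MetricSpace X] {f : X → ℝ} {x : X} {L δ : ℝ} (hδ : 0 < δ)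
    (h : ∀ y ∈ ball x δ, |f y - f x| ≤ L * dist y x) : lipConst f x ≤ ENNReal.ofReal L := by
  apply Filter.limsup_le_of_le (by isBoundedDefault)
  have hb : ∀ᶠ y in 𝓝[{x}ᶜ] x, y ∈ ball x δ :=
    eventually_nhdsWithin_of_eventually_nhds
      (eventually_of_mem (ball_mem_nhds x hδ) (fun _ hy => hy))
  filter_upwards [hb, self_mem_nhdsWithin] with y hy hyx
  have hd : 0 < dist y x := dist_pos.2 hyx
  refine ENNReal.ofReal_le_ofReal ?_
  rw [div_le_iff₀ hd]
  exact h y hy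

lemma phiComp_lipschitzOnWith {X : Type*} [MetricSpace X] (t : ℕ → ℝ) (ht : ∀ k, 0 ≤ t k)
    (x₀ : X) (N : ℕ) (c : ℝ) (s : Set X)
    (hs : ∀ y ∈ s, c < dist y x₀ ∧ dist y x₀ ≤ 2 ^ N) :
    ∀ y ∈ s, ∀ y' ∈ s, |phiFn t (dist y x₀) - phiFn t (dist y' x₀)| ≤
      (∑ j ∈ Finset.range N, if c < 2 ^ (j + 1) then t j / 2 ^ j else 0) * dist y y' := by
  intro y hy y' hy'
  have h1 := phiFn_lip t ht N c (r := dist y x₀) (r' := dist y' x₀)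
    ((hs y hy).1) ((hs y' hy').1) (hs y hy).2 (hs y' hy').2
  refine h1.trans (mul_le_mul_of_nonneg_left ?_ ?_)
  · exact abs_dist_sub_le y y' x₀
  · exact Finset.sum_nonneg fun j _ => by
      split <;> [exact div_nonneg (ht j) (by positivity); exact le_refl 0]

lemma phiComp_locallyLipschitz {X : Type*} [MetricSpace X] (t : ℕ → ℝ) (ht : ∀ k, 0 ≤ t k)
    (x₀ : X) : LocallyLipschitz (fun x => phiFn t (dist x x₀)) := by
  intro x
  obtain ⟨N, hN⟩ := exists_pow_ge (dist x x₀ + 1)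
  set L : ℝ := ∑ j ∈ Finset.range N, if (-1:ℝ) < 2 ^ (j + 1) then t j / 2 ^ j else 0 with hL
  have hL0 : 0 ≤ L := Finset.sum_nonneg fun j _ => by
    split <;> [exact div_nonneg (ht j) (by positivity); exact le_refl 0]
  refine ⟨L.toNNReal, ball x 1, ball_mem_nhds x one_pos, ?_⟩
  rw [lipschitzOnWith_iff_dist_le_mul]
  intro y hy y' hy'
  have key := phiComp_lipschitzOnWith t ht x₀ N (-1) (ball x 1)
    (fun z hz => ⟨by have := dist_nonneg (x := z) (y := x₀); linarith,
      by have h1 : dist z x₀ ≤ dist z x + dist x x₀ := dist_triangle z x x₀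
         have h2 : dist z x < 1 := mem_ball.1 hz
         linarith⟩) y hy y' hy'
  rw [Real.dist_eq]
  refine key.trans (mul_le_mul_of_nonneg_right ?_ dist_nonneg)
  rw [← hL]
  exact (Real.le_coe_toNNReal L)

lemma phiComp_continuous {X : Type*} [MetricSpace X] (t : ℕ → ℝ) (ht : ∀ k, 0 ≤ t k)
    (x₀ : X) : Continuous (fun x => phiFn t (dist x x₀)) :=
  (phiComp_locallyLipschitz t ht x₀).continuous

lemma exists_pow_interval {d : ℝ} (hd : 1 ≤ d) : ∃ k : ℕ, 2 ^ k ≤ d ∧ d < 2 ^ (k + 1) := by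
  classical
  have h : ∃ n : ℕ, d < 2 ^ n := pow_unbounded_of_one_lt d one_lt_two
  set n := Nat.find h with hn
  have hspec : d < 2 ^ n := Nat.find_spec h
  have hn0 : n ≠ 0 := by
    intro h0
    rw [h0] at hspec; simp at hspec; linarith
  obtain ⟨m, hm⟩ := Nat.exists_eq_succ_of_ne_zero hn0
  refine ⟨m, ?_, by rw [← Nat.succ_eq_add_one, ← hm]; exact hspec⟩
  by_contra hlt
  push_neg at hlt
  exact (Nat.find_min h (by omega : m < n)) hlt

/-- under the standing assumptions, if `μ` is globally doubling and
`r ↦ μ(B(x₀,r))` is continuous on `(0,∞)` for some `x₀`, then for every `1 ≤ p < ∞` there is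
a locally Lipschitz `f : X → ℝ` with `∫ (lip f)ᵖ dμ < ∞` but `∫ |f - c|ᵖ dμ = ∞` for every
`c ∈ ℝ`. -/
theorem statement7 {X : Type*} [MetricSpace X] [MeasurableSpace X] [BorelSpace X]
    [ProperSpace X] [ConnectedSpace X]
    (μ : Measure X) (hXinf : μ Set.univ = ⊤)
    (hball : ∀ (x : X) (r : ℝ), 0 < r → 0 < μ (ball x r) ∧ μ (ball x r) < ⊤)
    (Cd : ℝ) (hCd : 1 ≤ Cd)
    (hdoubling : ∀ (x : X) (r : ℝ), 0 < r →
      μ (ball x (2 * r)) ≤ ENNReal.ofReal Cd * μ (ball x r))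
    (x₀ : X) (hcont : ContinuousOn (fun r : ℝ => μ (ball x₀ r)) (Set.Ioi 0))
    (p : ℝ) (hp : 1 ≤ p) :
    ∃ f : X → ℝ, LocallyLipschitz f ∧ (∫⁻ x, lipConst f x ^ p ∂μ) < ⊤ ∧
      ∀ c : ℝ, (∫⁻ x, ENNReal.ofReal |f x - c| ^ p ∂μ) = ⊤ := by
  classical
  have hp0 : (0:ℝ) < p := lt_of_lt_of_le one_pos hp
  -- X is unbounded
  have hub : ∀ R : ℝ, ∃ z : X, R ≤ dist z x₀ := by
    intro R
    by_contra hcon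
    push_neg at hcon
    have hsub : (Set.univ : Set X) ⊆ ball x₀ (max R 1) := by
      intro z _
      exact mem_ball.2 (lt_of_lt_of_le (hcon z) (le_max_left _ _))
    have h1 : μ Set.univ ≤ μ (ball x₀ (max R 1)) := measure_mono hsub
    have h2 := (hball x₀ (max R 1) (lt_of_lt_of_le one_pos (le_max_right _ _))).2
    rw [hXinf] at h1
    exact absurd (lt_of_le_of_lt h1 h2) (lt_irrefl ⊤)
  -- every nonnegative real is realized as a distance from x₀
  have hdistex : ∀ r : ℝ, 0 ≤ r → ∃ y : X, dist y x₀ = r := by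
    intro r hr
    obtain ⟨z, hz⟩ := hub r
    have hconn : IsPreconnected (Set.range (fun w : X => dist w x₀)) := by
      rw [← Set.image_univ]
      exact (isPreconnected_univ (α := X)).image _
        ((continuous_id.dist continuous_const).continuousOn)
    have h0 : (0:ℝ) ∈ Set.range (fun w : X => dist w x₀) := ⟨x₀, dist_self x₀⟩
    have h1 : dist z x₀ ∈ Set.range (fun w : X => dist w x₀) := ⟨z, rfl⟩
    have := hconn.Icc_subset h0 h1 ⟨hr, hz⟩
    exact this
  -- annuli
  set A : ℕ → Set X := fun k => ball x₀ (2 ^ (k+1)) \ ball x₀ (2 ^ k) with hA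
  set a : ℕ → ℝ≥0∞ := fun k => μ (A k) with ha
  have hAmem : ∀ k (z : X), z ∈ A k ↔ (2:ℝ) ^ k ≤ dist z x₀ ∧ dist z x₀ < 2 ^ (k+1) := by
    intro k z
    simp only [hA, Set.mem_diff, mem_ball, not_lt]
    tauto
  have hAmeas : ∀ k, MeasurableSet (A k) := fun k =>
    measurableSet_ball.diff measurableSet_ball
  have hAdisj : Pairwise (Function.onFun Disjoint A) := by
    have key : ∀ k l : ℕ, k < l → Disjoint (A k) (A l) := by
      intro k l hkl
      rw [Set.disjoint_left]
      intro z hzk hzl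
      have h1 := (hAmem k z).1 hzk
      have h2 := (hAmem l z).1 hzl
      have : (2:ℝ) ^ (k+1) ≤ 2 ^ l := pow_le_pow_right₀ one_le_two hkl
      linarith [h1.2, h2.1]
    intro k l hkl
    rcases lt_or_gt_of_ne hkl with h | h
    · exact key k l h
    · exact (key l k h).symm
  -- small balls inside annuli
  have hsubball : ∀ k : ℕ, ∃ y : X, dist y x₀ = 3 * 2 ^ k / 2 ∧
      ball y (2 ^ k / 2) ⊆ A k := by
    intro k
    obtain ⟨y, hy⟩ := hdistex (3 * 2 ^ k / 2) (by positivity)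
    refine ⟨y, hy, fun z hz => ?_⟩
    have hzy : dist z y < 2 ^ k / 2 := mem_ball.1 hz
    have h1 : dist z x₀ ≤ dist z y + dist y x₀ := dist_triangle z y x₀
    have h2 : dist y x₀ ≤ dist y z + dist z x₀ := dist_triangle y z x₀
    rw [dist_comm y z] at h2
    rw [hAmem]
    constructor <;> [skip; skip] <;> rw [hy] at h1 h2
    · linarith
    · have : (2:ℝ) ^ (k+1) = 2 * 2 ^ k := by ring
      rw [this]; linarith
  have hapos : ∀ k, 0 < a k := by
    intro k
    obtain ⟨y, _, hsub⟩ := hsubball k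
    exact lt_of_lt_of_le (hball y (2 ^ k / 2) (by positivity)).1 (measure_mono hsub)
  have hafin : ∀ k, a k < ⊤ := by
    intro k
    exact lt_of_le_of_lt (measure_mono (Set.diff_subset)) (hball x₀ (2 ^ (k+1)) (by positivity)).2
  -- doubling constant
  set K : ℝ≥0∞ := (ENNReal.ofReal Cd) ^ 4 with hK
  have hCd1 : (1:ℝ≥0∞) ≤ ENNReal.ofReal Cd := by
    rw [← ENNReal.ofReal_one]
    exact ENNReal.ofReal_le_ofReal hCd
  have hK1 : (1:ℝ≥0∞) ≤ K := one_le_pow_of_one_le' hCd1 4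
  have hKtop : K ≠ ⊤ := by
    simp [hK, ENNReal.pow_ne_top, ENNReal.ofReal_ne_top]
  have hK0 : K ≠ 0 := by
    intro h; rw [h] at hK1; simp at hK1
  have h16 : ∀ (z : X) (r : ℝ), 0 < r → μ (ball z (16 * r)) ≤ K * μ (ball z r) := by
    intro z r hr
    set C := ENNReal.ofReal Cd
    calc μ (ball z (16 * r)) = μ (ball z (2 * (8 * r))) := by rw [show (16:ℝ)*r = 2*(8*r) by ring]
      _ ≤ C * μ (ball z (8 * r)) := hdoubling z (8*r) (by positivity)
      _ = C * μ (ball z (2 * (4 * r))) := by rw [show (8:ℝ)*r = 2*(4*r) by ring]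
      _ ≤ C * (C * μ (ball z (4 * r))) := mul_le_mul_right (hdoubling z (4*r) (by positivity)) _
      _ = C * (C * μ (ball z (2 * (2 * r)))) := by rw [show (4:ℝ)*r = 2*(2*r) by ring]
      _ ≤ C * (C * (C * μ (ball z (2 * r)))) := by
          exact mul_le_mul_right (mul_le_mul_right (hdoubling z (2*r) (by positivity)) _) _
      _ ≤ C * (C * (C * (C * μ (ball z r)))) := by
          exact mul_le_mul_right (mul_le_mul_right (mul_le_mul_right (hdoubling z r hr) _) _) _
      _ = K * μ (ball z r) := by rw [hK]; ring
  -- comparability of consecutive annuli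
  have hup : ∀ k, a (k+1) ≤ K * a k := by
    intro k
    obtain ⟨y, hy, hsub⟩ := hsubball k
    have h1 : A (k+1) ⊆ ball y (16 * (2 ^ k / 2)) := by
      intro z hz
      have h2 := ((hAmem (k+1) z).1 hz).2
      have h3 : dist z y ≤ dist z x₀ + dist x₀ y := dist_triangle z x₀ y
      rw [dist_comm x₀ y, hy] at h3
      have h4 : (2:ℝ) ^ (k+1+1) = 4 * 2 ^ k := by ring
      rw [h4] at h2
      have hpk : (0:ℝ) < 2 ^ k := by positivity
      exact mem_ball.2 (by linarith)
    calc a (k+1) ≤ μ (ball y (16 * (2 ^ k / 2))) := measure_mono h1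
      _ ≤ K * μ (ball y (2 ^ k / 2)) := h16 y _ (by positivity)
      _ ≤ K * a k := mul_le_mul_right (measure_mono hsub) K
  have hdown : ∀ k, a k ≤ K * a (k+1) := by
    intro k
    obtain ⟨y, hy, hsub⟩ := hsubball (k+1)
    have h1 : A k ⊆ ball y (16 * (2 ^ (k+1) / 2)) := by
      intro z hz
      have h2 := ((hAmem k z).1 hz).2
      have h3 : dist z y ≤ dist z x₀ + dist x₀ y := dist_triangle z x₀ y
      rw [dist_comm x₀ y, hy] at h3
      have h5 : (3:ℝ) * 2 ^ (k+1) / 2 = 3 * 2 ^ k := by ring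
      have h6 : (16:ℝ) * (2 ^ (k+1) / 2) = 16 * 2 ^ k := by ring
      rw [h5] at h3
      rw [h6]
      have h7 : (2:ℝ) ^ (k+1) = 2 * 2 ^ k := by ring
      rw [h7] at h2
      have hpk : (0:ℝ) < 2 ^ k := by positivity
      exact mem_ball.2 (by linarith)
    calc a k ≤ μ (ball y (16 * (2 ^ (k+1) / 2))) := measure_mono h1
      _ ≤ K * μ (ball y (2 ^ (k+1) / 2)) := h16 y _ (by positivity)
      _ ≤ K * a (k+1) := mul_le_mul_right (measure_mono hsub) K
  -- real sizes of annuli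
  set α : ℕ → ℝ := fun k => (a k).toReal with hα
  have hαpos : ∀ k, 0 < α k := fun k =>
    ENNReal.toReal_pos (ne_of_gt (hapos k)) (ne_of_lt (hafin k))
  have haeq : ∀ k, a k = ENNReal.ofReal (α k) := fun k =>
    (ENNReal.ofReal_toReal (ne_of_lt (hafin k))).symm
  -- slopes and increments
  set s : ℕ → ℝ := fun k => ((2:ℝ)⁻¹ ^ k / α k) ^ (1/p) with hs
  have hspos : ∀ k, 0 < s k := fun k =>
    Real.rpow_pos_of_pos (div_pos (by positivity) (hαpos k)) _
  set t : ℕ → ℝ := fun k => 2 ^ k * s k with ht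
  have htpos : ∀ k, 0 < t k := fun k =>
    mul_pos (by positivity) (hspos k)
  have htnn : ∀ k, 0 ≤ t k := fun k => (htpos k).le
  have hsp : ∀ k, s k ^ p = (2:ℝ)⁻¹ ^ k / α k := by
    intro k
    have hbase : (0:ℝ) ≤ (2:ℝ)⁻¹ ^ k / α k := (div_pos (by positivity) (hαpos k)).le
    rw [hs]
    dsimp only
    rw [← Real.rpow_mul hbase, one_div_mul_cancel (ne_of_gt hp0), Real.rpow_one]
  have htp : ∀ k, t k ^ p = ((2:ℝ) ^ k) ^ p * ((2:ℝ)⁻¹ ^ k / α k) := by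
    intro k
    rw [ht, Real.mul_rpow (by positivity) (hspos k).le, hsp k]
  have htp_ge : ∀ k, 1 / α k ≤ t k ^ p := by
    intro k
    rw [htp k]
    have h1 : (2:ℝ) ^ k ≤ ((2:ℝ) ^ k) ^ p := by
      nth_rewrite 1 [← Real.rpow_one ((2:ℝ) ^ k)]
      exact Real.rpow_le_rpow_of_exponent_le (one_le_pow₀ one_le_two) hp
    have h2 : (0:ℝ) < (2:ℝ)⁻¹ ^ k / α k := div_pos (by positivity) (hαpos k)
    calc (1:ℝ) / α k = (2:ℝ) ^ k * ((2:ℝ)⁻¹ ^ k / α k) := by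
          rw [← mul_div_assoc, ← mul_pow]
          norm_num
      _ ≤ ((2:ℝ) ^ k) ^ p * ((2:ℝ)⁻¹ ^ k / α k) := by
          exact mul_le_mul_of_nonneg_right h1 h2.le
  -- ENNReal versions
  have hsE : ∀ k, ENNReal.ofReal (s k) ^ p = ENNReal.ofReal ((2:ℝ)⁻¹ ^ k / α k) := by
    intro k
    rw [ENNReal.ofReal_rpow_of_pos (hspos k), hsp k]
  have hsa : ∀ k, ENNReal.ofReal ((2:ℝ)⁻¹ ^ k / α k) * a k = ENNReal.ofReal ((2:ℝ)⁻¹ ^ k) := by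
    intro k
    rw [haeq k, ← ENNReal.ofReal_mul (by positivity), div_mul_cancel₀ _ (ne_of_gt (hαpos k))]
  -- the function
  set f : X → ℝ := fun x => phiFn t (dist x x₀) with hf
  have hlipf : LocallyLipschitz f := phiComp_locallyLipschitz t htnn x₀
  have hcontf : Continuous f := hlipf.continuous
  refine ⟨f, hlipf, ?_, ?_⟩
  · -- finiteness of the p-energy of lip f
    set σ : ℕ → ℝ := fun k => s (k-1) + s k + s (k+1) with hσ
    have hσnn : ∀ k, 0 ≤ σ k := fun k =>
      add_nonneg (add_nonneg (hspos _).le (hspos _).le) (hspos _).le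
    set Cs : ℕ → Set X := fun k => {z | (2:ℝ) ^ k ≤ dist z x₀ ∧ dist z x₀ ≤ 2 ^ (k+1)}
      with hCs
    have hCmeas : ∀ k, MeasurableSet (Cs k) := by
      intro k
      have : Cs k = (fun z => dist z x₀) ⁻¹' (Icc ((2:ℝ) ^ k) (2 ^ (k+1))) := by
        ext z; simp [hCs, Set.mem_Icc]
      rw [this]
      exact (continuous_id.dist continuous_const).measurable measurableSet_Icc
    -- pointwise bounds for lipConst
    have hlipzero : ∀ x : X, dist x x₀ < 1 → lipConst f x = 0 := by
      intro x hx
      refine le_antisymm ?_ zero_le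
      have h0 := lipConst_le (f := f) (x := x) (L := 0) (δ := 1 - dist x x₀)
        (by linarith) ?_
      · simpa using h0
      · intro y hy
        have hyx : dist y x < 1 - dist x x₀ := mem_ball.1 hy
        have h1 : dist y x₀ ≤ dist y x + dist x x₀ := dist_triangle y x x₀
        have hfy : f y = 0 := phiFn_zero t (by linarith)
        have hfx : f x = 0 := phiFn_zero t (by linarith [dist_nonneg (x := y) (y := x)])
        simp [hfy, hfx]
    have hlipC : ∀ k, ∀ x ∈ Cs k, lipConst f x ≤ ENNReal.ofReal (σ k) := by
      intro k x hx
      obtain ⟨hx1, hx2⟩ := hx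
      have hpk : (0:ℝ) < 2 ^ k := by positivity
      refine lipConst_le (by positivity : (0:ℝ) < 2 ^ k / 2) ?_
      intro y hy
      have hball_cond : ∀ z ∈ ball x ((2:ℝ) ^ k / 2),
          (2:ℝ) ^ k / 2 < dist z x₀ ∧ dist z x₀ ≤ 2 ^ (k+2) := by
        intro z hz
        have hzx : dist z x < 2 ^ k / 2 := mem_ball.1 hz
        have h1 : dist x x₀ ≤ dist x z + dist z x₀ := dist_triangle x z x₀
        have h2 : dist z x₀ ≤ dist z x + dist x x₀ := dist_triangle z x x₀
        rw [dist_comm x z] at h1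
        have e1 : (2:ℝ) ^ (k+1) = 2 * 2 ^ k := by ring
        have e2 : (2:ℝ) ^ (k+2) = 4 * 2 ^ k := by ring
        constructor
        · linarith
        · rw [e2]; rw [e1] at hx2; linarith
      have key := phiComp_lipschitzOnWith t htnn x₀ (k+2) ((2:ℝ) ^ k / 2)
        (ball x ((2:ℝ) ^ k / 2)) hball_cond y hy x (mem_ball_self (by positivity))
      refine key.trans ?_
      refine mul_le_mul_of_nonneg_right ?_ dist_nonneg
      -- the finite sum of slopes is at most σ k
      have hterm : ∀ j ∈ Finset.range (k+2),
          (if (2:ℝ) ^ k / 2 < 2 ^ (j+1) then t j / 2 ^ j else 0) ≤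
            (if j + 2 ≤ k then 0 else s j) := by
        intro j _
        by_cases hjk : j + 2 ≤ k
        · rw [if_pos hjk, if_neg]
          push_neg
          have : (2:ℝ) ^ (j+2) ≤ 2 ^ k := pow_le_pow_right₀ one_le_two hjk
          have e3 : (2:ℝ) ^ (j+2) = 2 ^ (j+1) * 2 := by ring
          rw [e3] at this
          linarith
        · rw [if_neg hjk]
          have hts : t j / 2 ^ j = s j := by
            rw [ht]
            dsimp only
            rw [mul_comm, mul_div_assoc, div_self (by positivity : ((2:ℝ) ^ j) ≠ 0), mul_one]
          split
          · rw [hts]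
          · exact (hspos j).le
      refine (Finset.sum_le_sum hterm).trans ?_
      rw [Finset.sum_ite, Finset.sum_const_zero, zero_add]
      have hfil : (Finset.range (k+2)).filter (fun j => ¬ (j + 2 ≤ k)) =
          Finset.Ico (k-1) (k+2) := by
        ext j
        simp only [Finset.mem_filter, Finset.mem_range, Finset.mem_Ico]
        omega
      rw [hfil]
      rcases k with _ | m
      · have : Finset.Ico 0 2 = Finset.range 2 := by rfl
        rw [this]
        simp only [Finset.sum_range_succ, Finset.sum_range_zero, zero_add]
        rw [hσ]
        simp only [Nat.zero_sub]
        linarith [(hspos 0).le]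
      · have h3 : m + 1 + 2 = m + 3 := by omega
        have h4 : m + 1 - 1 = m := by omega
        rw [h3, h4, Finset.sum_Ico_eq_sum_range]
        have h5 : m + 3 - m = 3 := by omega
        rw [h5]
        simp only [Finset.sum_range_succ, Finset.sum_range_zero, zero_add]
        rw [hσ]
        simp only [Nat.add_sub_cancel]
        have e6 : m + 0 = m := by omega
        have e7 : m + 2 = m + 1 + 1 := by omega
        rw [e6, e7]
    -- the dominating function
    set G : X → ℝ≥0∞ :=
      fun x => ∑' k, (Cs k).indicator (fun _ => ENNReal.ofReal (σ k) ^ p) x with hG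
    have hpt : ∀ x, lipConst f x ^ p ≤ G x := by
      intro x
      rcases lt_or_ge (dist x x₀) 1 with hx | hx
      · rw [hlipzero x hx, ENNReal.zero_rpow_of_pos hp0]
        exact zero_le
      · obtain ⟨k, hk1, hk2⟩ := exists_pow_interval hx
        have hxC : x ∈ Cs k := ⟨hk1, hk2.le⟩
        refine (ENNReal.rpow_le_rpow (hlipC k x hxC) hp0.le).trans ?_
        have h2 := ENNReal.le_tsum (a := k)
          (f := fun k => (Cs k).indicator (fun _ => ENNReal.ofReal (σ k) ^ p) x)
        rw [Set.indicator_of_mem hxC] at h2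
        exact h2
    -- termwise geometric bound
    set M : ℝ≥0∞ := (3:ℝ≥0∞) ^ p * (12 * K ^ 2) with hM
    have huK : ∀ u : ℝ≥0∞, u ≤ K * u := fun u => by
      nth_rewrite 1 [← one_mul u]
      exact mul_le_mul_left hK1 u
    have hKK : ∀ u : ℝ≥0∞, K * u ≤ K ^ 2 * u := fun u => by
      rw [pow_two, mul_assoc]
      exact mul_le_mul_right (huK u) K
    have hKsq : ∀ u : ℝ≥0∞, u ≤ K ^ 2 * u := fun u => (huK u).trans (hKK u)
    have hterm2 : ∀ k, ENNReal.ofReal (σ k) ^ p * μ (Cs k) ≤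
        M * ENNReal.ofReal ((2:ℝ)⁻¹ ^ k) := by
      intro k
      set e : ℕ → ℝ≥0∞ := fun j => ENNReal.ofReal (s j) with he
      -- measure of the closed annulus
      have hCsub : μ (Cs k) ≤ a k + a (k+1) := by
        have hsub : Cs k ⊆ A k ∪ A (k+1) := by
          intro z hz
          obtain ⟨hz1, hz2⟩ := hz
          rcases lt_or_ge (dist z x₀) ((2:ℝ) ^ (k+1)) with h | h
          · exact Or.inl ((hAmem k z).2 ⟨hz1, h⟩)
          · refine Or.inr ((hAmem (k+1) z).2 ⟨h, ?_⟩)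
            have : (2:ℝ) ^ (k+1) < 2 ^ (k+1+1) := by
              have : (0:ℝ) < 2 ^ (k+1) := by positivity
              calc (2:ℝ) ^ (k+1) < 2 * 2 ^ (k+1) := by linarith
                _ = 2 ^ (k+1+1) := by ring
            linarith
        exact (measure_mono hsub).trans (measure_union_le _ _)
      -- bound ofReal (σ k) by a max
      set maxE : ℝ≥0∞ := max (max (e (k-1)) (e k)) (e (k+1)) with hmax
      have hofσ : ENNReal.ofReal (σ k) = e (k-1) + e k + e (k+1) := by
        rw [hσ]
        dsimp only
        rw [ENNReal.ofReal_add (add_nonneg (hspos _).le (hspos _).le) (hspos _).le,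
          ENNReal.ofReal_add (hspos _).le (hspos _).le]
      have h3 : ENNReal.ofReal (σ k) ≤ 3 * maxE := by
        rw [hofσ, show (3:ℝ≥0∞) * maxE = maxE + maxE + maxE by ring]
        refine add_le_add (add_le_add ?_ ?_) ?_
        · exact le_trans (le_max_left _ _) (le_max_left _ _)
        · exact le_trans (le_max_right _ _) (le_max_left _ _)
        · exact le_max_right _ _
      have h4 : ENNReal.ofReal (σ k) ^ p ≤ (3:ℝ≥0∞) ^ p * maxE ^ p := by
        refine (ENNReal.rpow_le_rpow h3 hp0.le).trans_eq ?_
        exact ENNReal.mul_rpow_of_nonneg _ _ hp0.le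
      have h5 : maxE ^ p ≤ e (k-1) ^ p + e k ^ p + e (k+1) ^ p := by
        have hcase : maxE = e (k-1) ∨ maxE = e k ∨ maxE = e (k+1) := by
          rcases max_choice (max (e (k-1)) (e k)) (e (k+1)) with h | h
          · rcases max_choice (e (k-1)) (e k) with h' | h'
            · exact Or.inl (by rw [hmax, h, h'])
            · exact Or.inr (Or.inl (by rw [hmax, h, h']))
          · exact Or.inr (Or.inr (by rw [hmax, h]))
        rcases hcase with h | h | h <;> rw [h]
        · exact le_self_add.trans (le_refl _) |>.trans le_self_add
        · exact le_add_self.trans le_self_add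
        · exact le_add_self
      -- the six products
      have hprod : ∀ j i : ℕ, a i ≤ K ^ 2 * a j →
          e j ^ p * a i ≤ K ^ 2 * ENNReal.ofReal ((2:ℝ)⁻¹ ^ j) := by
        intro j i hji
        calc e j ^ p * a i ≤ e j ^ p * (K ^ 2 * a j) := mul_le_mul_right hji _
          _ = K ^ 2 * (e j ^ p * a j) := by ring
          _ = K ^ 2 * ENNReal.ofReal ((2:ℝ)⁻¹ ^ j) := by rw [he]; dsimp only; rw [hsE j, hsa j]
      have hB1 : a k ≤ K ^ 2 * a (k-1) := by
        rcases k with _ | m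
        · exact hKsq (a 0)
        · simp only [Nat.add_sub_cancel]
          exact (hup m).trans (hKK (a m))
      have hB2 : a (k+1) ≤ K ^ 2 * a (k-1) := by
        rcases k with _ | m
        · exact (hup 0).trans (hKK (a 0))
        · simp only [Nat.add_sub_cancel]
          calc a (m+1+1) ≤ K * a (m+1) := hup (m+1)
            _ ≤ K * (K * a m) := mul_le_mul_right (hup m) K
            _ = K ^ 2 * a m := by ring
      have hB3 : a k ≤ K ^ 2 * a k := hKsq _
      have hB4 : a (k+1) ≤ K ^ 2 * a k := (hup k).trans (hKK _)
      have hB5 : a k ≤ K ^ 2 * a (k+1) := (hdown k).trans (hKK _)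
      have hB6 : a (k+1) ≤ K ^ 2 * a (k+1) := hKsq _
      -- geometric comparison for the exponents
      have hgeo : ∀ j : ℕ, k - 1 ≤ j →
          ENNReal.ofReal ((2:ℝ)⁻¹ ^ j) ≤ ENNReal.ofReal (2 * (2:ℝ)⁻¹ ^ k) := by
        intro j hj
        refine ENNReal.ofReal_le_ofReal ?_
        have h1 : (2:ℝ)⁻¹ ^ j ≤ (2:ℝ)⁻¹ ^ (k-1) :=
          pow_le_pow_of_le_one (by norm_num) (by norm_num) hj
        refine h1.trans ?_
        rcases k with _ | m
        · norm_num
        · simp only [Nat.add_sub_cancel]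
          rw [pow_succ]
          ring_nf
          exact le_refl _
      have hsix : ∀ j i : ℕ, k - 1 ≤ j → a i ≤ K ^ 2 * a j →
          e j ^ p * a i ≤ K ^ 2 * ENNReal.ofReal (2 * (2:ℝ)⁻¹ ^ k) := fun j i hj hji =>
        (hprod j i hji).trans (mul_le_mul_right (hgeo j hj) _)
      have hk1 : k - 1 ≤ k := Nat.sub_le k 1
      have hk2 : k - 1 ≤ k + 1 := hk1.trans (Nat.le_succ k)
      set W : ℝ≥0∞ := K ^ 2 * ENNReal.ofReal (2 * (2:ℝ)⁻¹ ^ k) with hW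
      have hsum6 : (e (k-1) ^ p + e k ^ p + e (k+1) ^ p) * (a k + a (k+1)) ≤ 6 * W := by
        have expand : (e (k-1) ^ p + e k ^ p + e (k+1) ^ p) * (a k + a (k+1)) =
            e (k-1) ^ p * a k + e (k-1) ^ p * a (k+1) +
              (e k ^ p * a k + e k ^ p * a (k+1)) +
              (e (k+1) ^ p * a k + e (k+1) ^ p * a (k+1)) := by ring
        rw [expand]
        calc e (k-1) ^ p * a k + e (k-1) ^ p * a (k+1) +
              (e k ^ p * a k + e k ^ p * a (k+1)) +
              (e (k+1) ^ p * a k + e (k+1) ^ p * a (k+1)) ≤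
            W + W + (W + W) + (W + W) := by
              refine add_le_add (add_le_add (add_le_add ?_ ?_) (add_le_add ?_ ?_))
                (add_le_add ?_ ?_)
              · exact hsix (k-1) k (le_refl _) hB1
              · exact hsix (k-1) (k+1) (le_refl _) hB2
              · exact hsix k k hk1 hB3
              · exact hsix k (k+1) hk1 hB4
              · exact hsix (k+1) k hk2 hB5
              · exact hsix (k+1) (k+1) hk2 hB6
          _ = 6 * W := by ring
      calc ENNReal.ofReal (σ k) ^ p * μ (Cs k)
          ≤ ((3:ℝ≥0∞) ^ p * maxE ^ p) * (a k + a (k+1)) := mul_le_mul' h4 hCsub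
        _ = (3:ℝ≥0∞) ^ p * (maxE ^ p * (a k + a (k+1))) := by ring
        _ ≤ (3:ℝ≥0∞) ^ p * ((e (k-1) ^ p + e k ^ p + e (k+1) ^ p) * (a k + a (k+1))) :=
            mul_le_mul_right (mul_le_mul_left h5 _) _
        _ ≤ (3:ℝ≥0∞) ^ p * (6 * W) := mul_le_mul_right hsum6 _
        _ = M * ENNReal.ofReal ((2:ℝ)⁻¹ ^ k) := by
            rw [hW, hM, ENNReal.ofReal_mul (by norm_num : (0:ℝ) ≤ 2),
              ENNReal.ofReal_ofNat 2]
            ring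
    -- conclude finiteness
    calc ∫⁻ x, lipConst f x ^ p ∂μ ≤ ∫⁻ x, G x ∂μ := lintegral_mono hpt
      _ = ∑' k, ENNReal.ofReal (σ k) ^ p * μ (Cs k) := by
          rw [hG]
          rw [lintegral_tsum (fun k => (measurable_const.indicator (hCmeas k)).aemeasurable)]
          refine tsum_congr (fun k => ?_)
          rw [lintegral_indicator (hCmeas k), setLIntegral_const]
      _ ≤ ∑' k, M * ENNReal.ofReal ((2:ℝ)⁻¹ ^ k) := ENNReal.tsum_le_tsum hterm2
      _ = M * ∑' k, ENNReal.ofReal ((2:ℝ)⁻¹ ^ k) := ENNReal.tsum_mul_left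
      _ < ⊤ := by
          have hh : ∀ k : ℕ, ENNReal.ofReal ((2:ℝ)⁻¹ ^ k) = (2:ℝ≥0∞)⁻¹ ^ k := by
            intro k
            rw [ENNReal.ofReal_pow (by norm_num)]
            congr 1
            rw [ENNReal.ofReal_inv_of_pos (by norm_num)]
            norm_num
          have hgeom : ∑' k : ℕ, ENNReal.ofReal ((2:ℝ)⁻¹ ^ k) = 2 := by
            simp_rw [hh]
            rw [ENNReal.tsum_geometric, ENNReal.one_sub_inv_two, inv_inv]
          rw [hgeom]
          refine ENNReal.mul_lt_top ?_ (by norm_num)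
          rw [hM]
          refine ENNReal.mul_lt_top ?_ ?_
          · exact ENNReal.rpow_lt_top_of_nonneg hp0.le (by norm_num)
          · exact ENNReal.mul_lt_top (by norm_num)
              (ENNReal.pow_lt_top (n := 2) (lt_top_iff_ne_top.2 hKtop))
  · -- divergence of ∫ |f - c|^p for every c
    intro c
    set h : X → ℝ≥0∞ := fun x => ENNReal.ofReal |f x - c| ^ p with hh
    have hmeas : Measurable h :=
      Measurable.pow ((hcontf.sub continuous_const).abs.measurable.ennreal_ofReal)
        measurable_const
    have hcompl : ∀ m : ℕ, μ ((ball x₀ ((2:ℝ) ^ m))ᶜ) = ⊤ := by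
      intro m
      by_contra hne
      have h1 : μ (Set.univ : Set X) ≤ μ (ball x₀ ((2:ℝ) ^ m)) + μ ((ball x₀ ((2:ℝ) ^ m))ᶜ) := by
        rw [← Set.union_compl_self (ball x₀ ((2:ℝ) ^ m))]
        exact measure_union_le _ _
      rw [hXinf] at h1
      have h2 : μ (ball x₀ ((2:ℝ) ^ m)) + μ ((ball x₀ ((2:ℝ) ^ m))ᶜ) < ⊤ :=
        ENNReal.add_lt_top.2 ⟨(hball x₀ _ (by positivity)).2, lt_top_iff_ne_top.2 hne⟩
      exact absurd (lt_of_le_of_lt h1 h2) (lt_irrefl ⊤)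
    have hlow : ∀ (m : ℕ) (ε : ℝ), 0 < ε →
        (∀ x : X, (2:ℝ) ^ m ≤ dist x x₀ → ε ≤ |f x - c|) →
        (∫⁻ x, h x ∂μ) = ⊤ := by
      intro m ε hε hbound
      set S : Set X := (ball x₀ ((2:ℝ) ^ m))ᶜ with hS
      have hSmeas : MeasurableSet S := measurableSet_ball.compl
      have hSm : μ S = ⊤ := hcompl m
      have h1 : (∫⁻ x in S, ENNReal.ofReal ε ^ p ∂μ) = ⊤ := by
        rw [setLIntegral_const, hSm]
        exact ENNReal.mul_eq_top.2 (Or.inl ⟨ne_of_gt (ENNReal.rpow_pos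
          (ENNReal.ofReal_pos.2 hε) ENNReal.ofReal_ne_top), rfl⟩)
      have h2 : (∫⁻ x in S, ENNReal.ofReal ε ^ p ∂μ) ≤ ∫⁻ x in S, h x ∂μ := by
        refine setLIntegral_mono hmeas ?_
        intro x hx
        have hd : (2:ℝ) ^ m ≤ dist x x₀ := not_lt.1 (fun hc' => hx (mem_ball.2 hc'))
        exact ENNReal.rpow_le_rpow (ENNReal.ofReal_le_ofReal (hbound x hd)) hp0.le
      have h3 := (h2.trans (setLIntegral_le_lintegral S h))
      rw [h1] at h3
      exact top_le_iff.1 h3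
    by_cases hsumt : Summable t
    · -- f is bounded; total drop T
      set T : ℝ := ∑' k, t k with hT
      have hPle : ∀ m : ℕ, ∑ j ∈ Finset.range m, t j ≤ T := fun m =>
        Summable.sum_le_tsum _ (fun i _ => htnn i) hsumt
      by_cases hc : c = -T
      · -- the critical constant
        have hAbound : ∀ k : ℕ, ∀ x ∈ A k, ENNReal.ofReal (t (k+1)) ^ p ≤ h x := by
          intro k x hx
          obtain ⟨hx1, hx2⟩ := (hAmem k x).1 hx
          have hfge : -∑ j ∈ Finset.range (k+1), t j ≤ f x := phiFn_ge t htnn hx2.le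
          have hfT : -T ≤ f x := phiFn_ge_neg_tsum t htnn hsumt _
          have htail : ∑ j ∈ Finset.range (k+2), t j ≤ T := hPle (k+2)
          have hsum : ∑ j ∈ Finset.range (k+2), t j
              = ∑ j ∈ Finset.range (k+1), t j + t (k+1) := Finset.sum_range_succ _ _
          have hfx : t (k+1) ≤ |f x - c| := by
            rw [hc]
            have h4 : t (k+1) ≤ f x + T := by
              rw [hsum] at htail
              linarith
            rw [abs_of_nonneg (by linarith : (0:ℝ) ≤ f x - -T)]
            linarith
          exact ENNReal.rpow_le_rpow (ENNReal.ofReal_le_ofReal hfx) hp0.le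
        have hAint : ∀ k : ℕ, K⁻¹ ≤ ∫⁻ x in A k, h x ∂μ := by
          intro k
          have h1 : ENNReal.ofReal (t (k+1)) ^ p * a k ≤ ∫⁻ x in A k, h x ∂μ := by
            rw [← setLIntegral_const (A k) (ENNReal.ofReal (t (k+1)) ^ p)]
            exact setLIntegral_mono hmeas (hAbound k)
          refine le_trans ?_ h1
          have h2 : ENNReal.ofReal (1 / α (k+1)) ≤ ENNReal.ofReal (t (k+1)) ^ p := by
            rw [ENNReal.ofReal_rpow_of_pos (htpos (k+1))]
            exact ENNReal.ofReal_le_ofReal (htp_ge (k+1))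
          have h3 : K⁻¹ * a (k+1) ≤ a k := by
            calc K⁻¹ * a (k+1) ≤ K⁻¹ * (K * a k) := mul_le_mul_right (hup k) _
              _ = (K⁻¹ * K) * a k := by rw [mul_assoc]
              _ = a k := by rw [ENNReal.inv_mul_cancel hK0 hKtop, one_mul]
          calc K⁻¹ = K⁻¹ * (ENNReal.ofReal (1 / α (k+1)) * a (k+1)) := by
                rw [haeq (k+1), ← ENNReal.ofReal_mul (by positivity),
                  one_div_mul_cancel (ne_of_gt (hαpos (k+1))), ENNReal.ofReal_one, mul_one]
            _ = ENNReal.ofReal (1 / α (k+1)) * (K⁻¹ * a (k+1)) := by ring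
            _ ≤ ENNReal.ofReal (t (k+1)) ^ p * a k := mul_le_mul' h2 h3
        have htop : (⊤ : ℝ≥0∞) ≤ ∫⁻ x, h x ∂μ := by
          calc (⊤ : ℝ≥0∞) = ∑' _ : ℕ, K⁻¹ :=
              (ENNReal.tsum_const_eq_top_of_ne_zero (ENNReal.inv_ne_zero.2 hKtop)).symm
            _ ≤ ∑' k, ∫⁻ x in A k, h x ∂μ := ENNReal.tsum_le_tsum hAint
            _ = ∫⁻ x in ⋃ k, A k, h x ∂μ := (lintegral_iUnion hAmeas hAdisj h).symm
            _ ≤ ∫⁻ x, h x ∂μ := setLIntegral_le_lintegral _ _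
        exact top_le_iff.1 htop
      · -- any other constant
        have hne : c + T ≠ 0 := fun h0 => hc (by linarith)
        set δ : ℝ := |c + T| / 2 with hδ
        have hδpos : 0 < δ := by
          rw [hδ]
          have := abs_pos.2 hne
          linarith
        have htends : Tendsto (fun n => ∑ j ∈ Finset.range n, t j) atTop (𝓝 T) :=
          hsumt.hasSum.tendsto_sum_nat
        have hev : ∀ᶠ n in atTop, T - δ < ∑ j ∈ Finset.range n, t j :=
          htends.eventually (eventually_gt_nhds (by linarith))
        obtain ⟨m, hm⟩ := hev.exists
        refine hlow m δ hδpos ?_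
        intro x hd
        have hfle : f x ≤ -∑ j ∈ Finset.range m, t j := phiFn_le t htnn hd
        have hfT : -T ≤ f x := phiFn_ge_neg_tsum t htnn hsumt _
        have h1 : |f x + T| ≤ δ := by
          rw [abs_of_nonneg (by linarith)]
          linarith
        have h2 : |c + T| - |f x + T| ≤ |f x - c| := by
          have h3 : |c + T| - |f x + T| ≤ |(c + T) - (f x + T)| := abs_sub_abs_le_abs_sub _ _
          have h4 : |(c + T) - (f x + T)| = |f x - c| := by
            rw [show (c + T) - (f x + T) = -(f x - c) by ring, abs_neg]
          linarith
        have h5 : |c + T| = 2 * δ := by rw [hδ]; ring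
        linarith
    · -- f is unbounded below
      have htends : Tendsto (fun n => ∑ j ∈ Finset.range n, t j) atTop atTop :=
        (not_summable_iff_tendsto_nat_atTop_of_nonneg htnn).1 hsumt
      have hev : ∀ᶠ n in atTop, |c| + 1 ≤ ∑ j ∈ Finset.range n, t j :=
        htends.eventually (eventually_ge_atTop _)
      obtain ⟨m, hm⟩ := hev.exists
      refine hlow m 1 one_pos ?_
      intro x hd
      have hfle : f x ≤ -∑ j ∈ Finset.range m, t j := phiFn_le t htnn hd
      have h1 : f x - c ≤ -1 := by
        have := neg_abs_le c
        linarith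
      rw [abs_of_nonpos (by linarith)]
      linarith
end

section
/- Let (X,d,μ) satisfy the standing assumptions and suppose μ is Ahlfors s-regular for some s > 0. Then for all p, q ∈ [1,∞) with 1/q + 1/s ≠ 1/p there exists a measurable function f : X → ℝ with |f|^p locally integrable, such that ∫_X (lip f)^p dμ < ∞ while ∫_X |f − c|^q dμ = ∞ for every c ∈ ℝ. -/
open MeasureTheory Metric Set Filter
open scoped ENNReal NNReal Topology

/-- `μ` is Ahlfors `s`-regular: `C⁻¹ rˢ ≤ μ(B(x,r)) ≤ C rˢ` for all `x` and `r > 0`. -/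
def AhlforsRegular {X : Type*} [MetricSpace X] [MeasurableSpace X]
    (s : ℝ) (μ : Measure X) : Prop :=
  ∃ C : ℝ, 1 ≤ C ∧ ∀ (x : X) (r : ℝ), 0 < r →
    ENNReal.ofReal (r ^ s / C) ≤ μ (ball x r) ∧ μ (ball x r) ≤ ENNReal.ofReal (C * r ^ s)

section Helpers

lemma lipConst_le_of_loc_lip {X : Type*} [MetricSpace X] {f : X → ℝ} {x : X} {L : ℝ}
    {U : Set X} (hU : U ∈ 𝓝 x) (h : ∀ y ∈ U, |f y - f x| ≤ L * dist y x) :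
    lipConst f x ≤ ENNReal.ofReal L := by
  refine Filter.limsup_le_of_le (by isBoundedDefault) ?_
  filter_upwards [nhdsWithin_le_nhds hU, self_mem_nhdsWithin] with y hy hy'
  have hd : 0 < dist y x := by
    simp only [mem_compl_iff, mem_singleton_iff] at hy'
    exact dist_pos.2 hy'
  apply ENNReal.ofReal_le_ofReal
  rw [div_le_iff₀ hd]
  exact h y hy

lemma rpow_loclip {α m t u : ℝ} (hα : α < 0) (hm : 0 < m) (ht : m ≤ t) (hu : m ≤ u) :
    |t ^ α - u ^ α| ≤ (-α) * m ^ (α - 1) * |t - u| := by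
  have key : ∀ v ∈ Set.Ici m, ‖(fun z : ℝ => z ^ α) v - (fun z : ℝ => z ^ α) u‖
      ≤ ((-α) * m ^ (α-1)) * ‖v - u‖ := fun v hv => by
    apply Convex.norm_image_sub_le_of_norm_hasDerivWithin_le
      (f' := fun z => α * z ^ (α - 1)) (fun z hz => (Real.hasDerivAt_rpow_const
        (Or.inl (by simp at hz; nlinarith))).hasDerivWithinAt) ?_ (convex_Ici m) hu hv
    intro z hz
    simp only [mem_Ici] at hz
    have hz0 : 0 < z := lt_of_lt_of_le hm hz
    rw [Real.norm_eq_abs, abs_mul, abs_of_nonneg (Real.rpow_nonneg hz0.le _),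
      abs_of_neg hα]
    have : z ^ (α - 1) ≤ m ^ (α - 1) :=
      Real.rpow_le_rpow_of_nonpos hm hz (by linarith)
    nlinarith [neg_pos.2 hα]
  simpa [Real.norm_eq_abs] using key t ht

lemma exists_dyadic (r : ℝ) (hr : 1 ≤ r) : ∃ n : ℕ, 2^n ≤ r ∧ r < 2^(n+1) := by
  classical
  obtain ⟨n, hn⟩ := pow_unbounded_of_one_lt r (by norm_num : (1:ℝ) < 2)
  have hex : ∃ m : ℕ, r < 2^(m+1) := ⟨n, lt_of_lt_of_le hn (by gcongr <;> norm_num)⟩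
  refine ⟨Nat.find hex, ?_, Nat.find_spec hex⟩
  rcases Nat.eq_zero_or_pos (Nat.find hex) with h | h
  · simpa [h] using hr
  · have hm := Nat.find_min hex (m := Nat.find hex - 1) (by omega)
    push_neg at hm
    calc (2:ℝ)^Nat.find hex = 2^(Nat.find hex - 1 + 1) := by congr 1; omega
    _ ≤ r := hm

lemma geom_sum_fin {c u : ℝ} (hc : 0 ≤ c) (hu0 : 0 ≤ u) (hu : u < 1) :
    (∑' n : ℕ, ENNReal.ofReal (c * u ^ n)) < ⊤ := by
  have : ∀ n : ℕ, ENNReal.ofReal (c * u ^ n) = ENNReal.ofReal c * ENNReal.ofReal u ^ n := by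
    intro n
    rw [← ENNReal.ofReal_pow hu0, ← ENNReal.ofReal_mul hc]
  simp only [this]
  rw [ENNReal.tsum_mul_left, ENNReal.tsum_geometric]
  exact ENNReal.mul_lt_top ENNReal.ofReal_lt_top
    (ENNReal.inv_lt_top.2 (tsub_pos_of_lt (ENNReal.ofReal_lt_one.2 hu)))

lemma two_rpow_combine {C x y z w : ℝ} (h : x + y = z + w) :
    (2:ℝ)^x * (C * 2^y) = (C * 2^z) * 2^w := by
  rw [mul_left_comm, ← Real.rpow_add two_pos, mul_assoc, ← Real.rpow_add two_pos, h]

lemma pow_nat_rpow (n : ℕ) (b : ℝ) : ((2:ℝ)^n)^b = 2^((n:ℝ)*b) := by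
  rw [← Real.rpow_natCast 2 n, ← Real.rpow_mul two_pos.le]

lemma lintegral_far {X : Type*} [MetricSpace X] [MeasurableSpace X] [BorelSpace X]
    (μ : Measure X) (x₀ : X) {C s β : ℝ} (hC : 0 ≤ C) (hs : 0 < s)
    (hup : ∀ r : ℝ, 0 < r → μ (ball x₀ r) ≤ ENNReal.ofReal (C * r ^ s))
    (hβ : β + s < 0) :
    ∫⁻ x in {x | 1 ≤ dist x x₀}, ENNReal.ofReal (dist x x₀ ^ β) ∂μ < ⊤ := by
  set E : ℕ → Set X := fun n => ball x₀ (2^(n+1)) \ ball x₀ (2^n) with hE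
  have hβ0 : β < 0 := by linarith
  have hmem : ∀ n x, x ∈ E n ↔ 2^n ≤ dist x x₀ ∧ dist x x₀ < 2^(n+1) := by
    intro n x
    simp [hE, Metric.mem_ball, not_lt, and_comm]
  have hmeas : ∀ n, MeasurableSet (E n) :=
    fun n => measurableSet_ball.diff measurableSet_ball
  have hkey : ∀ m n, m < n → Disjoint (E m) (E n) := by
    intro m n h
    rw [Set.disjoint_left]
    intro x hxm hxn
    rw [hmem] at hxm hxn
    have : (2:ℝ)^(m+1) ≤ 2^n := by
      apply pow_le_pow_right₀ (by norm_num) (by omega)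
    linarith [hxm.2, hxn.1]
  have hdisj : Pairwise (Function.onFun Disjoint E) := by
    intro m n hmn
    rcases hmn.lt_or_gt with h | h
    · exact hkey m n h
    · exact (hkey n m h).symm
  have hcover : {x : X | 1 ≤ dist x x₀} = ⋃ n, E n := by
    ext x
    simp only [mem_setOf_eq, mem_iUnion]
    constructor
    · intro hx
      obtain ⟨n, h1, h2⟩ := exists_dyadic _ hx
      exact ⟨n, (hmem n x).2 ⟨h1, h2⟩⟩
    · rintro ⟨n, hn⟩
      have := ((hmem n x).1 hn).1
      have h1 : (1:ℝ) ≤ 2^n := one_le_pow₀ (by norm_num)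
      linarith
  rw [hcover, lintegral_iUnion hmeas hdisj]
  have hbound : ∀ n : ℕ, ∫⁻ x in E n, ENNReal.ofReal (dist x x₀ ^ β) ∂μ
      ≤ ENNReal.ofReal ((C * 2^s) * ((2:ℝ)^(β+s))^n) := by
    intro n
    calc ∫⁻ x in E n, ENNReal.ofReal (dist x x₀ ^ β) ∂μ
        ≤ ∫⁻ _ in E n, ENNReal.ofReal (((2:ℝ)^n) ^ β) ∂μ := by
          apply setLIntegral_mono' (hmeas n)
          intro x hx
          exact ENNReal.ofReal_le_ofReal
            (Real.rpow_le_rpow_of_nonpos (by positivity) ((hmem n x).1 hx).1 hβ0.le)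
      _ = ENNReal.ofReal (((2:ℝ)^n) ^ β) * μ (E n) := setLIntegral_const _ _
      _ ≤ ENNReal.ofReal (((2:ℝ)^n) ^ β) * ENNReal.ofReal (C * ((2:ℝ)^(n+1)) ^ s) := by
          apply mul_le_mul_right
          exact le_trans (measure_mono diff_subset) (hup _ (by positivity))
      _ = ENNReal.ofReal (((2:ℝ)^n) ^ β * (C * ((2:ℝ)^(n+1)) ^ s)) := by
          rw [← ENNReal.ofReal_mul (by positivity)]
      _ = ENNReal.ofReal ((C * 2^s) * ((2:ℝ)^(β+s))^n) := by
          congr 1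
          rw [pow_nat_rpow n β, pow_nat_rpow (n+1) s,
            ← Real.rpow_natCast ((2:ℝ)^(β+s)) n, ← Real.rpow_mul two_pos.le]
          apply two_rpow_combine
          push_cast
          ring
  calc (∑' n, ∫⁻ x in E n, ENNReal.ofReal (dist x x₀ ^ β) ∂μ)
      ≤ ∑' n : ℕ, ENNReal.ofReal ((C * 2^s) * ((2:ℝ)^(β+s))^n) := ENNReal.tsum_le_tsum hbound
    _ < ⊤ := geom_sum_fin (by positivity) (by positivity)
        (Real.rpow_lt_one_of_one_lt_of_neg one_lt_two hβ)

lemma lintegral_near {X : Type*} [MetricSpace X] [MeasurableSpace X] [BorelSpace X]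
    (μ : Measure X) (x₀ : X) {C s β : ℝ} (hC : 0 ≤ C) (hs : 0 < s)
    (hup : ∀ r : ℝ, 0 < r → μ (ball x₀ r) ≤ ENNReal.ofReal (C * r ^ s))
    (hβ0 : β < 0) (hβ : 0 < β + s) :
    ∫⁻ x in {x | 0 < dist x x₀ ∧ dist x x₀ ≤ 1}, ENNReal.ofReal (dist x x₀ ^ β) ∂μ < ⊤ := by
  set E : ℕ → Set X := fun n => closedBall x₀ (1/2^n) \ closedBall x₀ (1/2^(n+1)) with hE
  have hmem : ∀ n x, x ∈ E n ↔ 1/2^(n+1) < dist x x₀ ∧ dist x x₀ ≤ 1/2^n := by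
    intro n x
    simp [hE, Metric.mem_closedBall, not_le, and_comm]
  have hmeas : ∀ n, MeasurableSet (E n) :=
    fun n => measurableSet_closedBall.diff measurableSet_closedBall
  have hkey : ∀ m n, m < n → Disjoint (E m) (E n) := by
    intro m n h
    rw [Set.disjoint_left]
    intro x hxm hxn
    rw [hmem] at hxm hxn
    have h1 : (2:ℝ)^(m+1) ≤ 2^n := by
      apply pow_le_pow_right₀ (by norm_num) (by omega)
    have h2 : (1:ℝ)/2^n ≤ 1/2^(m+1) := by
      apply div_le_div_of_nonneg_left (by norm_num) (by positivity) h1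
    linarith [hxm.1, hxn.2]
  have hdisj : Pairwise (Function.onFun Disjoint E) := by
    intro m n hmn
    rcases hmn.lt_or_gt with h | h
    · exact hkey m n h
    · exact (hkey n m h).symm
  have hcover : {x : X | 0 < dist x x₀ ∧ dist x x₀ ≤ 1} = ⋃ n, E n := by
    ext x
    simp only [mem_setOf_eq, mem_iUnion]
    constructor
    · rintro ⟨hx0, hx1⟩
      obtain ⟨n, h1, h2⟩ := exists_dyadic (1/dist x x₀) (by
        rw [le_div_iff₀ hx0]; linarith)
      refine ⟨n, (hmem n x).2 ⟨?_, ?_⟩⟩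
      · rw [div_lt_iff₀ (by positivity), mul_comm, ← div_lt_iff₀ hx0]; exact h2
      · rw [le_div_iff₀ hx0] at h1
        rw [le_div_iff₀ (by positivity), mul_comm]
        exact h1
    · rintro ⟨n, hn⟩
      rw [hmem] at hn
      constructor
      · exact lt_trans (by positivity) hn.1
      · exact le_trans hn.2 (by
          rw [div_le_one (by positivity)]
          exact one_le_pow₀ (by norm_num))
  rw [hcover, lintegral_iUnion hmeas hdisj]
  have hbound : ∀ n : ℕ, ∫⁻ x in E n, ENNReal.ofReal (dist x x₀ ^ β) ∂μ
      ≤ ENNReal.ofReal ((C * 2^(s-β)) * ((2:ℝ)^(-(β+s)))^n) := by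
    intro n
    calc ∫⁻ x in E n, ENNReal.ofReal (dist x x₀ ^ β) ∂μ
        ≤ ∫⁻ _ in E n, ENNReal.ofReal (((1:ℝ)/2^(n+1)) ^ β) ∂μ := by
          apply setLIntegral_mono' (hmeas n)
          intro x hx
          exact ENNReal.ofReal_le_ofReal
            (Real.rpow_le_rpow_of_nonpos (by positivity) ((hmem n x).1 hx).1.le hβ0.le)
      _ = ENNReal.ofReal (((1:ℝ)/2^(n+1)) ^ β) * μ (E n) := setLIntegral_const _ _
      _ ≤ ENNReal.ofReal (((1:ℝ)/2^(n+1)) ^ β) * ENNReal.ofReal (C * ((2:ℝ)/2^n) ^ s) := by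
          apply mul_le_mul_right
          refine le_trans (measure_mono ?_) (hup _ (by positivity))
          refine subset_trans diff_subset (closedBall_subset_ball ?_)
          rw [div_lt_div_iff₀ (by positivity) (by positivity)]
          nlinarith [pow_pos (show (0:ℝ) < 2 by norm_num) n]
      _ = ENNReal.ofReal (((1:ℝ)/2^(n+1)) ^ β * (C * ((2:ℝ)/2^n) ^ s)) := by
          rw [← ENNReal.ofReal_mul (by positivity)]
      _ = ENNReal.ofReal ((C * 2^(s-β)) * ((2:ℝ)^(-(β+s)))^n) := by
          congr 1
          have ha : (1:ℝ)/2^(n+1) = (2:ℝ)^(-((n:ℝ)+1)) := by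
            rw [Real.rpow_neg two_pos.le, ← Real.rpow_natCast 2 (n+1), one_div]
            push_cast
            ring_nf
          have hb : (2:ℝ)/2^n = (2:ℝ)^(1-(n:ℝ)) := by
            rw [Real.rpow_sub two_pos, Real.rpow_one, Real.rpow_natCast]
          rw [ha, hb, ← Real.rpow_mul two_pos.le, ← Real.rpow_mul two_pos.le,
            ← Real.rpow_natCast ((2:ℝ)^(-(β+s))) n, ← Real.rpow_mul two_pos.le]
          apply two_rpow_combine
          ring
  calc (∑' n, ∫⁻ x in E n, ENNReal.ofReal (dist x x₀ ^ β) ∂μ)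
      ≤ ∑' n : ℕ, ENNReal.ofReal ((C * 2^(s-β)) * ((2:ℝ)^(-(β+s)))^n) := ENNReal.tsum_le_tsum hbound
    _ < ⊤ := geom_sum_fin (by positivity) (by positivity)
        (Real.rpow_lt_one_of_one_lt_of_neg one_lt_two (by linarith))

lemma lintegral_top_of_annuli {X : Type*} [MeasurableSpace X]
    (μ : Measure X) {G : X → ℝ≥0∞} {E : ℕ → Set X}
    (hmeas : ∀ n, MeasurableSet (E n)) (hdisj : Pairwise (Function.onFun Disjoint E))
    {δ : ℝ≥0∞} (hδ : δ ≠ 0) (hbound : ∀ n, δ ≤ ∫⁻ x in E n, G x ∂μ) :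
    ∫⁻ x, G x ∂μ = ⊤ := by
  rw [eq_top_iff]
  calc (⊤:ℝ≥0∞) = ∑' _ : ℕ, δ := (ENNReal.tsum_const_eq_top_of_ne_zero hδ).symm
    _ ≤ ∑' n, ∫⁻ x in E n, G x ∂μ := ENNReal.tsum_le_tsum hbound
    _ = ∫⁻ x in ⋃ n, E n, G x ∂μ := (lintegral_iUnion hmeas hdisj _).symm
    _ ≤ ∫⁻ x, G x ∂μ := setLIntegral_le_lintegral _ _

lemma lintegral_top_of_infinite_set {X : Type*} [MeasurableSpace X]
    (μ : Measure X) {G : X → ℝ≥0∞} {S : Set X} (hSm : MeasurableSet S) (hS : μ S = ⊤)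
    {δ : ℝ≥0∞} (hδ : δ ≠ 0) (h : ∀ x ∈ S, δ ≤ G x) : ∫⁻ x, G x ∂μ = ⊤ := by
  rw [eq_top_iff]
  calc (⊤:ℝ≥0∞) = δ * μ S := by rw [hS, ENNReal.mul_top hδ]
    _ = ∫⁻ _ in S, δ ∂μ := (setLIntegral_const S δ).symm
    _ ≤ ∫⁻ x in S, G x ∂μ := setLIntegral_mono' hSm h
    _ ≤ ∫⁻ x, G x ∂μ := setLIntegral_le_lintegral _ _

end Helpers

set_option maxHeartbeats 2000000 in
/-- under the standing assumptions, if `μ` is Ahlfors `s`-regular, then for all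
`p, q ∈ [1,∞)` with `1/q + 1/s ≠ 1/p` there is a measurable `f : X → ℝ` with `|f|ᵖ` locally
integrable, `∫ (lip f)ᵖ dμ < ∞`, and `∫ |f - c|^q dμ = ∞` for every `c ∈ ℝ`. -/
theorem statement8 {X : Type*} [MetricSpace X] [MeasurableSpace X] [BorelSpace X]
    [ProperSpace X] [ConnectedSpace X]
    (μ : Measure X) (hXinf : μ Set.univ = ⊤)
    (hball : ∀ (x : X) (r : ℝ), 0 < r → 0 < μ (ball x r) ∧ μ (ball x r) < ⊤)
    (s : ℝ) (hs : 0 < s) (hreg : AhlforsRegular s μ)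
    (p q : ℝ) (hp : 1 ≤ p) (hq : 1 ≤ q) (hpq : 1 / q + 1 / s ≠ 1 / p) :
    ∃ f : X → ℝ, Measurable f ∧ LocallyIntegrable (fun x => |f x| ^ p) μ ∧
      (∫⁻ x, lipConst f x ^ p ∂μ) < ⊤ ∧
      ∀ c : ℝ, (∫⁻ x, ENNReal.ofReal |f x - c| ^ q ∂μ) = ⊤ := by
  classical
  have hp0 : (0:ℝ) < p := lt_of_lt_of_le one_pos hp
  have hq0 : (0:ℝ) < q := lt_of_lt_of_le one_pos hq
  obtain ⟨C, hC1, hCreg⟩ := hreg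
  have hC0 : (0:ℝ) < C := lt_of_lt_of_le one_pos hC1
  have hne : Nonempty X := by
    by_contra h
    rw [not_nonempty_iff] at h
    rw [Set.univ_eq_empty_iff.2 h, measure_empty] at hXinf
    exact ENNReal.zero_ne_top hXinf
  obtain ⟨x₀⟩ := hne
  have hup : ∀ r : ℝ, 0 < r → μ (ball x₀ r) ≤ ENNReal.ofReal (C * r ^ s) :=
    fun r hr => (hCreg x₀ r hr).2
  have hlow : ∀ r : ℝ, 0 < r → ENNReal.ofReal (r ^ s / C) ≤ μ (ball x₀ r) :=
    fun r hr => (hCreg x₀ r hr).1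
  have hloc : IsLocallyFiniteMeasure μ :=
    ⟨fun x => ⟨ball x 1, ball_mem_nhds x one_pos, (hball x 1 one_pos).2⟩⟩
  have hcompl : ∀ R : ℝ, 0 < R → μ ((ball x₀ R)ᶜ) = ⊤ := by
    intro R hR
    by_contra h
    have h1 : μ univ ≤ μ (ball x₀ R) + μ ((ball x₀ R)ᶜ) := by
      calc μ univ = μ (ball x₀ R ∪ (ball x₀ R)ᶜ) := by rw [union_compl_self]
        _ ≤ _ := measure_union_le _ _
    rw [hXinf] at h1
    exact absurd h1 (not_le.2 (ENNReal.add_lt_top.2 ⟨(hball x₀ R hR).2, Ne.lt_top h⟩))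
  have hx0 : μ {x₀} = 0 := by
    have hb : ∀ n : ℕ, μ {x₀} ≤ ENNReal.ofReal (C * ((1/2)^n : ℝ)^s) := by
      intro n
      refine le_trans (measure_mono ?_) (hup _ (by positivity))
      intro y hy
      rw [mem_singleton_iff] at hy
      subst hy
      rw [mem_ball, dist_self]
      positivity
    have htend : Tendsto (fun n : ℕ => ENNReal.ofReal (C * ((1/2)^n : ℝ)^s)) atTop (𝓝 0) := by
      rw [show (0:ℝ≥0∞) = ENNReal.ofReal 0 by simp]
      apply ENNReal.tendsto_ofReal
      rw [show (0:ℝ) = C * (0:ℝ)^s by rw [Real.zero_rpow hs.ne']; ring]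
      apply Tendsto.const_mul
      have h1 : Tendsto (fun n : ℕ => ((1/2)^n : ℝ)) atTop (𝓝 0) :=
        tendsto_pow_atTop_nhds_zero_of_lt_one (by norm_num) (by norm_num)
      have h2 : ContinuousAt (fun x : ℝ => x ^ s) 0 :=
        Real.continuousAt_rpow_const 0 s (Or.inr hs.le)
      exact h2.tendsto.comp h1
    exact le_antisymm (ge_of_tendsto' htend hb) zero_le
  set K : ℝ := (2*C^2) ^ s⁻¹ with hK
  have hKs : K ^ s = 2*C^2 := Real.rpow_inv_rpow (by positivity) hs.ne'
  have hK1 : 1 < K := by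
    by_contra h
    push_neg at h
    have : K ^ s ≤ 1 := Real.rpow_le_one (by positivity) h hs.le
    nlinarith
  have hK0 : 0 < K := lt_trans one_pos hK1
  have hann : ∀ R : ℝ, 0 < R → ENNReal.ofReal (R^s) ≤ μ (ball x₀ (K*R) \ ball x₀ R) := by
    intro R hR
    have hd : μ (ball x₀ (K*R) \ ball x₀ R) = μ (ball x₀ (K*R)) - μ (ball x₀ R) :=
      measure_diff (ball_subset_ball (by nlinarith)) measurableSet_ball.nullMeasurableSet
        (hball x₀ R hR).2.ne
    rw [hd]
    have hRs : (0:ℝ) < R^s := Real.rpow_pos_of_pos hR s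
    have hm : (K*R)^s = (2*C^2) * R^s := by rw [Real.mul_rpow hK0.le hR.le, hKs]
    have hdiv : (K*R)^s / C = 2*C*R^s := by rw [hm]; field_simp
    calc ENNReal.ofReal (R^s) ≤ ENNReal.ofReal ((K*R)^s/C - C * R^s) := by
          apply ENNReal.ofReal_le_ofReal
          rw [hdiv]
          nlinarith
      _ = ENNReal.ofReal ((K*R)^s/C) - ENNReal.ofReal (C * R^s) :=
          ENNReal.ofReal_sub _ (by positivity)
      _ ≤ μ (ball x₀ (K*R)) - μ (ball x₀ R) :=
          tsub_le_tsub (hlow _ (by positivity)) (hup R hR)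
  set α : ℝ := -(s/q) with hα
  have hα0 : α < 0 := by
    rw [hα]
    exact neg_lt_zero.2 (by positivity)
  have hαq : α * q = -s := by
    rw [hα]
    field_simp
  set A : ℝ := (-α) * 2^(1-α) with hA
  have hA0 : 0 < A := by
    apply mul_pos (by linarith) (Real.rpow_pos_of_pos two_pos _)
  rcases hpq.lt_or_gt with hcase | hcase
  · -- Case B : 1/q + 1/s < 1/p, use f = (min r 1)^α
    have hqs : p*s + p*q < q*s := by
      rw [div_add_div _ _ hq0.ne' hs.ne', div_lt_div_iff₀ (by positivity) hp0] at hcase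
      nlinarith
    have hexp : 0 < (α-1)*p + s := by
      have h1 : ((α-1)*p + s) * q = -(p*s) - p*q + s*q := by
        rw [hα]; field_simp
      nlinarith
    have hexp2 : 0 < α*p + s := by
      have h1 : (α*p + s) * q = -(p*s) + s*q := by
        rw [hα]; field_simp
      nlinarith [mul_pos hp0 hq0]
    set f : X → ℝ := fun x => (min (dist x x₀) 1) ^ α with hf
    have hmin0 : ∀ x : X, 0 ≤ min (dist x x₀) 1 := fun x => le_min dist_nonneg zero_le_one
    have hfm : Measurable f := by
      have hg : Measurable (fun t : ℝ => (min t 1) ^ α) := by fun_prop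
      have hcomp : f = (fun t : ℝ => (min t 1) ^ α) ∘ (fun x => dist x x₀) := by
        rw [hf]; rfl
      rw [hcomp]
      exact hg.comp ((continuous_id.dist continuous_const).measurable)
    have hgm : Measurable (fun y : X => |f y| ^ p) := by fun_prop
    have hfnn : ∀ x, 0 ≤ f x := fun x => Real.rpow_nonneg (hmin0 x) α
    have hfabs : ∀ x, |f x| ^ p = (min (dist x x₀) 1) ^ (α*p) := by
      intro x
      rw [abs_of_nonneg (hfnn x)]
      simp only [hf]
      rw [← Real.rpow_mul (hmin0 x)]
    have hSnear : MeasurableSet {x : X | 0 < dist x x₀ ∧ dist x x₀ ≤ 1} := by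
      have he : {x : X | 0 < dist x x₀ ∧ dist x x₀ ≤ 1} = closedBall x₀ 1 \ {x₀} := by
        ext y
        simp only [mem_setOf_eq, mem_diff, Metric.mem_closedBall, mem_singleton_iff]
        constructor
        · rintro ⟨h1, h2⟩
          exact ⟨h2, fun h => by simp [h] at h1⟩
        · rintro ⟨h1, h2⟩
          refine ⟨dist_pos.2 h2, h1⟩
      rw [he]
      exact measurableSet_closedBall.diff (measurableSet_singleton _)
    have hβ1 : (α-1)*p < 0 := mul_neg_of_neg_of_pos (by linarith) hp0
    have hSm : MeasurableSet {y : X | 1 ≤ dist y x₀} := by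
      have : {y : X | 1 ≤ dist y x₀} = (ball x₀ 1)ᶜ := by
        ext y; simp [mem_ball, not_lt]
      rw [this]; exact measurableSet_ball.compl
    have hβ2 : α*p < 0 := mul_neg_of_neg_of_pos hα0 hp0
    refine ⟨f, hfm, ?_, ?_, ?_⟩
    · -- locally integrable
      intro z
      refine ⟨ball x₀ (dist z x₀ + 1), isOpen_ball.mem_nhds
        (by rw [mem_ball]; linarith), ?_, ?_⟩
      · exact hgm.aestronglyMeasurable.restrict
      · rw [hasFiniteIntegral_iff_ofReal (ae_of_all _ (fun y => by positivity))]
        set R : ℝ := dist z x₀ + 1 with hRdef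
        have hR0 : (0:ℝ) < R := by rw [hRdef]; linarith [dist_nonneg (x := z) (y := x₀)]
        have hcov : ball x₀ R ⊆ {y : X | 0 < dist y x₀ ∧ dist y x₀ ≤ 1} ∪
            ({x₀} ∪ (ball x₀ R ∩ {y : X | 1 ≤ dist y x₀})) := by
          intro y hy
          rcases eq_or_ne y x₀ with h | h
          · right; left; simp [h]
          · rcases le_or_gt (dist y x₀) 1 with h1 | h1
            · left; exact ⟨dist_pos.2 h, h1⟩
            · right; right; exact ⟨hy, h1.le⟩
        calc ∫⁻ y in ball x₀ R, ENNReal.ofReal (|f y| ^ p) ∂μ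
            ≤ ∫⁻ y in {y : X | 0 < dist y x₀ ∧ dist y x₀ ≤ 1} ∪
                ({x₀} ∪ (ball x₀ R ∩ {y : X | 1 ≤ dist y x₀})),
                ENNReal.ofReal (|f y| ^ p) ∂μ := lintegral_mono_set hcov
          _ ≤ ∫⁻ y in {y : X | 0 < dist y x₀ ∧ dist y x₀ ≤ 1}, ENNReal.ofReal (|f y| ^ p) ∂μ
              + (∫⁻ y in {x₀}, ENNReal.ofReal (|f y| ^ p) ∂μ
              + ∫⁻ y in ball x₀ R ∩ {y : X | 1 ≤ dist y x₀}, ENNReal.ofReal (|f y| ^ p) ∂μ) := by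
              refine le_trans (lintegral_union_le _ _ _) ?_
              exact add_le_add_right (lintegral_union_le _ _ _) _
          _ < ⊤ := by
              apply ENNReal.add_lt_top.2
              constructor
              · refine lt_of_le_of_lt (setLIntegral_mono' hSnear ?_)
                  (lintegral_near μ x₀ hC0.le hs hup hβ2 hexp2)
                intro y hy
                rw [hfabs y, min_eq_left hy.2]
              · apply ENNReal.add_lt_top.2
                constructor
                · rw [setLIntegral_measure_zero _ _ hx0]
                  exact ENNReal.zero_lt_top
                · calc ∫⁻ y in ball x₀ R ∩ {y : X | 1 ≤ dist y x₀},
                        ENNReal.ofReal (|f y| ^ p) ∂μ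
                      ≤ ∫⁻ _ in ball x₀ R ∩ {y : X | 1 ≤ dist y x₀}, 1 ∂μ := by
                        apply setLIntegral_mono' (measurableSet_ball.inter hSm)
                        intro y hy
                        rw [hfabs y, min_eq_right hy.2, Real.one_rpow]
                        simp
                    _ = μ (ball x₀ R ∩ {y : X | 1 ≤ dist y x₀}) := by
                        rw [setLIntegral_const, one_mul]
                    _ ≤ μ (ball x₀ R) := measure_mono inter_subset_left
                    _ < ⊤ := (hball x₀ R hR0).2
    · -- lip integral finite
      have hae : ∀ᵐ x ∂μ, x ≠ x₀ := by
        rw [ae_iff]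
        simpa using hx0
      have hlip : ∀ x, x ≠ x₀ → lipConst f x ≤ ENNReal.ofReal
          (Set.indicator {y : X | 0 < dist y x₀ ∧ dist y x₀ ≤ 1}
            (fun y => A * dist y x₀ ^ (α-1)) x) := by
        intro x hxne
        have hd0 : 0 < dist x x₀ := dist_pos.2 hxne
        by_cases hx : dist x x₀ ≤ 1
        · have hxmem : x ∈ {y : X | 0 < dist y x₀ ∧ dist y x₀ ≤ 1} := ⟨hd0, hx⟩
          rw [Set.indicator_of_mem hxmem]
          set m : ℝ := dist x x₀ / 2 with hm
          have hm0 : 0 < m := by rw [hm]; positivity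
          apply lipConst_le_of_loc_lip (U := {y : X | m < dist y x₀})
          · exact (isOpen_lt continuous_const (continuous_id.dist continuous_const)).mem_nhds
              (by simpa using (by rw [hm]; linarith : m < dist x x₀))
          · intro y hy
            replace hy : m < dist y x₀ := hy
            have h1 : m ≤ min (dist y x₀) 1 := le_min hy.le (by rw [hm]; linarith)
            have h2 : m ≤ min (dist x x₀) 1 := le_min (by rw [hm]; linarith) (by rw [hm]; linarith)
            have h3 := rpow_loclip hα0 hm0 h1 h2
            have h4 : |min (dist y x₀) 1 - min (dist x x₀) 1| ≤ |dist y x₀ - dist x x₀| := by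
              refine le_trans (abs_min_sub_min_le_max _ _ _ _) ?_
              simp
            have h5 : |dist y x₀ - dist x x₀| ≤ dist y x := abs_dist_sub_le y x x₀
            have h7 : m ^ (α-1) = 2^(1-α) * dist x x₀ ^ (α-1) := by
              rw [hm, Real.div_rpow dist_nonneg (by norm_num), div_eq_mul_inv,
                ← Real.rpow_neg (by norm_num : (0:ℝ) ≤ 2), show -(α-1) = 1-α by ring]
              ring
            have hm1 : (0:ℝ) ≤ m ^ (α-1) := Real.rpow_nonneg hm0.le _
            calc |f y - f x| ≤ (-α) * m^(α-1) * |min (dist y x₀) 1 - min (dist x x₀) 1| := h3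
              _ ≤ (-α) * m^(α-1) * dist y x := by
                  apply mul_le_mul_of_nonneg_left (le_trans h4 h5)
                  exact mul_nonneg (by linarith) hm1
              _ = (A * dist x x₀ ^ (α-1)) * dist y x := by rw [h7, hA]; ring
        · have hxmem : x ∉ {y : X | 0 < dist y x₀ ∧ dist y x₀ ≤ 1} := by
            simp only [mem_setOf_eq, not_and, not_le]
            intro _
            linarith [not_le.1 hx]
          rw [Set.indicator_of_notMem hxmem]
          have hle0 : lipConst f x ≤ ENNReal.ofReal 0 := by
            apply lipConst_le_of_loc_lip (U := {y : X | 1 < dist y x₀})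
            · exact (isOpen_lt continuous_const (continuous_id.dist continuous_const)).mem_nhds
                (by simpa using not_le.1 hx)
            · intro y hy
              replace hy : 1 < dist y x₀ := hy
              have h1 : min (dist y x₀) 1 = 1 := min_eq_right hy.le
              have h2 : min (dist x x₀) 1 = 1 := min_eq_right (not_le.1 hx).le
              simp [hf, h1, h2]
          simpa using hle0
      calc ∫⁻ x, lipConst f x ^ p ∂μ
          ≤ ∫⁻ x, Set.indicator {y : X | 0 < dist y x₀ ∧ dist y x₀ ≤ 1}
              (fun y => ENNReal.ofReal ((A * dist y x₀ ^ (α-1))^p)) x ∂μ := by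
            apply lintegral_mono_ae
            filter_upwards [hae] with x hxne
            have h1 := hlip x hxne
            by_cases hx : x ∈ {y : X | 0 < dist y x₀ ∧ dist y x₀ ≤ 1}
            · rw [Set.indicator_of_mem hx]
              rw [Set.indicator_of_mem hx] at h1
              calc lipConst f x ^ p ≤ (ENNReal.ofReal (A * dist x x₀ ^ (α-1))) ^ p :=
                    ENNReal.rpow_le_rpow h1 hp0.le
                _ = ENNReal.ofReal ((A * dist x x₀ ^ (α-1))^p) :=
                    ENNReal.ofReal_rpow_of_nonneg
                      (mul_nonneg hA0.le (Real.rpow_nonneg dist_nonneg _)) hp0.le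
            · rw [Set.indicator_of_notMem hx]
              rw [Set.indicator_of_notMem hx] at h1
              have h0 : lipConst f x = 0 := le_antisymm (by simpa using h1) zero_le
              show lipConst f x ^ p ≤ 0
              rw [h0, ENNReal.zero_rpow_of_pos hp0]
        _ = ∫⁻ x in {y : X | 0 < dist y x₀ ∧ dist y x₀ ≤ 1},
              ENNReal.ofReal ((A * dist x x₀ ^ (α-1))^p) ∂μ := lintegral_indicator hSnear _
        _ = ∫⁻ x in {y : X | 0 < dist y x₀ ∧ dist y x₀ ≤ 1},
              ENNReal.ofReal (A^p) * ENNReal.ofReal (dist x x₀ ^ ((α-1)*p)) ∂μ := by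
            apply lintegral_congr
            intro x
            rw [Real.mul_rpow hA0.le (Real.rpow_nonneg dist_nonneg _),
              Real.rpow_mul dist_nonneg,
              ENNReal.ofReal_mul (by positivity)]
        _ = ENNReal.ofReal (A^p) * ∫⁻ x in {y : X | 0 < dist y x₀ ∧ dist y x₀ ≤ 1},
              ENNReal.ofReal (dist x x₀ ^ ((α-1)*p)) ∂μ := by
            rw [lintegral_const_mul' _ _ ENNReal.ofReal_ne_top]
        _ < ⊤ := ENNReal.mul_lt_top ENNReal.ofReal_lt_top
            (lintegral_near μ x₀ hC0.le hs hup hβ1 hexp)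
    · -- divergence
      intro c
      by_cases hc : c = 1
      · subst hc
        set ρ : ℝ := min 1 ((2:ℝ) ^ (-(q/s))) with hρ
        have hρpos : 0 < ρ := lt_min one_pos (Real.rpow_pos_of_pos two_pos _)
        have hρ1 : ρ ≤ 1 := min_le_left _ _
        have hρ2 : (2:ℝ) ≤ ρ ^ α := by
          calc (2:ℝ) = ((2:ℝ) ^ (-(q/s))) ^ α := by
                rw [← Real.rpow_mul two_pos.le,
                  show (-(q/s)) * α = 1 by rw [hα]; field_simp, Real.rpow_one]
            _ ≤ ρ ^ α := Real.rpow_le_rpow_of_nonpos hρpos (min_le_right _ _) hα0.le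
        set E : ℕ → Set X := fun n => ball x₀ (K * (ρ / K^(n+1))) \ ball x₀ (ρ / K^(n+1)) with hE
        have hrad : ∀ n : ℕ, K * (ρ / K^(n+1)) = ρ / K^n := by
          intro n
          rw [pow_succ]
          rw [eq_div_iff (by positivity)]
          field_simp
        have hmem : ∀ n x, x ∈ E n ↔ ρ/K^(n+1) ≤ dist x x₀ ∧ dist x x₀ < ρ/K^n := by
          intro n x
          rw [← hrad n]
          simp [hE, Metric.mem_ball, not_lt, and_comm]
        have hmeas : ∀ n, MeasurableSet (E n) :=
          fun n => measurableSet_ball.diff measurableSet_ball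
        have hkey : ∀ m n, m < n → Disjoint (E m) (E n) := by
          intro m n h
          rw [Set.disjoint_left]
          intro x hxm hxn
          rw [hmem] at hxm hxn
          have h1 : (K:ℝ)^(m+1) ≤ K^n := pow_le_pow_right₀ hK1.le (by omega)
          have h2 : ρ/K^n ≤ ρ/K^(m+1) :=
            div_le_div_of_nonneg_left hρpos.le (by positivity) h1
          linarith [hxm.1, hxn.2]
        have hdisj : Pairwise (Function.onFun Disjoint E) := by
          intro m n hmn
          rcases hmn.lt_or_gt with h | h
          · exact hkey m n h
          · exact (hkey n m h).symm
        apply lintegral_top_of_annuli μ hmeas hdisj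
          (δ := ENNReal.ofReal (K^(-s) * 2^(-q)))
          ((ENNReal.ofReal_pos.2 (mul_pos (Real.rpow_pos_of_pos hK0 _)
            (Real.rpow_pos_of_pos two_pos _))).ne')
        intro n
        have hbn : (0:ℝ) < ρ/K^(n+1) := by positivity
        have hbn' : (0:ℝ) < ρ/K^n := by positivity
        have hKn1 : (1:ℝ) ≤ K^n := one_le_pow₀ hK1.le
        have hid : ((ρ/K^n)^α / 2)^q * (ρ/K^(n+1))^s = K^(-s) * 2^(-q) := by
          have hx1 : ((ρ/K^n)^α)^q = ((ρ/K^n)^s)⁻¹ := by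
            rw [← Real.rpow_mul hbn'.le, hαq]
            exact Real.rpow_neg hbn'.le s
          have hx2 : (ρ/K^(n+1))^s = (ρ/K^n)^s / K^s := by
            rw [show ρ/K^(n+1) = (ρ/K^n)/K by rw [pow_succ, ← div_div],
              Real.div_rpow hbn'.le hK0.le]
          rw [Real.div_rpow (Real.rpow_nonneg hbn'.le α) (by norm_num : (0:ℝ) ≤ 2),
            hx1, hx2, Real.rpow_neg hK0.le, Real.rpow_neg (by norm_num : (0:ℝ) ≤ 2)]
          have hne1 : (ρ/K^n)^s ≠ 0 := (Real.rpow_pos_of_pos hbn' s).ne'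
          have hne2 : (K:ℝ)^s ≠ 0 := (Real.rpow_pos_of_pos hK0 s).ne'
          have hne3 : (2:ℝ)^q ≠ 0 := (Real.rpow_pos_of_pos two_pos q).ne'
          field_simp
        calc ENNReal.ofReal (K^(-s) * 2^(-q))
            = ENNReal.ofReal (((ρ/K^n)^α / 2)^q) * ENNReal.ofReal ((ρ/K^(n+1))^s) := by
              rw [← ENNReal.ofReal_mul (by positivity), hid]
          _ ≤ ENNReal.ofReal (((ρ/K^n)^α / 2)^q) * μ (E n) :=
              mul_le_mul_right (hann _ hbn) _
          _ = ∫⁻ _ in E n, ENNReal.ofReal (((ρ/K^n)^α / 2)^q) ∂μ :=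
              (setLIntegral_const _ _).symm
          _ ≤ ∫⁻ x in E n, ENNReal.ofReal (|f x - 1|) ^ q ∂μ := by
              apply setLIntegral_mono' (hmeas n)
              intro x hx
              obtain ⟨hx1, hx2⟩ := (hmem n x).1 hx
              have hxpos : 0 < dist x x₀ := lt_of_lt_of_le hbn hx1
              have hxle1 : dist x x₀ ≤ 1 := by
                refine le_trans hx2.le ?_
                rw [div_le_one (by positivity)]
                exact le_trans hρ1 hKn1
              have hfx : f x = dist x x₀ ^ α := by
                simp only [hf]
                rw [min_eq_left hxle1]
              have hρn : ρ/K^n ≤ ρ := by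
                apply div_le_self hρpos.le hKn1
              have hlb : (ρ/K^n)^α ≤ f x := by
                rw [hfx]
                exact Real.rpow_le_rpow_of_nonpos hxpos hx2.le hα0.le
              have h2f : (2:ℝ) ≤ f x := by
                refine le_trans hρ2 (le_trans ?_ hlb)
                exact Real.rpow_le_rpow_of_nonpos hbn' hρn hα0.le
              have hgeq : (ρ/K^n)^α / 2 ≤ |f x - 1| := by
                rw [abs_of_nonneg (by linarith)]
                linarith
              rw [← ENNReal.ofReal_rpow_of_nonneg (by positivity) hq0.le]
              exact ENNReal.rpow_le_rpow (ENNReal.ofReal_le_ofReal hgeq) hq0.le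
      · apply lintegral_top_of_infinite_set μ measurableSet_ball.compl (hcompl 1 one_pos)
          (δ := ENNReal.ofReal (|1 - c|) ^ q)
          ((ENNReal.rpow_pos (ENNReal.ofReal_pos.2
            (abs_pos.2 (sub_ne_zero.2 (Ne.symm hc)))) ENNReal.ofReal_ne_top).ne')
        intro x hx
        rw [mem_compl_iff, mem_ball, not_lt] at hx
        have hfx : f x = 1 := by
          simp only [hf]
          rw [min_eq_right hx, Real.one_rpow]
        rw [hfx]
  · -- Case A : 1/p < 1/q + 1/s, use f = (max r 1)^α
    have hqs : q*s < p*s + p*q := by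
      rw [div_add_div _ _ hq0.ne' hs.ne', div_lt_div_iff₀ hp0 (by positivity)] at hcase
      nlinarith
    have hexp : (α-1)*p + s < 0 := by
      have h1 : ((α-1)*p + s) * q = -(p*s) - p*q + s*q := by
        rw [hα]; field_simp
      nlinarith
    set f : X → ℝ := fun x => (max (dist x x₀) 1) ^ α with hf
    have hbase : ∀ x : X, 0 < max (dist x x₀) 1 :=
      fun x => lt_of_lt_of_le one_pos (le_max_right _ _)
    have hfc : Continuous f := by
      apply Continuous.rpow_const
      · exact ((continuous_id.dist continuous_const).max continuous_const)
      · exact fun x => Or.inl (hbase x).ne'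
    have hfpos : ∀ x, 0 < f x := fun x => Real.rpow_pos_of_pos (hbase x) α
    have hfle : ∀ x, f x ≤ 1 := fun x =>
      Real.rpow_le_one_of_one_le_of_nonpos (le_max_right _ _) hα0.le
    have hSm : MeasurableSet {y : X | 1 ≤ dist y x₀} := by
      have : {y : X | 1 ≤ dist y x₀} = (ball x₀ 1)ᶜ := by
        ext y; simp [mem_ball, not_lt]
      rw [this]; exact measurableSet_ball.compl
    refine ⟨f, hfc.measurable, ?_, ?_, ?_⟩
    · exact Continuous.locallyIntegrable (hfc.abs.rpow_const (fun x => Or.inr hp0.le))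
    · -- lip integral finite
      have hlip : ∀ x, lipConst f x ≤ ENNReal.ofReal
          (Set.indicator {y : X | 1 ≤ dist y x₀} (fun y => A * dist y x₀ ^ (α-1)) x) := by
        intro x
        by_cases hx : x ∈ {y : X | 1 ≤ dist y x₀}
        · rw [Set.indicator_of_mem hx]
          replace hx : 1 ≤ dist x x₀ := hx
          set m : ℝ := max (dist x x₀ / 2) 1 with hm
          have hm0 : 0 < m := lt_of_lt_of_le one_pos (le_max_right _ _)
          apply lipConst_le_of_loc_lip (U := {y : X | dist x x₀ / 2 < dist y x₀})
          · exact (isOpen_lt continuous_const (continuous_id.dist continuous_const)).mem_nhds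
              (by simpa using (by linarith : dist x x₀ / 2 < dist x x₀))
          · intro y hy
            simp only [mem_setOf_eq] at hy
            have h1 : m ≤ max (dist y x₀) 1 := max_le_max hy.le le_rfl
            have h2 : m ≤ max (dist x x₀) 1 := max_le_max (by linarith) le_rfl
            have h3 := rpow_loclip hα0 hm0 h1 h2
            have h4 : |max (dist y x₀) 1 - max (dist x x₀) 1| ≤ |dist y x₀ - dist x x₀| :=
              abs_max_sub_max_le_abs _ _ _
            have h5 : |dist y x₀ - dist x x₀| ≤ dist y x := abs_dist_sub_le y x x₀
            have h6 : m ^ (α-1) ≤ (dist x x₀/2) ^ (α-1) :=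
              Real.rpow_le_rpow_of_nonpos (by linarith) (le_max_left _ _) (by linarith)
            have h7 : (dist x x₀/2)^(α-1) = 2^(1-α) * dist x x₀^(α-1) := by
              rw [Real.div_rpow dist_nonneg (by norm_num), div_eq_mul_inv,
                ← Real.rpow_neg (by norm_num : (0:ℝ) ≤ 2), show -(α-1) = 1-α by ring]
              ring
            have hm1 : (0:ℝ) ≤ m ^ (α-1) := Real.rpow_nonneg hm0.le _
            calc |f y - f x| ≤ (-α) * m^(α-1) * |max (dist y x₀) 1 - max (dist x x₀) 1| := h3
              _ ≤ (-α) * m^(α-1) * dist y x := by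
                  apply mul_le_mul_of_nonneg_left (le_trans h4 h5)
                  apply mul_nonneg (by linarith) hm1
              _ ≤ (A * dist x x₀ ^ (α-1)) * dist y x := by
                  apply mul_le_mul_of_nonneg_right _ dist_nonneg
                  calc (-α) * m^(α-1) ≤ (-α) * ((dist x x₀/2)^(α-1)) :=
                        mul_le_mul_of_nonneg_left h6 (by linarith)
                    _ = A * dist x x₀^(α-1) := by rw [h7, hA]; ring
        · rw [Set.indicator_of_notMem hx]
          replace hx : ¬ (1 ≤ dist x x₀) := hx
          have hle0 : lipConst f x ≤ ENNReal.ofReal 0 := by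
            apply lipConst_le_of_loc_lip (U := ball x₀ 1)
            · exact isOpen_ball.mem_nhds (by rw [mem_ball]; linarith [not_le.1 hx])
            · intro y hy
              rw [mem_ball] at hy
              have h1 : max (dist y x₀) 1 = 1 := max_eq_right hy.le
              have h2 : max (dist x x₀) 1 = 1 := max_eq_right (le_of_not_ge hx)
              simp [hf, h1, h2]
          simpa using hle0
      calc ∫⁻ x, lipConst f x ^ p ∂μ
          ≤ ∫⁻ x, Set.indicator {y : X | 1 ≤ dist y x₀}
              (fun y => ENNReal.ofReal ((A * dist y x₀ ^ (α-1))^p)) x ∂μ := by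
            apply lintegral_mono
            intro x
            by_cases hx : x ∈ {y : X | 1 ≤ dist y x₀}
            · rw [Set.indicator_of_mem hx]
              have h1 := hlip x
              rw [Set.indicator_of_mem hx] at h1
              calc lipConst f x ^ p ≤ (ENNReal.ofReal (A * dist x x₀ ^ (α-1))) ^ p :=
                    ENNReal.rpow_le_rpow h1 hp0.le
                _ = ENNReal.ofReal ((A * dist x x₀ ^ (α-1))^p) :=
                    ENNReal.ofReal_rpow_of_nonneg
                      (mul_nonneg hA0.le (Real.rpow_nonneg dist_nonneg _)) hp0.le
            · rw [Set.indicator_of_notMem hx]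
              have h1 := hlip x
              rw [Set.indicator_of_notMem hx] at h1
              have h0 : lipConst f x = 0 := le_antisymm (by simpa using h1) zero_le
              show lipConst f x ^ p ≤ 0
              rw [h0, ENNReal.zero_rpow_of_pos hp0]
        _ = ∫⁻ x in {y : X | 1 ≤ dist y x₀}, ENNReal.ofReal ((A * dist x x₀ ^ (α-1))^p) ∂μ :=
            lintegral_indicator hSm _
        _ = ∫⁻ x in {y : X | 1 ≤ dist y x₀},
              ENNReal.ofReal (A^p) * ENNReal.ofReal (dist x x₀ ^ ((α-1)*p)) ∂μ := by
            apply lintegral_congr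
            intro x
            rw [Real.mul_rpow hA0.le (Real.rpow_nonneg dist_nonneg _),
              Real.rpow_mul dist_nonneg,
              ENNReal.ofReal_mul (by positivity)]
        _ = ENNReal.ofReal (A^p) *
              ∫⁻ x in {y : X | 1 ≤ dist y x₀}, ENNReal.ofReal (dist x x₀ ^ ((α-1)*p)) ∂μ := by
            rw [lintegral_const_mul' _ _ ENNReal.ofReal_ne_top]
        _ < ⊤ := ENNReal.mul_lt_top ENNReal.ofReal_lt_top
            (lintegral_far μ x₀ hC0.le hs hup hexp)
    · -- divergence
      intro c
      by_cases hc : c = 0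
      · subst hc
        set E : ℕ → Set X := fun n => ball x₀ (K * K^n) \ ball x₀ (K^n) with hE
        have hKn : ∀ n : ℕ, (1:ℝ) ≤ K^n := fun n => one_le_pow₀ hK1.le
        have hmem : ∀ n x, x ∈ E n ↔ K^n ≤ dist x x₀ ∧ dist x x₀ < K * K^n := by
          intro n x
          simp [hE, Metric.mem_ball, not_lt, and_comm]
        have hmeas : ∀ n, MeasurableSet (E n) :=
          fun n => measurableSet_ball.diff measurableSet_ball
        have hkey : ∀ m n, m < n → Disjoint (E m) (E n) := by
          intro m n h
          rw [Set.disjoint_left]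
          intro x hxm hxn
          rw [hmem] at hxm hxn
          have h1 : K * K^m ≤ K^n := by
            rw [← pow_succ']
            apply pow_le_pow_right₀ hK1.le (by omega)
          linarith [hxm.2, hxn.1]
        have hdisj : Pairwise (Function.onFun Disjoint E) := by
          intro m n hmn
          rcases hmn.lt_or_gt with h | h
          · exact hkey m n h
          · exact (hkey n m h).symm
        apply lintegral_top_of_annuli μ hmeas hdisj
          (δ := ENNReal.ofReal (K ^ (-s)))
          ((ENNReal.ofReal_pos.2 (Real.rpow_pos_of_pos hK0 _)).ne')
        intro n
        have hid : ((K*K^n)^α)^q * (K^n)^s = K ^ (-s) := by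
          rw [← pow_succ', ← Real.rpow_natCast K (n+1), ← Real.rpow_natCast K n,
            ← Real.rpow_mul hK0.le, ← Real.rpow_mul hK0.le, ← Real.rpow_mul hK0.le,
            ← Real.rpow_add hK0]
          congr 1
          push_cast
          linear_combination ((n:ℝ)+1) * hαq
        calc ENNReal.ofReal (K ^ (-s))
            = ENNReal.ofReal (((K*K^n)^α)^q) * ENNReal.ofReal ((K^n)^s) := by
              rw [← ENNReal.ofReal_mul (by positivity), hid]
          _ ≤ ENNReal.ofReal (((K*K^n)^α)^q) * μ (E n) :=
              mul_le_mul_right (hann (K^n) (by positivity)) _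
          _ = ∫⁻ _ in E n, ENNReal.ofReal (((K*K^n)^α)^q) ∂μ := (setLIntegral_const _ _).symm
          _ ≤ ∫⁻ x in E n, ENNReal.ofReal (|f x - 0|) ^ q ∂μ := by
              apply setLIntegral_mono' (hmeas n)
              intro x hx
              obtain ⟨hx1, hx2⟩ := (hmem n x).1 hx
              have hx3 : (1:ℝ) ≤ dist x x₀ := le_trans (hKn n) hx1
              have hfx : f x = dist x x₀ ^ α := by
                simp only [hf]
                rw [max_eq_left (by linarith)]
              rw [← ENNReal.ofReal_rpow_of_nonneg (by positivity) hq0.le]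
              apply ENNReal.rpow_le_rpow _ hq0.le
              apply ENNReal.ofReal_le_ofReal
              rw [sub_zero, abs_of_pos (hfpos x), hfx]
              exact Real.rpow_le_rpow_of_nonpos (by linarith) hx2.le hα0.le
      · -- c ≠ 0
        have hcabs : (0:ℝ) < |c| := abs_pos.2 hc
        set R₀ : ℝ := (|c|/2) ^ α⁻¹ with hR₀
        set R : ℝ := max 1 R₀ + 1 with hR
        have hR1 : (1:ℝ) < R := by
          have := le_max_left 1 R₀
          rw [hR]; linarith
        have hRR₀ : R₀ < R := by
          have := le_max_right 1 R₀
          rw [hR]; linarith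
        have hR₀pos : 0 < R₀ := Real.rpow_pos_of_pos (by positivity) _
        have hRα : R ^ α ≤ |c|/2 := by
          calc R ^ α ≤ R₀ ^ α :=
              Real.rpow_le_rpow_of_nonpos hR₀pos hRR₀.le hα0.le
            _ = |c|/2 := Real.rpow_inv_rpow (by positivity) hα0.ne
        apply lintegral_top_of_infinite_set μ measurableSet_ball.compl
          (hcompl R (by linarith)) (δ := ENNReal.ofReal (|c|/2) ^ q)
          (ENNReal.rpow_pos (ENNReal.ofReal_pos.2 (by positivity)) ENNReal.ofReal_ne_top).ne'
        intro x hx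
        rw [mem_compl_iff, mem_ball, not_lt] at hx
        have hx1 : (1:ℝ) ≤ dist x x₀ := by linarith
        have hfx : f x = dist x x₀ ^ α := by
          simp only [hf]; rw [max_eq_left (by linarith)]
        have hfle2 : f x ≤ |c|/2 := by
          rw [hfx]
          calc dist x x₀ ^ α ≤ R ^ α :=
              Real.rpow_le_rpow_of_nonpos (by linarith) hx hα0.le
            _ ≤ |c|/2 := hRα
        apply ENNReal.rpow_le_rpow _ hq0.le
        apply ENNReal.ofReal_le_ofReal
        have h8 : |c| - |f x| ≤ |f x - c| := by
          have := abs_sub_abs_le_abs_sub c (f x)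
          rw [abs_sub_comm] at this
          linarith
        have h9 : |f x| = f x := abs_of_pos (hfpos x)
        linarith
end
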